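/- arXiv:math/0408079 — 9 statements merged into one kernel-verified Lean document; each statement's English description precedes it below -/
import Mathlib

section
/- Let Ω ⊂ ℂ be open and simply connected, z₀ ∈ Ω, and h : Ω → ℂ holomorphic; write u = Re h, v = Im h, identify z = x+iy, and define F : Ω → ℝ³ by F(z) = Re ∫_{z₀}^{z} ((1/2)(e^{−i h(ζ)} − e^{i h(ζ)}), (i/2)(e^{−i h(ζ)} + e^{i h(ζ)}), 1) dζ. Then for every z ∈ Ω one has |∂ₓF(z)|² = |∂_yF(z)|² = cosh²(v(z)) and ⟨∂ₓF(z), ∂_yF(z)⟩ = 0; in particular ∂ₓF(z) and ∂_yF(z) are linearly independent at every point, so F is a conformal immersion. -/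
open Complex Real Set Finset Filter RealInnerProductSpace

/-- Points of `ℝ³` as `EuclideanSpace`. -/
noncomputable def vec3 (a b c : ℝ) : EuclideanSpace ℝ (Fin 3) := WithLp.toLp 2 ![a, b, c]

lemma key_deriv (G : ℂ → ℂ) (d z w : ℂ) (hG : HasDerivAt G d z) :
    HasDerivAt (fun t : ℝ => (G (z + (t : ℂ) * w)).re) ((d * w).re) 0 := by
  have h1 : HasDerivAt (fun ζ : ℂ => z + ζ * w) w 0 := by
    simpa using ((hasDerivAt_id (0:ℂ)).mul_const w).const_add z
  have h2 : HasDerivAt (fun ζ : ℂ => G (z + ζ * w)) (d * w) 0 := by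
    have : HasDerivAt G d (z + (0:ℂ) * w) := by simpa using hG
    simpa [Function.comp_def] using this.comp 0 h1
  have h3 : HasDerivAt (fun t : ℝ => G (z + (t : ℂ) * w)) (d * w) 0 := by
    have := h2.comp_ofReal (z := 0)
    simpa using this
  simpa [Function.comp_def] using (Complex.reCLM.hasFDerivAt.comp_hasDerivAt 0 h3)

lemma vec3_deriv (f₁ f₂ f₃ : ℝ → ℝ) (d₁ d₂ d₃ : ℝ)
    (h1 : HasDerivAt f₁ d₁ 0) (h2 : HasDerivAt f₂ d₂ 0) (h3 : HasDerivAt f₃ d₃ 0) :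
    HasDerivAt (fun t => vec3 (f₁ t) (f₂ t) (f₃ t)) (vec3 d₁ d₂ d₃) 0 := by
  have hp : HasDerivAt (fun t => (![f₁ t, f₂ t, f₃ t] : Fin 3 → ℝ)) ![d₁, d₂, d₃] 0 := by
    rw [hasDerivAt_pi]
    intro i
    fin_cases i <;> simpa
  have := ((EuclideanSpace.equiv (Fin 3) ℝ).symm :
      (Fin 3 → ℝ) →L[ℝ] EuclideanSpace ℝ (Fin 3)).hasFDerivAt.comp_hasDerivAt 0 hp
  simpa [vec3, Function.comp_def] using this

set_option maxHeartbeats 1000000 in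
/-- For the Weierstrass representation `F` with data `g = e^{ih}`, `φ = dz`
(encoded via primitives `G₁, G₂, G₃` vanishing at `z₀`), at every point the partials
`∂ₓF`, `∂_yF` exist, satisfy `|∂ₓF|² = |∂_yF|² = cosh²(v)` and `⟨∂ₓF, ∂_yF⟩ = 0`; in
particular they are linearly independent, so `F` is a conformal immersion. -/
theorem stmt1 (Ω : Set ℂ) (hΩo : IsOpen Ω) (hΩsc : SimplyConnectedSpace Ω)
    (z₀ : ℂ) (hz₀ : z₀ ∈ Ω) (h : ℂ → ℂ) (hhol : DifferentiableOn ℂ h Ω)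
    (G₁ G₂ G₃ : ℂ → ℂ)
    (hG₁ : ∀ z ∈ Ω, HasDerivAt G₁
      ((1/2) * (Complex.exp (-Complex.I * h z) - Complex.exp (Complex.I * h z))) z)
    (hG₂ : ∀ z ∈ Ω, HasDerivAt G₂
      ((Complex.I/2) * (Complex.exp (-Complex.I * h z) + Complex.exp (Complex.I * h z))) z)
    (hG₃ : ∀ z ∈ Ω, HasDerivAt G₃ 1 z)
    (hG₁0 : G₁ z₀ = 0) (hG₂0 : G₂ z₀ = 0) (hG₃0 : G₃ z₀ = 0)
    (F : ℂ → EuclideanSpace ℝ (Fin 3))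
    (hF : ∀ z ∈ Ω, F z = vec3 (G₁ z).re (G₂ z).re (G₃ z).re) :
    ∀ z ∈ Ω, ∃ Dx Dy : EuclideanSpace ℝ (Fin 3),
      HasDerivAt (fun t : ℝ => F (z + (t : ℂ))) Dx 0 ∧
      HasDerivAt (fun t : ℝ => F (z + (t : ℂ) * Complex.I)) Dy 0 ∧
      ‖Dx‖ ^ 2 = Real.cosh ((h z).im) ^ 2 ∧
      ‖Dy‖ ^ 2 = Real.cosh ((h z).im) ^ 2 ∧
      ⟪Dx, Dy⟫ = 0 ∧
      LinearIndependent ℝ ![Dx, Dy] := by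
  intro z hz
  set u : ℝ := (h z).re with hu
  set v : ℝ := (h z).im with hv
  set a : ℂ := (1/2) * (Complex.exp (-Complex.I * h z) - Complex.exp (Complex.I * h z)) with ha
  set b : ℂ := (Complex.I/2) * (Complex.exp (-Complex.I * h z) + Complex.exp (Complex.I * h z))
    with hb
  -- component formulas
  have e1re : (Complex.exp (-Complex.I * h z)).re = Real.exp v * Real.cos u := by
    rw [Complex.exp_re]; simp [Complex.mul_re, Complex.mul_im, u, v]
  have e1im : (Complex.exp (-Complex.I * h z)).im = -(Real.exp v * Real.sin u) := by
    rw [Complex.exp_im]; simp [Complex.mul_re, Complex.mul_im, u, v]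
  have e2re : (Complex.exp (Complex.I * h z)).re = Real.exp (-v) * Real.cos u := by
    rw [Complex.exp_re]; simp [Complex.mul_re, Complex.mul_im, u, v]
  have e2im : (Complex.exp (Complex.I * h z)).im = Real.exp (-v) * Real.sin u := by
    rw [Complex.exp_im]; simp [Complex.mul_re, Complex.mul_im, u, v]
  have hare : a.re = Real.sinh v * Real.cos u := by
    rw [ha]
    simp only [Complex.mul_re, Complex.mul_im, Complex.sub_re, Complex.sub_im, e1re, e1im,
      e2re, e2im, Real.sinh_eq]
    norm_num; ring
  have haim : a.im = -(Real.cosh v * Real.sin u) := by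
    rw [ha]
    simp only [Complex.mul_re, Complex.mul_im, Complex.sub_re, Complex.sub_im, e1re, e1im,
      e2re, e2im, Real.cosh_eq]
    norm_num; ring
  have hbre : b.re = Real.sinh v * Real.sin u := by
    rw [hb]
    simp only [Complex.mul_re, Complex.mul_im, Complex.add_re, Complex.add_im, e1re, e1im,
      e2re, e2im, Real.sinh_eq, Complex.div_re, Complex.div_im]
    norm_num; ring
  have hbim : b.im = Real.cosh v * Real.cos u := by
    rw [hb]
    simp only [Complex.mul_re, Complex.mul_im, Complex.add_re, Complex.add_im, e1re, e1im,
      e2re, e2im, Real.cosh_eq, Complex.div_re, Complex.div_im]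
    norm_num; ring
  refine ⟨vec3 a.re b.re 1, vec3 (-a.im) (-b.im) 0, ?_, ?_, ?_, ?_, ?_, ?_⟩
  · -- x-derivative
    have hgx : HasDerivAt (fun t : ℝ => vec3 (G₁ (z + (t:ℂ))).re (G₂ (z + (t:ℂ))).re
        (G₃ (z + (t:ℂ))).re) (vec3 a.re b.re 1) 0 := by
      have k1 := key_deriv G₁ a z 1 (hG₁ z hz)
      have k2 := key_deriv G₂ b z 1 (hG₂ z hz)
      have k3 := key_deriv G₃ 1 z 1 (hG₃ z hz)
      simp only [mul_one] at k1 k2 k3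
      simpa using vec3_deriv _ _ _ _ _ _ k1 k2 k3
    refine hgx.congr_of_eventuallyEq ?_
    have hmem : ∀ᶠ t : ℝ in nhds 0, z + (t:ℂ) ∈ Ω := by
      have hc : Continuous fun t : ℝ => z + (t:ℂ) := by continuity
      have h0 : (0:ℝ) ∈ (fun t : ℝ => z + (t:ℂ)) ⁻¹' Ω := by simpa using hz
      exact eventually_of_mem ((hΩo.preimage hc).mem_nhds h0) fun t ht => ht
    filter_upwards [hmem] with t ht
    exact hF _ ht
  · -- y-derivative
    have hgy : HasDerivAt (fun t : ℝ => vec3 (G₁ (z + (t:ℂ) * Complex.I)).re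
        (G₂ (z + (t:ℂ) * Complex.I)).re (G₃ (z + (t:ℂ) * Complex.I)).re)
        (vec3 (-a.im) (-b.im) 0) 0 := by
      have k1 := key_deriv G₁ a z Complex.I (hG₁ z hz)
      have k2 := key_deriv G₂ b z Complex.I (hG₂ z hz)
      have k3 := key_deriv G₃ 1 z Complex.I (hG₃ z hz)
      simp only [Complex.mul_I_re, one_mul, Complex.I_re] at k1 k2 k3
      simpa using vec3_deriv _ _ _ _ _ _ k1 k2 k3
    refine hgy.congr_of_eventuallyEq ?_
    have hmem : ∀ᶠ t : ℝ in nhds 0, z + (t:ℂ) * Complex.I ∈ Ω := by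
      have hc : Continuous fun t : ℝ => z + (t:ℂ) * Complex.I := by continuity
      have h0 : (0:ℝ) ∈ (fun t : ℝ => z + (t:ℂ) * Complex.I) ⁻¹' Ω := by simpa using hz
      exact eventually_of_mem ((hΩo.preimage hc).mem_nhds h0) fun t ht => ht
    filter_upwards [hmem] with t ht
    exact hF _ ht
  · -- ‖Dx‖² = cosh² v
    rw [← real_inner_self_eq_norm_sq]
    simp only [vec3, PiLp.inner_apply, PiLp.toLp_apply, RCLike.inner_apply, starRingEnd_apply, star_trivial,
      Fin.sum_univ_three, Matrix.cons_val_zero, Matrix.cons_val_one, Matrix.head_cons,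
      Matrix.cons_val_two, Matrix.tail_cons, hare, hbre]
    have hs := Real.sin_sq_add_cos_sq u
    have hc := Real.cosh_sq v
    nlinarith
  · -- ‖Dy‖² = cosh² v
    rw [← real_inner_self_eq_norm_sq]
    simp only [vec3, PiLp.inner_apply, PiLp.toLp_apply, RCLike.inner_apply, starRingEnd_apply, star_trivial,
      Fin.sum_univ_three, Matrix.cons_val_zero, Matrix.cons_val_one, Matrix.head_cons,
      Matrix.cons_val_two, Matrix.tail_cons, haim, hbim]
    have hs := Real.sin_sq_add_cos_sq u
    nlinarith
  · -- orthogonality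
    simp only [vec3, PiLp.inner_apply, PiLp.toLp_apply, RCLike.inner_apply, starRingEnd_apply, star_trivial,
      Fin.sum_univ_three, Matrix.cons_val_zero, Matrix.cons_val_one, Matrix.head_cons,
      Matrix.cons_val_two, Matrix.tail_cons, hare, haim, hbre, hbim]
    ring
  · -- linear independence
    have hDx : ‖vec3 a.re b.re 1‖ ^ 2 = Real.cosh v ^ 2 := by
      rw [← real_inner_self_eq_norm_sq]
      simp only [vec3, PiLp.inner_apply, PiLp.toLp_apply, RCLike.inner_apply, starRingEnd_apply, star_trivial,
        Fin.sum_univ_three, Matrix.cons_val_zero, Matrix.cons_val_one, Matrix.head_cons,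
        Matrix.cons_val_two, Matrix.tail_cons, hare, hbre]
      have hs := Real.sin_sq_add_cos_sq u
      have hc := Real.cosh_sq v
      nlinarith
    have hDy : ‖vec3 (-a.im) (-b.im) 0‖ ^ 2 = Real.cosh v ^ 2 := by
      rw [← real_inner_self_eq_norm_sq]
      simp only [vec3, PiLp.inner_apply, PiLp.toLp_apply, RCLike.inner_apply, starRingEnd_apply, star_trivial,
        Fin.sum_univ_three, Matrix.cons_val_zero, Matrix.cons_val_one, Matrix.head_cons,
        Matrix.cons_val_two, Matrix.tail_cons, haim, hbim]
      have hs := Real.sin_sq_add_cos_sq u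
      nlinarith
    have hcosh : (0:ℝ) < Real.cosh v := Real.cosh_pos v
    have hx0 : vec3 a.re b.re 1 ≠ 0 := by
      intro h0
      have h2 : (1:ℝ) = 0 := by
        have := congrArg (fun x : EuclideanSpace ℝ (Fin 3) => x 2) h0
        simpa [vec3] using this
      exact one_ne_zero h2
    have hy0 : vec3 (-a.im) (-b.im) 0 ≠ 0 := by
      intro h0
      rw [h0, norm_zero] at hDy
      nlinarith
    have hinner : ⟪vec3 a.re b.re 1, vec3 (-a.im) (-b.im) 0⟫ = 0 := by
      simp only [vec3, PiLp.inner_apply, PiLp.toLp_apply, RCLike.inner_apply, starRingEnd_apply, star_trivial,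
        Fin.sum_univ_three, Matrix.cons_val_zero, Matrix.cons_val_one, Matrix.head_cons,
        Matrix.cons_val_two, Matrix.tail_cons, hare, haim, hbre, hbim]
      ring
    refine linearIndependent_of_ne_zero_of_inner_eq_zero ?_ ?_
    · intro i
      fin_cases i
      · simpa using hx0
      · simpa using hy0
    · intro i j hij
      fin_cases i <;> fin_cases j <;> simp_all [mul_comm, real_inner_comm]
end

section
/- Define K_a(z) = −|h_a′(z)|² / cosh⁴(v_a(z)) (the Gauss curvature of the minimal immersion F_a), where h_a′(z) = Σ_{j=1}^{n} 2^{1−j}/((z−b_j)²+a²) and v_a = Im h_a. Then for each k ∈ {1,…,n}, v_a(b_k) = 0 and |K_a(b_k)| = (Σ_{j=1}^{n} 2^{1−j}/((b_k−b_j)²+a²))² → ∞ as a → 0⁺. -/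
open Complex Real Set Finset Filter RealInnerProductSpace

/-- `h_a(z) = Σ_{j<n} (1/(2^j a)) arctan((z - b j)/a)` (indices shifted to start at 0),
using the principal branch of the complex arctangent. -/
noncomputable def hFun (n : ℕ) (b : ℕ → ℝ) (a : ℝ) (z : ℂ) : ℂ :=
  ∑ j ∈ Finset.range n, (1 / ((2 : ℂ) ^ j * (a : ℂ))) * Complex.arctan ((z - (b j : ℂ)) / (a : ℂ))

/-- Left endpoint of the x-range of `Ω_{a,j}`. -/
noncomputable def leftEnd (b : ℕ → ℝ) (j : ℕ) : ℝ :=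
  if j = 0 then -(1/2) else (b (j - 1) + b j) / 2

/-- Right endpoint of the x-range of `Ω_{a,j}`. -/
noncomputable def rightEnd (n : ℕ) (b : ℕ → ℝ) (j : ℕ) : ℝ :=
  if j = n - 1 then 1/2 else (b j + b (j + 1)) / 2

/-- The domain `Ω_{a,j}` (indices shifted to start at 0). -/
def OmegaJ (n : ℕ) (b : ℕ → ℝ) (a : ℝ) (j : ℕ) : Set ℂ :=
  {z : ℂ | leftEnd b j ≤ z.re ∧ z.re ≤ rightEnd n b j ∧
    |z.im| ≤ ((z.re - b j) ^ 2 + a ^ 2) ^ ((3 : ℝ)/4) / 2}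

/-- The domain `Ω_a = ⋃_j Ω_{a,j}`. -/
def OmegaA (n : ℕ) (b : ℕ → ℝ) (a : ℝ) : Set ℂ := ⋃ j ∈ Finset.range n, OmegaJ n b a j

/-- `|K_a(z)| = |h_a'(z)|² / cosh⁴(v_a(z))`, the absolute value of the Gauss curvature
of the minimal immersion `F_a`, where `h_a'(z) = Σ_j 2^{1-j}/((z-b_j)²+a²)` and
`v_a = Im h_a`. -/
noncomputable def KabsFun (n : ℕ) (b : ℕ → ℝ) (a : ℝ) (z : ℂ) : ℝ :=
  ‖∑ j ∈ Finset.range n, 1 / (2 : ℂ) ^ j / ((z - (b j : ℂ)) ^ 2 + (a : ℂ) ^ 2)‖ ^ 2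
    / (Real.cosh ((hFun n b a z).im)) ^ 4

/-- For each `k`, `v_a(b_k) = 0`,
`|K_a(b_k)| = (Σ_j 2^{1-j}/((b_k-b_j)²+a²))²`, and `|K_a(b_k)| → ∞` as `a → 0⁺`. -/
theorem stmt4 (n : ℕ) (hn : 1 ≤ n) (b : ℕ → ℝ)
    (hb0 : -(1/2) < b 0) (hbn : b (n - 1) < 1/2)
    (hbmono : ∀ j, j + 1 < n → b j < b (j + 1))
    (k : ℕ) (hk : k < n) :
    (∀ a ∈ Set.Ioo (0 : ℝ) (1/2),
      (hFun n b a ((b k : ℂ))).im = 0 ∧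
      KabsFun n b a ((b k : ℂ)) =
        (∑ j ∈ Finset.range n, 1 / (2 : ℝ) ^ j / ((b k - b j) ^ 2 + a ^ 2)) ^ 2) ∧
    Filter.Tendsto (fun a : ℝ => KabsFun n b a ((b k : ℂ)))
      (nhdsWithin 0 (Set.Ioi 0)) Filter.atTop := by
  have him : ∀ a : ℝ, (hFun n b a ((b k : ℂ))).im = 0 := by
    intro a
    have : hFun n b a ((b k : ℂ))
        = ((∑ j ∈ Finset.range n, (1 / (2 ^ j * a)) * Real.arctan ((b k - b j)/a) : ℝ) : ℂ) := by
      rw [hFun, Complex.ofReal_sum]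
      refine Finset.sum_congr rfl fun j _ => ?_
      rw [Complex.ofReal_mul, Complex.ofReal_arctan]
      push_cast
      ring_nf
    rw [this, Complex.ofReal_im]
  have hsum_pos : ∀ a : ℝ, 0 < a →
      0 < ∑ j ∈ Finset.range n, 1 / (2 : ℝ) ^ j / ((b k - b j) ^ 2 + a ^ 2) := by
    intro a ha
    refine Finset.sum_pos (fun j _ => ?_) ⟨k, Finset.mem_range.mpr hk⟩
    positivity
  have hkabs : ∀ a : ℝ, 0 < a → KabsFun n b a ((b k : ℂ)) =
      (∑ j ∈ Finset.range n, 1 / (2 : ℝ) ^ j / ((b k - b j) ^ 2 + a ^ 2)) ^ 2 := by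
    intro a ha
    have hs : (∑ j ∈ Finset.range n, 1 / (2 : ℂ) ^ j / (((b k : ℂ) - (b j : ℂ)) ^ 2 + (a : ℂ) ^ 2))
        = ((∑ j ∈ Finset.range n, 1 / (2 : ℝ) ^ j / ((b k - b j) ^ 2 + a ^ 2) : ℝ) : ℂ) := by
      rw [Complex.ofReal_sum]
      refine Finset.sum_congr rfl fun j _ => ?_
      push_cast
      ring_nf
    rw [KabsFun, him, hs, Complex.norm_real, Real.norm_eq_abs, Real.cosh_zero,
      abs_of_pos (hsum_pos a ha)]
    simp
  constructor
  · exact fun a ha => ⟨him a, hkabs a ha.1⟩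
  · have hmain : Filter.Tendsto
        (fun a : ℝ => (∑ j ∈ Finset.range n, 1 / (2 : ℝ) ^ j / ((b k - b j) ^ 2 + a ^ 2)) ^ 2)
        (nhdsWithin 0 (Set.Ioi 0)) Filter.atTop := by
      refine (tendsto_pow_atTop (n := 2) two_ne_zero).comp ?_
      refine tendsto_atTop_mono' _ (f₁ := fun a : ℝ => 1 / (2 : ℝ) ^ k / a ^ 2) ?_ ?_
      · filter_upwards [self_mem_nhdsWithin] with a (ha : 0 < a)
        calc 1 / (2 : ℝ) ^ k / a ^ 2
            = 1 / (2 : ℝ) ^ k / ((b k - b k) ^ 2 + a ^ 2) := by ring_nf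
          _ ≤ ∑ j ∈ Finset.range n, 1 / (2 : ℝ) ^ j / ((b k - b j) ^ 2 + a ^ 2) := by
              refine Finset.single_le_sum (f := fun j =>
                1 / (2 : ℝ) ^ j / ((b k - b j) ^ 2 + a ^ 2)) (fun j _ => ?_)
                (Finset.mem_range.mpr hk)
              positivity
      · have h1 : Filter.Tendsto (fun a : ℝ => a ^ 2)
            (nhdsWithin 0 (Set.Ioi 0)) (nhdsWithin 0 (Set.Ioi 0)) := by
          refine tendsto_nhdsWithin_of_tendsto_nhds_of_eventually_within _ ?_ ?_
          · have : Filter.Tendsto (fun a : ℝ => a ^ 2) (nhds 0) (nhds (0 ^ 2)) :=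
              (continuous_pow 2).tendsto 0
            simpa using this.mono_left nhdsWithin_le_nhds
          · filter_upwards [self_mem_nhdsWithin] with a (ha : 0 < a)
            exact pow_pos ha 2
        have h2 : Filter.Tendsto (fun t : ℝ => 1 / (2 : ℝ) ^ k / t)
            (nhdsWithin 0 (Set.Ioi 0)) Filter.atTop := by
          have := tendsto_inv_nhdsGT_zero.const_mul_atTop
            (show (0:ℝ) < 1 / (2 : ℝ) ^ k by positivity)
          simpa [div_eq_mul_inv] using this
        exact h2.comp h1
    refine hmain.congr' ?_
    filter_upwards [self_mem_nhdsWithin] with a (ha : 0 < a)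
    exact (hkabs a ha).symm
end

section
/- Define K_a(z) = −|h_a′(z)|² / cosh⁴(v_a(z)), where h_a′(z) = Σ_{j=1}^{n} 2^{1−j}/((z−b_j)²+a²) and v_a = Im h_a. Then for every δ > 0 there exists a constant C = C(δ, n, b_1,…,b_n) < ∞ such that for all a ∈ (0,1/2) and all z = x+iy ∈ Ω_a with |x − b_j| ≥ δ for every j ∈ {1,…,n}, one has |K_a(z)| ≤ C; that is, sup_{a ∈ (0,1/2)} sup{ |K_a(z)| : z ∈ Ω_a, min_j |Re z − b_j| ≥ δ } < ∞. -/
open Complex Real Set Finset Filter RealInnerProductSpace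

/-- For every `δ > 0` there is `C < ∞` (depending only on `δ, n, b`) such
that for all `a ∈ (0,1/2)` and all `z ∈ Ω_a` with `|Re z - b_j| ≥ δ` for every `j`,
`|K_a(z)| ≤ C`. -/
theorem stmt5 (n : ℕ) (hn : 1 ≤ n) (b : ℕ → ℝ)
    (hb0 : -(1/2) < b 0) (hbn : b (n - 1) < 1/2)
    (hbmono : ∀ j, j + 1 < n → b j < b (j + 1))
    (δ : ℝ) (hδ : 0 < δ) :
    ∃ C : ℝ, ∀ a ∈ Set.Ioo (0 : ℝ) (1/2), ∀ z ∈ OmegaA n b a,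
      (∀ j < n, δ ≤ |z.re - b j|) → KabsFun n b a z ≤ C := by
  refine ⟨((n : ℝ) * (2 / δ ^ 2)) ^ 2, ?_⟩
  intro a ha z hz hδz
  have hδ2 : 0 < δ ^ 2 / 2 := by positivity
  have hterm : ∀ j ∈ Finset.range n,
      ‖1 / (2 : ℂ) ^ j / ((z - (b j : ℂ)) ^ 2 + (a : ℂ) ^ 2)‖ ≤ 2 / δ ^ 2 := by
    intro j hj
    have hjlt : j < n := Finset.mem_range.mp hj
    have hre : δ ≤ |z.re - b j| := hδz j hjlt
    have hre2 : δ ^ 2 ≤ (z.re - b j) ^ 2 := by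
      have h := _root_.sq_abs (z.re - b j)
      nlinarith [abs_nonneg (z.re - b j)]
    set X : ℂ := (z - (b j : ℂ)) ^ 2 + (a : ℂ) ^ 2 with hX
    have hXre : X.re = (z.re - b j) ^ 2 - z.im ^ 2 + a ^ 2 := by
      simp [hX, pow_two, Complex.mul_re, Complex.sub_re, Complex.sub_im,
        Complex.ofReal_re, Complex.ofReal_im, Complex.add_re]
      try ring
    have hXim : X.im = 2 * (z.re - b j) * z.im := by
      simp [hX, pow_two, Complex.mul_im, Complex.sub_re, Complex.sub_im,
        Complex.ofReal_re, Complex.ofReal_im, Complex.add_im]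
      try ring
    have hkey : δ ^ 2 / 2 ≤ ‖X‖ := by
      by_cases him : |z.im| ≤ δ / 2
      · have h2 : z.im ^ 2 ≤ (δ / 2) ^ 2 := by
          have h := _root_.sq_abs z.im
          nlinarith [abs_nonneg z.im]
        have h1 : δ ^ 2 / 2 ≤ X.re := by rw [hXre]; nlinarith
        calc δ ^ 2 / 2 ≤ X.re := h1
          _ ≤ |X.re| := le_abs_self _
          _ ≤ ‖X‖ := Complex.abs_re_le_norm X
      · push_neg at him
        have h1 : δ ^ 2 / 2 ≤ |X.im| := by
          rw [hXim, abs_mul, abs_mul, _root_.abs_two]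
          nlinarith [abs_nonneg (z.re - b j), abs_nonneg z.im]
        exact h1.trans (Complex.abs_im_le_norm X)
    have hXpos : 0 < ‖X‖ := lt_of_lt_of_le hδ2 hkey
    rw [norm_div, norm_div, norm_one, norm_pow, Complex.norm_two]
    have h2j : (1 : ℝ) ≤ 2 ^ j := one_le_pow₀ (by norm_num : (1:ℝ) ≤ 2)
    rw [div_le_div_iff₀ (by positivity) (by positivity)]
    have hstep : 1 / (2:ℝ) ^ j * δ ^ 2 ≤ 1 * δ ^ 2 := by
      have : 1 / (2:ℝ) ^ j ≤ 1 := by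
        rw [div_le_one (by positivity)]; exact h2j
      nlinarith [sq_nonneg δ]
    nlinarith
  set S : ℂ := ∑ j ∈ Finset.range n, 1 / (2 : ℂ) ^ j / ((z - (b j : ℂ)) ^ 2 + (a : ℂ) ^ 2)
    with hS
  have hsum : ‖S‖ ≤ (n : ℝ) * (2 / δ ^ 2) := by
    calc ‖S‖
        ≤ ∑ j ∈ Finset.range n,
          ‖1 / (2 : ℂ) ^ j / ((z - (b j : ℂ)) ^ 2 + (a : ℂ) ^ 2)‖ :=
          norm_sum_le _ _
      _ ≤ ∑ _j ∈ Finset.range n, 2 / δ ^ 2 := Finset.sum_le_sum hterm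
      _ = (n : ℝ) * (2 / δ ^ 2) := by
          rw [Finset.sum_const, Finset.card_range, nsmul_eq_mul]
  have hcosh : (1 : ℝ) ≤ Real.cosh ((hFun n b a z).im) ^ 4 := by
    exact one_le_pow₀ (Real.one_le_cosh _)
  have hK : KabsFun n b a z = ‖S‖ ^ 2 / Real.cosh ((hFun n b a z).im) ^ 4 := rfl
  rw [hK]
  calc ‖S‖ ^ 2 / Real.cosh ((hFun n b a z).im) ^ 4
      ≤ ‖S‖ ^ 2 := div_le_self (by positivity) hcosh
    _ ≤ ((n : ℝ) * (2 / δ ^ 2)) ^ 2 := by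
        apply pow_le_pow_left₀ (norm_nonneg _) hsum
end

section
/- For every a ∈ (0,1/2), every k ∈ {1,…,n}, and every (x,y) ∈ Ω_{a,k}, one has |∂_y u_a(x,y)| ≤ 4 · Σ_{j=1}^{n} 2^{1−j} · |x−b_j| · |y| / ((x−b_j)² + a²)², where u_a = Re h_a. -/
open Complex Real Set Finset Filter RealInnerProductSpace

/-- Derivative of the principal branch of the complex arctangent. -/
lemma hasDerivAt_arctanC {z : ℂ} (h1 : 1 - z*I ≠ 0)
    (h2 : (1 + z*I)/(1 - z*I) ∈ Complex.slitPlane) :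
    HasDerivAt Complex.arctan (1/(1+z^2)) z := by
  have h3 : 1 + z*I ≠ 0 := by
    intro h
    exact Complex.slitPlane_ne_zero h2 (by rw [h, zero_div])
  have key : (1 + z*I) * (1 - z*I) = 1 + z^2 := by
    have hI : I^2 = -1 := Complex.I_sq
    ring_nf
    rw [hI]; ring
  have hq : HasDerivAt (fun w : ℂ => (1 + w*I)/(1 - w*I)) (2*I/(1 - z*I)^2) z := by
    have hN : HasDerivAt (fun w : ℂ => 1 + w*I) I z := by
      simpa using ((hasDerivAt_id z).mul_const I).const_add 1
    have hD : HasDerivAt (fun w : ℂ => 1 - w*I) (-I) z := by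
      simpa using ((hasDerivAt_id z).mul_const I).const_sub 1
    have := hN.div hD h1
    refine this.congr_deriv ?_
    field_simp
    ring
  have hlog := (Complex.hasDerivAt_log h2).comp z hq
  have h4 : (1:ℂ) + z^2 ≠ 0 := by
    rw [← key]; exact mul_ne_zero h3 h1
  have hmain := hlog.const_mul (-I/2 : ℂ)
  have heq : (fun y => -I/2 * (Complex.log ∘ fun w => (1+w*I)/(1-w*I)) y) = Complex.arctan := by
    funext w; rfl
  rw [heq] at hmain
  refine hmain.congr_deriv ?_
  rw [← key]
  field_simp
  have e3 : I^3 = -I := by rw [show (3:ℕ)=2+1 from rfl, pow_succ, Complex.I_sq]; ring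
  have e4 : I^4 = 1 := Complex.I_pow_four
  have e5 : I^5 = I := by rw [show (5:ℕ)=4+1 from rfl, pow_succ, e4]; ring
  ring_nf
  simp only [e3, e4, e5, Complex.I_sq]
  ring

set_option maxHeartbeats 4000000 in
/-- On `Ω_{a,k}`, the partial derivative `∂_y u_a(x,y)` (where `u_a = Re h_a`)
satisfies `|∂_y u_a(x,y)| ≤ 4 Σ_j 2^{1-j} |x-b_j||y| / ((x-b_j)²+a²)²`. -/
theorem stmt9 (n : ℕ) (hn : 1 ≤ n) (b : ℕ → ℝ)
    (hb0 : -(1/2) < b 0) (hbn : b (n - 1) < 1/2)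
    (hbmono : ∀ j, j + 1 < n → b j < b (j + 1))
    (a : ℝ) (ha : a ∈ Set.Ioo (0 : ℝ) (1/2))
    (k : ℕ) (hk : k < n) (z : ℂ) (hz : z ∈ OmegaJ n b a k) :
    ∃ d : ℝ,
      HasDerivAt (fun y : ℝ => (hFun n b a ((z.re : ℂ) + (y : ℂ) * Complex.I)).re) d z.im ∧
      |d| ≤ 4 * ∑ j ∈ Finset.range n,
        1 / (2 : ℝ) ^ j * (|z.re - b j| * |z.im| / ((z.re - b j) ^ 2 + a ^ 2) ^ 2) := by
  obtain ⟨ha0, ha1⟩ := ha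
  obtain ⟨hxl, hxr, hy⟩ := hz
  set x := z.re with hxdef
  set y := z.im with hydef
  have haC : (a:ℂ) ≠ 0 := by exact_mod_cast ha0.ne'
  -- monotonicity of b
  have hmono : ∀ i j : ℕ, i ≤ j → j < n → b i ≤ b j := by
    intro i j hij hjn
    induction j with
    | zero => simp_all
    | succ m ih =>
      rcases Nat.le_succ_iff.mp hij with h | h
      · exact (ih h (by omega)).trans (hbmono m hjn).le
      · rw [h]
  have hbmem : ∀ j, j < n → -(1/2) < b j ∧ b j < 1/2 := by
    intro j hj
    constructor
    · exact lt_of_lt_of_le hb0 (hmono 0 j (Nat.zero_le _) hj)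
    · exact lt_of_le_of_lt (hmono j (n-1) (by omega) (by omega)) hbn
  have hbk := hbmem k hk
  -- x ∈ [-1/2, 1/2]
  have hxlo : -(1/2:ℝ) ≤ x := by
    refine le_trans ?_ hxl
    unfold leftEnd
    split
    · exact le_refl _
    · have h1 := (hbmem (k-1) (by omega)).1
      linarith [hbk.1]
  have hxhi : x ≤ (1/2:ℝ) := by
    refine le_trans hxr ?_
    unfold rightEnd
    split
    · exact le_refl _
    · rename_i hne
      have hk1 : k + 1 < n := by omega
      have h1 := (hbmem (k+1) hk1).2
      linarith [hbk.2]
  -- t and its bounds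
  set t := (x - b k)^2 + a^2 with htdef
  have ht0 : 0 < t := by positivity
  have ht54 : t ≤ 5/4 := by nlinarith [hbk.1, hbk.2]
  -- min property
  have hmin : ∀ j, j < n → (x - b k)^2 ≤ (x - b j)^2 := by
    intro j hj
    rcases lt_trichotomy j k with h | h | h
    · have hk0 : k ≠ 0 := by omega
      have hxl' : (b (k-1) + b k)/2 ≤ x := by
        rwa [leftEnd, if_neg hk0] at hxl
      have h1 : b j ≤ b (k-1) := hmono j (k-1) (by omega) (by omega)
      have h2 : b (k-1) ≤ b k := hmono (k-1) k (by omega) hk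
      nlinarith [mul_nonneg (by linarith : (0:ℝ) ≤ b k - b j)
        (by linarith : (0:ℝ) ≤ 2*x - b j - b k)]
    · rw [h]
    · have hkn : k ≠ n - 1 := by omega
      have hxr' : x ≤ (b k + b (k+1))/2 := by
        rwa [rightEnd, if_neg hkn] at hxr
      have h1 : b (k+1) ≤ b j := hmono (k+1) j (by omega) hj
      have h2 : b k ≤ b (k+1) := hmono k (k+1) (by omega) (by omega)
      nlinarith [mul_nonneg (by linarith : (0:ℝ) ≤ b j - b k)
        (by linarith : (0:ℝ) ≤ b j + b k - 2*x)]
  -- y² bound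
  have hy2 : y^2 ≤ t * Real.sqrt t / 4 := by
    have h1 : y^2 ≤ (t ^ ((3:ℝ)/4))^2 / 4 := by
      have := abs_nonneg y
      calc y^2 = |y|^2 := (_root_.sq_abs y).symm
      _ ≤ (t ^ ((3:ℝ)/4) / 2)^2 := by gcongr
      _ = (t ^ ((3:ℝ)/4))^2 / 4 := by ring
    have h2 : (t ^ ((3:ℝ)/4))^2 = t * Real.sqrt t := by
      rw [← Real.rpow_natCast (t ^ ((3:ℝ)/4)) 2, ← Real.rpow_mul ht0.le]
      rw [Real.sqrt_eq_rpow]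
      rw [show ((3:ℝ)/4 * (2:ℕ)) = 1 + 1/2 by push_cast; norm_num]
      rw [Real.rpow_add ht0, Real.rpow_one]
    rw [h2] at h1
    linarith
  have hsqrt5 : Real.sqrt 5 ≤ 37/16 := by
    nlinarith [Real.sq_sqrt (by norm_num : (0:ℝ) ≤ 5), Real.sqrt_nonneg 5]
  have hsqrtt : Real.sqrt t ≤ Real.sqrt 5 / 2 := by
    calc Real.sqrt t ≤ Real.sqrt (5/4) := Real.sqrt_le_sqrt ht54
    _ = Real.sqrt 5 / 2 := by
        rw [show (5/4:ℝ) = 5 * (1/2)^2 by norm_num, Real.sqrt_mul (by norm_num),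
          Real.sqrt_sq (by norm_num)]
        ring
  -- key bound per j
  have hkey : ∀ j, j < n → y^2 ≤ 37/128 * ((x - b j)^2 + a^2) := by
    intro j hj
    have h1 : y^2 ≤ t * (37/128) := by
      have h32 : Real.sqrt t ≤ 37/32 := by linarith [hsqrtt, hsqrt5]
      have h33 := mul_le_mul_of_nonneg_left h32 ht0.le
      linarith [hy2]
    have h2 : t ≤ (x - b j)^2 + a^2 := by
      have := hmin j hj; simp only [htdef]; linarith
    nlinarith
  -- normSq lower bound ingredients
  have hnormSq : ∀ j, j < n →
      ((x - b j)^2 + a^2)^2 / 2 ≤ ((x - b j)^2 + a^2 - y^2)^2 + (2*(x - b j)*y)^2 := by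
    intro j hj
    set S := (x - b j)^2 + a^2 with hS
    have hS0 : 0 < S := by positivity
    have h1 : (91/128)*S ≤ S - y^2 := by have := hkey j hj; linarith
    have h2 : (0:ℝ) ≤ (91/128)*S := by positivity
    have h3 := mul_self_le_mul_self h2 h1
    nlinarith [sq_nonneg (2*(x - b j)*y)]
  have hrepos : ∀ j, j < n → 0 < (x - b j)^2 + a^2 - y^2 := by
    intro j hj
    have := hkey j hj
    have : (0:ℝ) < (x - b j)^2 + a^2 := by positivity
    nlinarith [hkey j hj]
  -- complex denominators
  have hDre : ∀ j, ((a:ℂ)^2 + (z - (b j:ℂ))^2).re = a^2 + (x - b j)^2 - y^2 := by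
    intro j
    simp [pow_two, Complex.add_re, Complex.mul_re, Complex.sub_re, Complex.sub_im,
      Complex.ofReal_re, Complex.ofReal_im]
    ring
  have hDim : ∀ j, ((a:ℂ)^2 + (z - (b j:ℂ))^2).im = 2*(x - b j)*y := by
    intro j
    simp [pow_two, Complex.add_im, Complex.mul_im, Complex.sub_re, Complex.sub_im,
      Complex.ofReal_re, Complex.ofReal_im]
    ring
  have hDne : ∀ j, j < n → (a:ℂ)^2 + (z - (b j:ℂ))^2 ≠ 0 := by
    intro j hj h
    have := hDre j
    rw [h] at this
    simp at this
    have := hrepos j hj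
    linarith
  -- slitPlane conditions for w_j
  have hw2ne : ∀ j, j < n → (1:ℂ) + ((z - (b j:ℂ))/(a:ℂ))^2 ≠ 0 := by
    intro j hj h
    apply hDne j hj
    have : ((a:ℂ)^2) * (1 + ((z - (b j:ℂ))/(a:ℂ))^2) = (a:ℂ)^2 + (z - (b j:ℂ))^2 := by
      field_simp
    rw [← this, h, mul_zero]
  have hw1ne : ∀ j, j < n → (1:ℂ) - ((z - (b j:ℂ))/(a:ℂ)) * I ≠ 0 := by
    intro j hj h
    apply hw2ne j hj
    set w := (z - (b j:ℂ))/(a:ℂ)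
    have key : (1 + w*I) * (1 - w*I) = 1 + w^2 := by
      have hI : I^2 = -1 := Complex.I_sq
      ring_nf; rw [hI]; ring
    rw [← key, h, mul_zero]
  have hslit : ∀ j, j < n →
      (1 + ((z - (b j:ℂ))/(a:ℂ))*I)/(1 - ((z - (b j:ℂ))/(a:ℂ))*I) ∈ Complex.slitPlane := by
    intro j hj
    rw [Complex.mem_slitPlane_iff]
    set w := (z - (b j:ℂ))/(a:ℂ) with hw
    have hwre : w.re = (x - b j)/a := by
      simp [hw, Complex.div_re, Complex.sub_re, Complex.sub_im, Complex.ofReal_re,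
        Complex.ofReal_im, Complex.normSq_apply]
      field_simp
      rw [hxdef]
    have hwim : w.im = y/a := by
      simp [hw, Complex.div_im, Complex.sub_re, Complex.sub_im, Complex.ofReal_re,
        Complex.ofReal_im, Complex.normSq_apply]
      field_simp
      rw [hydef]
    have hden := hw1ne j hj
    have hnsq : 0 < Complex.normSq (1 - w*I) := Complex.normSq_pos.mpr hden
    have hNre : (1 + w*I).re = 1 - w.im := by simp [sub_eq_add_neg]
    have hNim : (1 + w*I).im = w.re := by simp
    have hDre' : (1 - w*I).re = 1 + w.im := by simp
    have hDim' : (1 - w*I).im = -w.re := by simp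
    have him : ((1 + w*I)/(1 - w*I)).im = 2*w.re / Complex.normSq (1 - w*I) := by
      rw [Complex.div_im, hNre, hNim, hDre', hDim']
      field_simp
      try ring
    rcases eq_or_ne (x - b j) 0 with hs | hs
    · -- real part positive
      left
      have hre : ((1 + w*I)/(1 - w*I)).re = (1 - w.im^2 - w.re^2) / Complex.normSq (1 - w*I) := by
        rw [Complex.div_re, hNre, hNim, hDre', hDim']
        field_simp
        try ring
      rw [hre]
      apply div_pos _ hnsq
      rw [hwre, hwim, hs, zero_div]
      have hy2a : y^2 < a^2 := by
        have := hkey j hj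
        rw [hs] at this
        nlinarith
      have : (y/a)^2 < 1 := by
        rw [div_pow, div_lt_one (by positivity)]
        exact hy2a
      nlinarith
    · -- imaginary part nonzero
      right
      rw [him]
      apply div_ne_zero _ hnsq.ne'
      rw [hwre]
      exact mul_ne_zero two_ne_zero (div_ne_zero hs ha0.ne')
  -- per-term derivatives
  have hre_add : (x:ℂ) + (y:ℂ) * I = z := Complex.re_add_im z
  set Dc : ℕ → ℂ := fun j => (a:ℂ)^2 + (z - (b j:ℂ))^2 with hDc
  have hterm : ∀ j ∈ Finset.range n, HasDerivAt
      (fun ζ : ℂ => (1 / ((2 : ℂ) ^ j * (a : ℂ))) * Complex.arctan ((ζ - (b j : ℂ)) / (a : ℂ)))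
      (((1/2^j : ℝ) : ℂ) * (Dc j)⁻¹) z := by
    intro j hj
    rw [Finset.mem_range] at hj
    have hinner : HasDerivAt (fun ζ : ℂ => (ζ - (b j:ℂ))/(a:ℂ)) (1/(a:ℂ)) z := by
      simpa using ((hasDerivAt_id z).sub_const ((b j:ℂ))).div_const (a:ℂ)
    have harc := (hasDerivAt_arctanC (hw1ne j hj) (hslit j hj)).comp z hinner
    have := harc.const_mul (1 / ((2 : ℂ) ^ j * (a : ℂ)))
    refine this.congr_deriv ?_
    have h2j : ((2:ℂ)^j) ≠ 0 := pow_ne_zero _ two_ne_zero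
    have hDnej := hDne j hj
    have hw2nej := hw2ne j hj
    rw [hDc]
    push_cast
    field_simp
  have hsum : HasDerivAt (hFun n b a) (∑ j ∈ Finset.range n, ((1/2^j : ℝ) : ℂ) * (Dc j)⁻¹) z := by
    unfold hFun
    exact HasDerivAt.fun_sum hterm
  set f' := ∑ j ∈ Finset.range n, ((1/2^j : ℝ) : ℂ) * (Dc j)⁻¹ with hf'
  -- compose with the vertical line
  have hline : HasDerivAt (fun yy : ℝ => (x:ℂ) + (yy:ℂ) * I) I y := by
    simpa using ((Complex.ofRealCLM.hasDerivAt).mul_const I).const_add (x:ℂ)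
  have hcomp : HasDerivAt (fun yy : ℝ => hFun n b a ((x:ℂ) + (yy:ℂ) * I)) (I * f') y := by
    have h1 : HasFDerivAt (hFun n b a)
        ((ContinuousLinearMap.smulRight (1 : ℂ →L[ℂ] ℂ) f').restrictScalars ℝ) ((x:ℂ) + (y:ℂ)*I) := by
      rw [hre_add]
      exact hsum.hasFDerivAt.restrictScalars ℝ
    have := h1.comp_hasDerivAt y hline
    exact this
  have hfinal : HasDerivAt (fun yy : ℝ => (hFun n b a ((x:ℂ) + (yy:ℂ) * I)).re) ((I * f').re) y :=
    Complex.reCLM.hasFDerivAt.comp_hasDerivAt y hcomp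
  refine ⟨(I * f').re, hfinal, ?_⟩
  -- the estimate
  have hd : (I * f').re = -f'.im := by
    rw [Complex.mul_re]; simp
  rw [hd, abs_neg]
  have himsum : f'.im = ∑ j ∈ Finset.range n, (1/2^j : ℝ) * (Dc j)⁻¹.im := by
    rw [hf', Complex.im_sum]
    refine Finset.sum_congr rfl fun j hj => ?_
    rw [Complex.mul_im, Complex.ofReal_re, Complex.ofReal_im]
    ring
  rw [himsum]
  calc |∑ j ∈ Finset.range n, (1/2^j : ℝ) * (Dc j)⁻¹.im|
      ≤ ∑ j ∈ Finset.range n, |(1/2^j : ℝ) * (Dc j)⁻¹.im| := Finset.abs_sum_le_sum_abs _ _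
    _ ≤ ∑ j ∈ Finset.range n, 4 * (1 / (2 : ℝ) ^ j *
        (|x - b j| * |y| / ((x - b j) ^ 2 + a ^ 2) ^ 2)) := by
        refine Finset.sum_le_sum fun j hj => ?_
        rw [Finset.mem_range] at hj
        have hinv : (Dc j)⁻¹.im = -(2*(x - b j)*y) / Complex.normSq (Dc j) := by
          rw [Complex.inv_im, hDim j]
        have hnsq_eq : Complex.normSq (Dc j) =
            ((x - b j)^2 + a^2 - y^2)^2 + (2*(x - b j)*y)^2 := by
          rw [Complex.normSq_apply, hDre j, hDim j]
          ring
        have hS0 : (0:ℝ) < (x - b j)^2 + a^2 := by positivity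
        have hnsq_lb := hnormSq j hj
        have hnsq_pos : 0 < Complex.normSq (Dc j) := by
          rw [hnsq_eq]; nlinarith [sq_nonneg ((x - b j)^2 + a^2 - y^2), sq_nonneg (2*(x-b j)*y)]
        have h2j : (0:ℝ) < (1/2^j : ℝ) := by positivity
        rw [hinv, abs_mul, abs_of_pos h2j, abs_div, abs_neg, abs_of_pos hnsq_pos]
        rw [show (4:ℝ) * (1 / 2^j * (|x - b j| * |y| / ((x - b j)^2 + a^2)^2)) =
          (1/2^j) * (4 * (|x - b j| * |y|) / ((x - b j)^2 + a^2)^2) by ring]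
        apply mul_le_mul_of_nonneg_left _ (by positivity)
        rw [div_le_div_iff₀ hnsq_pos (by positivity)]
        have habs : |2*(x - b j)*y| = 2 * (|x - b j| * |y|) := by
          rw [abs_mul, abs_mul]
          simp [abs_of_pos, mul_assoc]
        rw [habs]
        have hA : (0:ℝ) ≤ |x - b j| * |y| := by positivity
        have hkey2 : ((x - b j)^2 + a^2)^2 ≤ 2 * Complex.normSq (Dc j) := by
          rw [hnsq_eq]; linarith
        nlinarith
    _ = 4 * ∑ j ∈ Finset.range n, 1 / (2 : ℝ) ^ j *
        (|x - b j| * |y| / ((x - b j) ^ 2 + a ^ 2) ^ 2) := by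
        rw [Finset.mul_sum]
end

section
/- For every a ∈ (0,1/2), every k ∈ {1,…,n}, and every (x,y) ∈ Ω_{a,k}, one has |u_a(x,y) − u_a(x,0)| < 1, where u_a = Re h_a. In particular, max over |y| ≤ ((x−b_k)²+a²)^{3/4}/2 of |u_a(x,y) − u_a(x,0)| ≤ (1/2) Σ_{j=1}^{n} 2^{1−j} < 1. -/
set_option maxHeartbeats 1000000

open Complex Real Set Finset Filter RealInnerProductSpace

/- ### Auxiliary lemmas -/

lemma myArctan_le_self {x : ℝ} (hx : 0 ≤ x) : Real.arctan x ≤ x := by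
  have h1 : Real.arctan x ≤ Real.tan (Real.arctan x) := by
    apply Real.le_tan _ (Real.arctan_lt_pi_div_two x)
    rw [← Real.arctan_zero]
    exact Real.arctan_strictMono.monotone hx
  rwa [Real.tan_arctan] at h1

lemma myArg_im_pos (u v : ℝ) (hv : 0 < v) :
    Complex.arg ((u:ℂ) + (v:ℂ) * Complex.I) = π/2 - Real.arctan (u/v) := by
  have h0 : (0:ℝ) < Real.sqrt (u^2+v^2) := Real.sqrt_pos.2 (by positivity)
  have hθ : π/2 - Real.arctan (u/v) ∈ Set.Ioc (-π) π := by
    have h1 := Real.arctan_lt_pi_div_two (u/v)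
    have h2 := Real.neg_pi_div_two_lt_arctan (u/v)
    have h3 := Real.pi_pos
    constructor <;> [linarith; linarith]
  have hS : Real.sqrt (1 + (u/v)^2) = Real.sqrt (u^2+v^2) / v := by
    have h1 : 1 + (u/v)^2 = (u^2+v^2)/v^2 := by field_simp; ring
    rw [h1, Real.sqrt_div (by positivity), Real.sqrt_sq hv.le]
  have hS0 : Real.sqrt (1 + (u/v)^2) ≠ 0 := by positivity
  have key : (u:ℂ) + (v:ℂ) * Complex.I
      = (Real.sqrt (u^2+v^2) : ℝ) *
        (Complex.cos ((π/2 - Real.arctan (u/v) : ℝ):ℂ) +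
         Complex.sin ((π/2 - Real.arctan (u/v) : ℝ):ℂ) * Complex.I) := by
    rw [← Complex.ofReal_cos, ← Complex.ofReal_sin,
      Real.cos_pi_div_two_sub, Real.sin_pi_div_two_sub,
      Real.sin_arctan, Real.cos_arctan]
    apply Complex.ext <;>
      simp [Complex.mul_re, Complex.mul_im, Complex.add_re, Complex.add_im] <;>
      rw [hS] <;> field_simp
  rw [key]
  exact Complex.arg_mul_cos_add_sin_mul_I h0 hθ

lemma myArg_im_neg (u v : ℝ) (hv : v < 0) :
    Complex.arg ((u:ℂ) + (v:ℂ) * Complex.I) = -(π/2) - Real.arctan (u/v) := by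
  have h := myArg_im_pos u (-v) (by linarith)
  have hc : (starRingEnd ℂ) ((u:ℂ) + ((-v : ℝ):ℂ) * Complex.I) = (u:ℂ) + (v:ℝ) * Complex.I := by
    simp [map_add, map_mul, Complex.conj_I]
  have hne : Complex.arg ((u:ℂ) + ((-v:ℝ):ℂ) * Complex.I) ≠ π := by
    rw [h]
    have := Real.neg_pi_div_two_lt_arctan (u / -v)
    have := Real.pi_pos
    intro hcon; linarith [hcon]
  have := Complex.arg_conj ((u:ℂ) + ((-v:ℝ):ℂ) * Complex.I)
  rw [if_neg hne, hc] at this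
  rw [this, h, div_neg, Real.arctan_neg]
  ring

lemma reArctanArg (p q : ℝ) (hp : p ≠ 0) :
    (Complex.arctan ((p:ℂ) + (q:ℂ) * Complex.I)).re
      = (Complex.arg (((1 - p^2 - q^2 : ℝ):ℂ) + ((2*p : ℝ):ℂ) * Complex.I)) / 2 := by
  set z : ℂ := (p:ℂ) + (q:ℂ) * Complex.I with hzdef
  have hden : ((1:ℂ) - z * Complex.I) ≠ 0 := by
    intro h
    have h2 : ((1:ℂ) - z * Complex.I).im = 0 := by rw [h]; simp
    simp [hzdef] at h2
    exact hp h2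
  have hc : (0:ℝ) < (1+q)^2 + p^2 := by positivity
  have hζ : (1 + z * Complex.I)/(1 - z * Complex.I)
      = (((((1+q)^2+p^2)⁻¹ : ℝ)):ℂ) *
        (((1 - p^2 - q^2 : ℝ):ℂ) + ((2*p:ℝ):ℂ) * Complex.I) := by
    rw [div_eq_iff hden, hzdef]
    push_cast
    have hc' : ((1+q)^2 + p^2 : ℂ) ≠ 0 := by
      intro h
      have h2 : (((1+q)^2 + p^2 : ℝ) : ℂ) = 0 := by push_cast; linear_combination h
      rw [Complex.ofReal_eq_zero] at h2
      linarith [h2 ▸ hc]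
    have hI3 : (Complex.I)^3 = -Complex.I := by
      simp [pow_succ, Complex.I_sq]
    field_simp
    ring_nf
    simp only [hI3, Complex.I_sq]
    ring
  have hre : ∀ w : ℂ, (-Complex.I/2 * w).re = w.im / 2 := by
    intro w
    simp [Complex.mul_re, Complex.div_re, Complex.normSq]
    ring
  rw [Complex.arctan, hζ, hre, Complex.log_im, Complex.arg_real_mul _ (by positivity)]

lemma reArctanFormula (p q : ℝ) (hp : p ≠ 0) :
    (Complex.arctan ((p:ℂ) + (q:ℂ) * Complex.I)).re
      - (Complex.arctan ((p:ℂ))).re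
      = (Real.arctan ((1-p^2)/(2*p)) - Real.arctan ((1-p^2-q^2)/(2*p))) / 2 := by
  have h0 : (Complex.arctan ((p:ℂ))).re
      = (Complex.arg (((1 - p^2 - (0:ℝ)^2 : ℝ):ℂ) + ((2*p : ℝ):ℂ) * Complex.I)) / 2 := by
    have := reArctanArg p 0 hp
    simpa using this
  rw [reArctanArg p q hp, h0]
  rcases hp.lt_or_gt with hneg | hpos
  · rw [myArg_im_neg _ _ (by linarith : (2*p:ℝ) < 0), myArg_im_neg _ _ (by linarith : (2*p:ℝ) < 0)]
    norm_num
    ring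
  · rw [myArg_im_pos _ _ (by linarith : (0:ℝ) < 2*p), myArg_im_pos _ _ (by linarith : (0:ℝ) < 2*p)]
    norm_num
    ring

lemma arctanDiffLe (P Q : ℝ) (hP : 0 < P) (hQ : 0 ≤ Q)
    (hN : (1-P^2)*Q ≤ (1+P^2)^2/2) :
    Real.arctan ((1-P^2)/(2*P)) - Real.arctan ((1-P^2-Q)/(2*P)) ≤ 4*P*Q/(1+P^2)^2 := by
  set s := (1-P^2)/(2*P) with hs
  set t := (1-P^2-Q)/(2*P) with ht
  have hP2 : (0:ℝ) < (1+P^2)^2 := by positivity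
  have hNpos : (0:ℝ) < (1+P^2)^2 - (1-P^2)*Q := by nlinarith
  have hprod : s * (-t) < 1 := by
    have e : s * (-t) = (-((1-P^2)*(1-P^2-Q)))/(4*P^2) := by
      rw [hs, ht]; field_simp; ring
    rw [e, div_lt_one (by positivity)]
    nlinarith
  have key := Real.arctan_add hprod
  rw [Real.arctan_neg, ← sub_eq_add_neg] at key
  have harg : (s + -t)/(1 - s*(-t)) = 2*P*Q/((1+P^2)^2 - (1-P^2)*Q) := by
    rw [hs, ht]
    rw [div_eq_div_iff]
    · field_simp
      ring
    · have e : (1:ℝ) - (1-P^2)/(2*P) * (-((1-P^2-Q)/(2*P)))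
          = ((1+P^2)^2 - (1-P^2)*Q)/(4*P^2) := by field_simp; ring
      rw [e]; positivity
    · positivity
  rw [key, harg]
  have h1 : Real.arctan (2*P*Q/((1+P^2)^2 - (1-P^2)*Q))
      ≤ 2*P*Q/((1+P^2)^2 - (1-P^2)*Q) := myArctan_le_self (by positivity)
  refine h1.trans ?_
  rw [div_le_div_iff₀ hNpos hP2]
  nlinarith [mul_nonneg (mul_nonneg (by norm_num : (0:ℝ) ≤ 2) hP.le) hQ]

lemma absDiffFormula (p q : ℝ) (hp : p ≠ 0) :
    |(Complex.arctan ((p:ℂ) + (q:ℂ) * Complex.I)).re - (Complex.arctan ((p:ℂ))).re|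
      = (Real.arctan ((1-|p|^2)/(2*|p|)) - Real.arctan ((1-|p|^2-q^2)/(2*|p|))) / 2 := by
  rw [reArctanFormula p q hp]
  rcases hp.lt_or_gt with hneg | hpos
  · have hP : |p| = -p := abs_of_neg hneg
    rw [hP]
    have e1 : (1-p^2)/(2*p) = -((1-(-p)^2)/(2*(-p))) := by field_simp
    have e2 : (1-p^2-q^2)/(2*p) = -((1-(-p)^2-q^2)/(2*(-p))) := by field_simp
    rw [e1, e2, Real.arctan_neg, Real.arctan_neg]
    have hmono : Real.arctan ((1-(-p)^2-q^2)/(2*(-p))) ≤ Real.arctan ((1-(-p)^2)/(2*(-p))) := by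
      apply Real.arctan_strictMono.monotone
      apply div_le_div_of_nonneg_right ?_ (by linarith) |>.trans_eq rfl
      · nlinarith [sq_nonneg q]
    rw [_root_.abs_of_nonpos (by linarith)]
    ring
  · have hP : |p| = p := abs_of_pos hpos
    rw [hP]
    have hmono : Real.arctan ((1-p^2-q^2)/(2*p)) ≤ Real.arctan ((1-p^2)/(2*p)) := by
      apply Real.arctan_strictMono.monotone
      apply div_le_div_of_nonneg_right ?_ (by linarith) |>.trans_eq rfl
      · nlinarith [sq_nonneg q]
    rw [_root_.abs_of_nonneg (by linarith)]

lemma termBound (a T pj y : ℝ) (ha : 0 < a) (ha2 : a < 1/2)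
    (hT : T^2 ≤ pj^2) (hy4 : y^4 ≤ (T^2+a^2)^3/16) :
    |(Complex.arctan (((pj/a : ℝ):ℂ) + ((y/a : ℝ):ℂ) * Complex.I)).re
      - (Complex.arctan (((pj/a:ℝ):ℂ))).re| ≤ a/2 := by
  have hre : ∀ w : ℂ, (-Complex.I/2 * w).re = w.im / 2 := by
    intro w
    simp [Complex.mul_re, Complex.div_re, Complex.normSq]
    ring
  set p : ℝ := pj/a with hpdef
  set q : ℝ := y/a with hqdef
  clear_value p q
  rcases eq_or_ne pj 0 with h0 | h0
  · -- pj = 0 case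
    have hT0 : T^2 = 0 := le_antisymm (by rw [h0] at hT; simpa using hT) (sq_nonneg T)
    have hp0 : p = 0 := by rw [hpdef, h0, zero_div]
    have hq4 : q^4 ≤ a^2/16 := by
      have h1 : y^4 ≤ a^6/16 := by
        rw [hT0] at hy4
        calc y^4 ≤ (0+a^2)^3/16 := hy4
          _ = a^6/16 := by ring
      rw [hqdef, div_pow, div_le_div_iff₀ (by positivity) (by norm_num)]
      nlinarith [pow_pos ha 4]
    have hq1 : q^2 < 1 := by nlinarith [sq_nonneg q, sq_nonneg (q^2)]
    have hqlt : -1 < q ∧ q < 1 :=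
      ⟨by nlinarith [sq_nonneg (q+1)], by nlinarith [sq_nonneg (q-1)]⟩
    have hzero1 : (Complex.arctan ((p:ℂ))).re = 0 := by
      rw [hp0, ← Complex.ofReal_arctan]
      simp
    have hzero2 : (Complex.arctan ((p:ℂ) + (q:ℂ) * Complex.I)).re = 0 := by
      rw [hp0]
      have h1q : (1:ℂ) + (q:ℂ) ≠ 0 := by
        rw [show (1:ℂ) + (q:ℂ) = (((1+q:ℝ)):ℂ) by push_cast; ring, Complex.ofReal_ne_zero]
        linarith [hqlt.1]
      have harg : ((1:ℂ) + ((q:ℂ) * Complex.I) * Complex.I)/(1 - ((q:ℂ) * Complex.I) * Complex.I)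
          = (((1-q)/(1+q) : ℝ) : ℂ) := by
        rw [mul_assoc, Complex.I_mul_I]
        push_cast
        field_simp
        linear_combination (1 - (q:ℂ)) * mul_inv_cancel₀ h1q
      have hpos : (0:ℝ) < (1-q)/(1+q) := by
        apply div_pos <;> linarith [hqlt.1, hqlt.2]
      have him : (Complex.log (((1-q)/(1+q) : ℝ) : ℂ)).im = 0 := by
        rw [Complex.log_im, Complex.arg_ofReal_of_nonneg hpos.le]
      rw [Complex.arctan]
      simp only [Complex.ofReal_zero, zero_add]
      rw [harg, hre, him]
      norm_num
    rw [hzero1, hzero2]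
    simp
    positivity
  · -- pj ≠ 0
    have hp : p ≠ 0 := by rw [hpdef]; exact div_ne_zero h0 ha.ne'
    set m : ℝ := |pj| with hmdef
    clear_value m
    have hm0 : 0 < m := by rw [hmdef]; exact abs_pos.mpr h0
    have hm2 : pj^2 = m^2 := by rw [hmdef]; exact (_root_.sq_abs pj).symm
    have hPa : |p| = m/a := by rw [hpdef, abs_div, abs_of_pos ha, hmdef]
    have hE : (T^2+a^2)^3 ≤ (m^2+a^2)^3 := by
      apply pow_le_pow_left₀ (by positivity)
      nlinarith
    have hy4' : y^4 ≤ (m^2+a^2)^3/16 := hy4.trans (by linarith)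
    have hcaseQ : m < a → q^2 < 1/2 := by
      intro hma
      have h1 : y^4 ≤ a^6/2 := by
        have : (m^2+a^2)^3 ≤ (2*a^2)^3 := by
          apply pow_le_pow_left₀ (by positivity)
          nlinarith
        calc y^4 ≤ (m^2+a^2)^3/16 := hy4'
          _ ≤ (2*a^2)^3/16 := by linarith
          _ = a^6/2 := by ring
      have hq4 : q^4 ≤ a^2/2 := by
        rw [hqdef, div_pow, div_le_div_iff₀ (by positivity) (by norm_num)]
        nlinarith [pow_pos ha 4]
      nlinarith [sq_nonneg q, sq_nonneg (q^2)]
    have hN : (1-(m/a)^2)*q^2 ≤ (1+(m/a)^2)^2/2 := by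
      rcases le_or_gt a m with h1 | h1
      · have hge : 1 ≤ m/a := (one_le_div ha).mpr h1
        have hneg : 1 - (m/a)^2 ≤ 0 := by nlinarith
        exact (mul_nonpos_of_nonpos_of_nonneg hneg (sq_nonneg q)).trans (by positivity)
      · have hq2 := hcaseQ h1
        have hXQ : (0:ℝ) ≤ (m/a)^2 * q^2 := by positivity
        have h1X : (1:ℝ) ≤ (1+(m/a)^2)^2 := by nlinarith [sq_nonneg (m/a), sq_nonneg ((m/a)^2)]
        have expand : (1-(m/a)^2)*q^2 = q^2 - (m/a)^2*q^2 := by ring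
        rw [expand]
        linarith
    have hb := arctanDiffLe (m/a) (q^2) (by positivity) (sq_nonneg q) hN
    have main : 4*m*y^2 ≤ (m^2+a^2)^2 := by
      have hm2le : m^2 ≤ m^2 + a^2 := by nlinarith [sq_nonneg a]
      have h2 : 16*(m^2*y^4) ≤ m^2*(m^2+a^2)^3 := by
        nlinarith [mul_le_mul_of_nonneg_left hy4' (sq_nonneg m)]
      have h3 : m^2*(m^2+a^2)^3 ≤ (m^2+a^2)*(m^2+a^2)^3 := by
        apply mul_le_mul_of_nonneg_right hm2le
        positivity
      have hsq : (4*m*y^2)^2 ≤ ((m^2+a^2)^2)^2 := by nlinarith [h2, h3]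
      have h4 := Real.sqrt_le_sqrt hsq
      rwa [Real.sqrt_sq (by positivity), Real.sqrt_sq (by positivity)] at h4
    have hfinal : 4*(m/a)*q^2/(1+(m/a)^2)^2 ≤ a := by
      have e : 4*(m/a)*q^2/((1+(m/a)^2)^2) = 4*m*y^2*a/((m^2+a^2)^2) := by
        rw [hqdef]
        field_simp
        ring
      rw [e, div_le_iff₀ (by positivity)]
      nlinarith [mul_le_mul_of_nonneg_right main ha.le]
    rw [absDiffFormula p q hp, hPa]
    linarith [hb, hfinal]

lemma bmono (n : ℕ) (b : ℕ → ℝ) (hb : ∀ j, j + 1 < n → b j < b (j + 1)) :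
    ∀ i j, i ≤ j → j < n → b i ≤ b j := by
  intro i j hij hj
  induction j, hij using Nat.le_induction with
  | base => exact le_refl _
  | succ j hij ih =>
      have h1 : j < n := by omega
      exact (ih h1).trans (hb j (by omega)).le

theorem stmt10 (n : ℕ) (hn : 1 ≤ n) (b : ℕ → ℝ)
    (hb0 : -(1/2) < b 0) (hbn : b (n - 1) < 1/2)
    (hbmono : ∀ j, j + 1 < n → b j < b (j + 1))
    (a : ℝ) (ha : a ∈ Set.Ioo (0 : ℝ) (1/2))
    (k : ℕ) (hk : k < n) (z : ℂ) (hz : z ∈ OmegaJ n b a k) :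
    |(hFun n b a z).re - (hFun n b a ((z.re : ℂ))).re|
        ≤ (1/2) * ∑ j ∈ Finset.range n, 1 / (2 : ℝ) ^ j ∧
    (1/2) * ∑ j ∈ Finset.range n, 1 / (2 : ℝ) ^ j < 1 ∧
    |(hFun n b a z).re - (hFun n b a ((z.re : ℂ))).re| < 1 := by
  obtain ⟨ha0, halt⟩ := ha
  obtain ⟨hx1, hx2, hy⟩ := hz
  set x : ℝ := z.re with hxdef
  set y : ℝ := z.im with hydef
  have hD0 : (0:ℝ) ≤ (x - b k)^2 + a^2 := by positivity
  -- y^4 bound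
  have hy4 : y^4 ≤ ((x - b k)^2 + a^2)^3/16 := by
    have h1 : |y|^(4:ℕ) ≤ ((((x - b k)^2 + a^2)^((3:ℝ)/4))/2)^(4:ℕ) :=
      pow_le_pow_left₀ (abs_nonneg y) hy 4
    have e1 : |y|^(4:ℕ) = y^4 := by
      exact (pow_abs y 4).trans (_root_.abs_of_nonneg (by positivity))
    have e2 : ((((x - b k)^2 + a^2)^((3:ℝ)/4))/2)^(4:ℕ) = ((x - b k)^2 + a^2)^3/16 := by
      rw [div_pow]
      norm_num
      rw [← Real.rpow_natCast ((((x - b k)^2 + a^2))^((3:ℝ)/4)) 4, ← Real.rpow_mul hD0]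
      norm_num
    rw [e1, e2] at h1
    exact h1
  -- geometry: distance comparison
  have hgeom : ∀ j, j < n → (x - b k)^2 ≤ (x - b j)^2 := by
    intro j hj
    rcases lt_trichotomy j k with hjk | rfl | hjk
    · have hk0 : k ≠ 0 := by omega
      have hL : leftEnd b k = (b (k-1) + b k)/2 := by rw [leftEnd, if_neg hk0]
      have hbl : b j ≤ b (k-1) := bmono n b hbmono j (k-1) (by omega) (by omega)
      have hbs : b (k-1) < b k := by
        have := hbmono (k-1) (by omega)
        rwa [show k - 1 + 1 = k by omega] at this
      have hxk : (b (k-1) + b k)/2 ≤ x := by rw [← hL]; exact hx1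
      nlinarith [mul_nonneg (show (0:ℝ) ≤ b k - b j by linarith)
        (show (0:ℝ) ≤ 2*x - b j - b k by linarith)]
    · exact le_refl _
    · have hkn : k ≠ n - 1 := by omega
      have hR : rightEnd n b k = (b k + b (k+1))/2 := by rw [rightEnd, if_neg hkn]
      have hbl : b (k+1) ≤ b j := bmono n b hbmono (k+1) j (by omega) hj
      have hbs : b k < b (k+1) := hbmono k (by omega)
      have hxk : x ≤ (b k + b (k+1))/2 := by rw [← hR]; exact hx2
      nlinarith [mul_nonneg (show (0:ℝ) ≤ b j - b k by linarith)
        (show (0:ℝ) ≤ b j + b k - 2*x by linarith)]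
  -- per-term bound
  have key : ∀ j ∈ Finset.range n,
      |(Complex.arctan ((z - (b j:ℂ))/(a:ℂ))).re
        - (Complex.arctan (((x:ℂ) - (b j:ℂ))/(a:ℂ))).re| ≤ a/2 := by
    intro j hj
    rw [Finset.mem_range] at hj
    have hTj : (x - b k)^2 ≤ (x - b j)^2 := hgeom j hj
    have hca : (a:ℂ) ≠ 0 := Complex.ofReal_ne_zero.mpr ha0.ne'
    have e1 : (z - (b j:ℂ))/(a:ℂ) = (((x - b j)/a : ℝ):ℂ) + (((y/a):ℝ):ℂ) * Complex.I := by
      rw [← Complex.re_add_im z, ← hxdef, ← hydef]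
      push_cast
      field_simp
      ring
    have e2 : (((x:ℝ):ℂ) - (b j:ℂ))/(a:ℂ) = (((x - b j)/a : ℝ):ℂ) := by
      push_cast
      ring
    rw [e1, e2]
    exact termBound a (x - b k) (x - b j) y ha0 halt hTj hy4
  -- rewrite hFun real parts as sums
  have hsum : ∀ w : ℂ, (hFun n b a w).re
      = ∑ j ∈ Finset.range n, (1/(2^j*a)) * (Complex.arctan ((w - (b j:ℂ))/(a:ℂ))).re := by
    intro w
    unfold hFun
    rw [Complex.re_sum]
    apply Finset.sum_congr rfl
    intro j _
    rw [show (1 / ((2:ℂ)^j * (a:ℂ))) = (((1/(2^j*a) : ℝ)):ℂ) by push_cast; ring]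
    exact Complex.re_ofReal_mul _ _
  have hdiff : (hFun n b a z).re - (hFun n b a ((x:ℂ))).re
      = ∑ j ∈ Finset.range n, (1/(2^j*a)) *
          ((Complex.arctan ((z - (b j:ℂ))/(a:ℂ))).re
            - (Complex.arctan (((x:ℂ) - (b j:ℂ))/(a:ℂ))).re) := by
    rw [hsum z, hsum ((x:ℂ)), ← Finset.sum_sub_distrib]
    apply Finset.sum_congr rfl
    intro j _
    ring
  have habs : |(hFun n b a z).re - (hFun n b a ((x:ℂ))).re|
      ≤ (1/2) * ∑ j ∈ Finset.range n, 1 / (2:ℝ)^j := by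
    rw [hdiff, Finset.mul_sum]
    refine (Finset.abs_sum_le_sum_abs _ _).trans ?_
    apply Finset.sum_le_sum
    intro j hj
    rw [abs_mul, _root_.abs_of_nonneg (show (0:ℝ) ≤ 1/(2^j*a) by positivity)]
    calc (1/(2^j*a)) * |(Complex.arctan ((z - (b j:ℂ))/(a:ℂ))).re
            - (Complex.arctan (((x:ℂ) - (b j:ℂ))/(a:ℂ))).re|
        ≤ (1/(2^j*a)) * (a/2) := by
          apply mul_le_mul_of_nonneg_left (key j hj) (by positivity)
      _ = (1/2) * (1/(2:ℝ)^j) := by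
          field_simp
  have hgsum : ∑ j ∈ Finset.range n, 1 / (2:ℝ)^j < 2 := by
    have e : ∑ j ∈ Finset.range n, 1 / (2:ℝ)^j = ∑ j ∈ Finset.range n, ((1:ℝ)/2)^j := by
      apply Finset.sum_congr rfl
      intro j _
      rw [one_div_pow]
    rw [e, geom_sum_eq (by norm_num : ((1:ℝ)/2) ≠ 1)]
    have hpow : (0:ℝ) < ((1:ℝ)/2)^n := by positivity
    rw [div_lt_iff_of_neg (by norm_num : ((1:ℝ)/2 - 1) < 0)]
    linarith
  refine ⟨habs, by linarith, lt_of_le_of_lt habs (by linarith)⟩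
end

section
/- For every a ∈ (0,1/2) and every (x,y) ∈ Ω_a, writing γ_{x,a}(y) = F_a(x,y) and γ′_{x,a}(y) = ∂_y F_a(x,y), one has ⟨γ′_{x,a}(y), γ′_{x,a}(0)⟩ = cosh(v_a(x,y)) · cos(u_a(x,y) − u_a(x,0)) > cosh(v_a(x,y))/2 > 0, where u_a = Re h_a and v_a = Im h_a. -/
open Complex Real Set Finset Filter RealInnerProductSpace

lemma hasDerivAt_arctanC_s11 {w : ℂ} (h : w.re ≠ 0 ∨ Complex.normSq w < 1) :
    HasDerivAt Complex.arctan (1 / (1 + w ^ 2)) w := by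
  set N : ℂ := 1 + w * I with hNdef
  set D : ℂ := 1 - w * I with hDdef
  have hDre : D.re = 1 + w.im := by simp [hDdef]
  have hDim : D.im = -w.re := by simp [hDdef]
  have hD : D ≠ 0 := by
    rcases h with h | h
    · intro h0; apply h; rw [← neg_eq_zero, ← hDim, h0]; simp
    · intro h0
      have him : |w.im| < 1 := by
        nlinarith [Complex.normSq_apply w, sq_nonneg w.re, abs_nonneg w.im,
          _root_.sq_abs w.im]
      have : (1:ℝ) + w.im = 0 := by rw [← hDre, h0]; simp
      have := abs_lt.mp him
      linarith
  have hq : N / D ∈ Complex.slitPlane := by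
    have hns : Complex.normSq D ≠ 0 := by simpa using hD
    have hre : (N / D).re = (1 - Complex.normSq w) / Complex.normSq D := by
      rw [Complex.div_re]
      simp [hNdef, hDdef, Complex.normSq_apply]
      ring
    have him : (N / D).im = (2 * w.re) / Complex.normSq D := by
      rw [Complex.div_im]
      simp [hNdef, hDdef, Complex.normSq_apply]
      ring
    rw [Complex.mem_slitPlane_iff]
    rcases h with h | h
    · right; rw [him]; positivity
    · left; rw [hre]
      have h1 : 0 < Complex.normSq D := lt_of_le_of_ne (Complex.normSq_nonneg D) (Ne.symm hns)
      exact div_pos (by linarith) h1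
  have hN : N ≠ 0 := by
    intro h0
    apply Complex.slitPlane_ne_zero hq
    rw [h0, zero_div]
  have h1 : HasDerivAt (fun z : ℂ => 1 + z * I) I w := by
    simpa using ((hasDerivAt_id w).mul_const I).const_add 1
  have h2 : HasDerivAt (fun z : ℂ => 1 - z * I) (-I) w := by
    simpa using ((hasDerivAt_id w).mul_const I).const_sub 1
  have hdiv : HasDerivAt (fun z : ℂ => (1 + z * I) / (1 - z * I))
      ((I * D - N * (-I)) / D ^ 2) w := h1.div h2 hD
  have hlog := ((Complex.hasDerivAt_log hq).comp w hdiv)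
  have := hlog.const_mul (-I / 2)
  have harctan : Complex.arctan = fun z : ℂ => -I / 2 * Complex.log ((1 + z * I) / (1 - z * I)) := by
    funext z; rfl
  rw [harctan]
  refine this.congr_deriv (Eq.symm ?_)
  have hND : N * D = 1 + w ^ 2 := by rw [hNdef, hDdef]; ring_nf; simp [Complex.I_sq]
  have h1w : (1 : ℂ) + w ^ 2 ≠ 0 := by rw [← hND]; exact mul_ne_zero hN hD
  have hI3 : (I:ℂ)^3 = -I := by rw [pow_succ, Complex.I_sq]; ring
  field_simp
  ring_nf
  rw [Complex.I_sq, hND, hNdef, hDdef]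
  ring

noncomputable def SFun (n : ℕ) (b : ℕ → ℝ) (a : ℝ) (z : ℂ) : ℂ :=
  ∑ j ∈ Finset.range n, ((2:ℂ)^j)⁻¹ * ((z - (b j:ℂ))^2 + (a:ℂ)^2)⁻¹

lemma one_add_sq_ne {w : ℂ} (h : w.re ≠ 0 ∨ Complex.normSq w < 1) : 1 + w^2 ≠ 0 := by
  intro h0
  have hre := congrArg Complex.re h0
  have him := congrArg Complex.im h0
  simp only [pow_two, Complex.add_re, Complex.add_im, Complex.one_re, Complex.one_im,
    Complex.mul_re, Complex.mul_im, Complex.zero_re, Complex.zero_im] at hre him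
  rcases h with h | h
  · have h' : w.re * w.im = 0 := by linarith
    rcases mul_eq_zero.mp h' with h'' | h''
    · exact h h''
    · nlinarith [sq_nonneg w.re]
  · rw [Complex.normSq_apply] at h
    nlinarith [sq_nonneg w.re, sq_nonneg w.im]

lemma hFun_ofReal_im (n : ℕ) (b : ℕ → ℝ) (a : ℝ) (x : ℝ) : (hFun n b a (x:ℂ)).im = 0 := by
  have : hFun n b a (x:ℂ)
      = ((∑ j ∈ Finset.range n, (1/((2:ℝ)^j*a)) * Real.arctan ((x - b j)/a) : ℝ) : ℂ) := by
    unfold hFun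
    rw [Complex.ofReal_sum]
    refine Finset.sum_congr rfl fun j _ => ?_
    rw [Complex.ofReal_mul, Complex.ofReal_arctan]
    push_cast
    ring
  rw [this, Complex.ofReal_im]

lemma hasDerivAt_hFun (n : ℕ) (b : ℕ → ℝ) {a : ℝ} (ha : a ≠ 0) (z : ℂ)
    (hz : ∀ j < n, (z.re - b j) ≠ 0 ∨ Complex.normSq (z - (b j:ℂ)) < a ^ 2) :
    HasDerivAt (hFun n b a) (SFun n b a z) z := by
  unfold hFun SFun
  apply HasDerivAt.fun_sum
  intro j hj
  rw [Finset.mem_range] at hj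
  have haC : (a:ℂ) ≠ 0 := by exact_mod_cast ha
  set w : ℂ := (z - (b j:ℂ)) / a with hw
  have hcond : w.re ≠ 0 ∨ Complex.normSq w < 1 := by
    rcases hz j hj with h | h
    · left
      rw [hw, Complex.div_ofReal_re]
      simp only [Complex.sub_re, Complex.ofReal_re]
      exact div_ne_zero h ha
    · right
      rw [hw, Complex.normSq_div, Complex.normSq_ofReal]
      rw [div_lt_one (mul_self_pos.mpr ha)]
      nlinarith [h]
  have hw2 : (1:ℂ) + w^2 ≠ 0 := one_add_sq_ne hcond
  have hden : (z - (b j:ℂ))^2 + (a:ℂ)^2 ≠ 0 := by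
    have he : ((z - (b j:ℂ))^2 + (a:ℂ)^2) = a^2 * (1 + w^2) := by
      rw [hw]; field_simp; ring
    rw [he]
    exact mul_ne_zero (pow_ne_zero _ haC) hw2
  have inner : HasDerivAt (fun z : ℂ => (z - (b j:ℂ)) / a) (1/a) z := by
    simpa using ((hasDerivAt_id z).sub_const ((b j:ℂ))).div_const (a:ℂ)
  have houter := (hasDerivAt_arctanC_s11 hcond).comp z inner
  have hfin := houter.const_mul (1 / ((2:ℂ)^j * (a:ℂ)))
  refine hfin.congr_deriv (Eq.symm ?_)
  have he2 : (1:ℂ) + w^2 = ((z - (b j:ℂ))^2 + (a:ℂ)^2) / (a:ℂ)^2 := by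
    rw [hw]; field_simp; ring
  have h2j : ((2:ℂ)^j) ≠ 0 := pow_ne_zero _ two_ne_zero
  rw [he2]
  field_simp [hden]

set_option maxHeartbeats 1000000 in
lemma geom (n : ℕ) (b : ℕ → ℝ)
    (hb0 : -(1/2) < b 0) (hbn : b (n - 1) < 1/2)
    (hbmono : ∀ j, j + 1 < n → b j < b (j + 1))
    {a : ℝ} (ha : a ∈ Set.Ioo (0 : ℝ) (1/2))
    {z : ℂ} (hz : z ∈ OmegaA n b a) :
    ∀ j < n, z.im^2 ≤ (9/32) * ((z.re - b j)^2 + a^2) ∧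
      |z.re - b j| * z.im^2 ≤ ((z.re - b j)^2 + a^2)^2 / 4 := by
  obtain ⟨ha0, ha2⟩ := ha
  -- monotonicity of b on range n
  have hm : ∀ i j, i ≤ j → j < n → b i ≤ b j := by
    intro i j hij hjn
    induction j with
    | zero => simp_all
    | succ k ih =>
      rcases Nat.eq_or_lt_of_le hij with h | h
      · rw [h]
      · have hk : i ≤ k := Nat.lt_succ_iff.mp h
        exact le_trans (ih hk (Nat.lt_of_succ_lt hjn))
          (le_of_lt (hbmono k hjn))
  have hbl : ∀ j < n, -(1/2) < b j := fun j hj =>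
    lt_of_lt_of_le hb0 (hm 0 j (Nat.zero_le j) hj)
  have hbu : ∀ j < n, b j < 1/2 := by
    intro j hj
    exact lt_of_le_of_lt (hm j (n-1) (by omega) (by omega)) hbn
  -- extract slab
  rw [OmegaA, Set.mem_iUnion₂] at hz
  obtain ⟨j₀, hj₀f, hL, hR, hy⟩ := hz
  rw [Finset.mem_range] at hj₀f
  set x := z.re with hxdef
  set y := z.im with hydef
  -- x bounds
  have hxl : -(1/2) ≤ x := by
    refine le_trans ?_ hL
    rw [leftEnd]
    split
    · exact le_refl _
    · next h =>
      have h1 := hbl (j₀ - 1) (by omega)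
      have h2 := hbl j₀ hj₀f
      linarith
  have hxu : x ≤ 1/2 := by
    refine le_trans hR ?_
    rw [rightEnd]
    split
    · exact le_refl _
    · next h =>
      have h1 := hbu j₀ hj₀f
      have h2 := hbu (j₀ + 1) (by omega)
      linarith
  -- Voronoi
  have hvor : ∀ j < n, (x - b j₀)^2 ≤ (x - b j)^2 := by
    intro j hj
    rcases lt_trichotomy j j₀ with h | h | h
    · have hj₀0 : j₀ ≠ 0 := by omega
      have hle : b j ≤ b (j₀ - 1) := hm j (j₀ - 1) (by omega) (by omega)
      have hLj : (b (j₀ - 1) + b j₀)/2 ≤ x := by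
        rw [leftEnd, if_neg hj₀0] at hL; exact hL
      have h1 : x - b j ≥ x - b j₀ := by
        have := hm j j₀ (le_of_lt h) hj₀f; linarith
      have h2 : x - b j ≥ b j₀ - x := by linarith
      nlinarith [h1, h2]
    · rw [h]
    · have hj₀n : j₀ ≠ n - 1 := by omega
      have hle : b (j₀ + 1) ≤ b j := hm (j₀ + 1) j (by omega) hj
      have hRj : x ≤ (b j₀ + b (j₀ + 1))/2 := by
        rw [rightEnd, if_neg hj₀n] at hR; exact hR
      have h1 : b j - x ≥ b j₀ - x := by
        have := hm j₀ j (le_of_lt h) hj; linarith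
      have h2 : b j - x ≥ x - b j₀ := by linarith
      nlinarith
  -- main bounds
  intro j hj
  set R0 := (x - b j₀)^2 + a^2 with hR0
  set Rj := (x - b j)^2 + a^2 with hRj
  have hR0pos : 0 < R0 := by positivity
  have hRjpos : 0 < Rj := by positivity
  have hR0Rj : R0 ≤ Rj := by
    have := hvor j hj; simp only [hR0, hRj]; linarith
  have hRj54 : Rj ≤ 5/4 := by
    have h1 := hbl j hj
    have h2 := hbu j hj
    have : (x - b j)^2 ≤ 1 := by nlinarith
    nlinarith
  have hsq : Real.sqrt Rj ≤ 9/8 := by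
    nlinarith [Real.sq_sqrt hRjpos.le, Real.sqrt_nonneg Rj]
  have hy2 : y^2 ≤ R0 ^ ((3:ℝ)/2) / 4 := by
    have h1 : |y| ≤ R0 ^ ((3:ℝ)/4) / 2 := hy
    have h2 : y^2 ≤ (R0 ^ ((3:ℝ)/4) / 2)^2 := by
      rw [← _root_.sq_abs y]
      exact pow_le_pow_left₀ (abs_nonneg y) h1 2
    have h3 : (R0 ^ ((3:ℝ)/4))^2 = R0 ^ ((3:ℝ)/2) := by
      rw [← Real.rpow_natCast (R0 ^ ((3:ℝ)/4)) 2, ← Real.rpow_mul hR0pos.le]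
      norm_num
    calc y^2 ≤ (R0 ^ ((3:ℝ)/4) / 2)^2 := h2
    _ = (R0 ^ ((3:ℝ)/4))^2 / 4 := by ring
    _ = R0 ^ ((3:ℝ)/2) / 4 := by rw [h3]
  have hr32 : R0 ^ ((3:ℝ)/2) ≤ Rj * Real.sqrt Rj := by
    have h1 : R0 ^ ((3:ℝ)/2) ≤ Rj ^ ((3:ℝ)/2) :=
      Real.rpow_le_rpow hR0pos.le hR0Rj (by norm_num)
    have h2 : Rj ^ ((3:ℝ)/2) = Rj * Real.sqrt Rj := by
      rw [Real.sqrt_eq_rpow, ← Real.rpow_one_add' (by positivity) (by norm_num)]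
      norm_num
    linarith [h1, h2.le]
  constructor
  · -- y² ≤ (9/32) Rj
    have h9 : Rj * Real.sqrt Rj ≤ Rj * (9/8) :=
      mul_le_mul_of_nonneg_left hsq hRjpos.le
    linarith [hy2, hr32, h9]
  · -- |x - b j| * y² ≤ Rj²/4
    have hsj : |x - b j| ≤ Real.sqrt Rj := by
      rw [← Real.sqrt_sq_eq_abs]
      exact Real.sqrt_le_sqrt (by simp only [hRj]; nlinarith)
    have h1 : |x - b j| * y^2 ≤ Real.sqrt Rj * (Rj * Real.sqrt Rj / 4) := by
      apply mul_le_mul hsj _ (sq_nonneg y) (Real.sqrt_nonneg Rj)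
      calc y^2 ≤ R0 ^ ((3:ℝ)/2)/4 := hy2
      _ ≤ Rj * Real.sqrt Rj / 4 := by linarith
    have h2 : Real.sqrt Rj * (Rj * Real.sqrt Rj / 4) = Rj^2/4 := by
      have := Real.sq_sqrt hRjpos.le
      nlinarith [Real.sqrt_nonneg Rj]
    linarith

set_option maxHeartbeats 1000000 in
lemma estimate (n : ℕ) (b : ℕ → ℝ)
    (hb0 : -(1/2) < b 0) (hbn : b (n - 1) < 1/2)
    (hbmono : ∀ j, j + 1 < n → b j < b (j + 1))
    {a : ℝ} (ha : a ∈ Set.Ioo (0 : ℝ) (1/2))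
    {z : ℂ} (hz : z ∈ OmegaA n b a) :
    |(hFun n b a z).re - (hFun n b a ((z.re:ℂ))).re| ≤ 512/529 := by
  obtain ⟨ha0, ha2⟩ := ha
  set x := z.re with hx
  set y := z.im with hyy
  have hgeom := geom n b hb0 hbn hbmono ⟨ha0, ha2⟩ hz
  set f : ℝ → ℝ := fun t => (hFun n b a ((x:ℂ) + t*Complex.I)).re with hf
  set φ : ℝ → ℝ := fun t => (SFun n b a ((x:ℂ) + t*Complex.I) * Complex.I).re with hφ
  have hpt : ∀ t : ℝ, t^2 ≤ y^2 → ∀ j < n,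
      t^2 ≤ (9/32) * ((x - b j)^2 + a^2) := fun t ht j hj => le_trans ht (hgeom j hj).1
  -- real/imag parts of the denominators
  have hdre : ∀ (t : ℝ) (j : ℕ),
      (((x:ℂ) + t*Complex.I - (b j:ℂ))^2 + (a:ℂ)^2).re = (x - b j)^2 - t^2 + a^2 := by
    intro t j
    simp [pow_two, Complex.mul_re, Complex.add_re, Complex.sub_re, Complex.add_im,
      Complex.sub_im, Complex.ofReal_re, Complex.ofReal_im, Complex.I_re, Complex.I_im]
    try ring
  have hdim : ∀ (t : ℝ) (j : ℕ),
      (((x:ℂ) + t*Complex.I - (b j:ℂ))^2 + (a:ℂ)^2).im = 2*t*(x - b j) := by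
    intro t j
    simp [pow_two, Complex.mul_im, Complex.add_re, Complex.sub_re, Complex.add_im,
      Complex.sub_im, Complex.ofReal_re, Complex.ofReal_im, Complex.I_re, Complex.I_im]
    try ring
  have hdenom : ∀ t : ℝ, t^2 ≤ y^2 → ∀ j < n,
      (((x:ℂ) + t*Complex.I - (b j:ℂ))^2 + (a:ℂ)^2) ≠ 0 := by
    intro t ht j hj h0
    have hre := congrArg Complex.re h0
    rw [hdre t j] at hre
    simp only [Complex.zero_re] at hre
    have h1 := hpt t ht j hj
    have : (0:ℝ) < (x - b j)^2 + a^2 := by positivity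
    nlinarith
  -- derivative of f
  have hderiv : ∀ t : ℝ, t^2 ≤ y^2 → HasDerivAt f (φ t) t := by
    intro t ht
    have hcond : ∀ j < n, (((x:ℂ) + t*Complex.I).re - b j) ≠ 0 ∨
        Complex.normSq ((x:ℂ) + t*Complex.I - (b j:ℂ)) < a ^ 2 := by
      intro j hj
      by_cases hxb : x - b j = 0
      · right
        have hns : Complex.normSq ((x:ℂ) + t*Complex.I - (b j:ℂ)) = (x - b j)^2 + t^2 := by
          simp [Complex.normSq_apply, Complex.add_re, Complex.sub_re, Complex.add_im,
            Complex.sub_im, Complex.ofReal_re, Complex.ofReal_im, Complex.I_re, Complex.I_im]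
          ring
        have h1 := hpt t ht j hj
        rw [hns]
        nlinarith [sq_nonneg a, ha0]
      · left; simpa using hxb
    have hin : HasDerivAt (fun w : ℂ => (x:ℂ) + w * Complex.I) Complex.I (t:ℂ) := by
      simpa using ((hasDerivAt_id (t:ℂ)).mul_const Complex.I).const_add (x:ℂ)
    have hout := (hasDerivAt_hFun n b ha0.ne' ((x:ℂ) + t*Complex.I) hcond).comp (t:ℂ) hin
    simp only [hφ]
    exact hout.real_of_complex
  have ht2 : ∀ t ∈ Set.uIcc (0:ℝ) y, t^2 ≤ y^2 := by
    intro t ht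
    rcases Set.mem_uIcc.mp ht with ⟨h1,h2⟩|⟨h1,h2⟩ <;> nlinarith
  have ht2' : ∀ t ∈ Set.uIoc (0:ℝ) y, t^2 ≤ y^2 := by
    intro t ht
    rcases Set.mem_uIoc.mp ht with ⟨h1,h2⟩|⟨h1,h2⟩ <;> nlinarith
  -- continuity of φ
  have hcont : ContinuousOn φ (Set.uIcc 0 y) := by
    apply Complex.continuous_re.comp_continuousOn
    apply ContinuousOn.mul _ continuousOn_const
    unfold SFun
    apply continuousOn_finset_sum
    intro j hj
    rw [Finset.mem_range] at hj
    apply ContinuousOn.mul continuousOn_const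
    apply ContinuousOn.inv₀
    · fun_prop
    · intro t ht
      exact hdenom t (ht2 t ht) j hj
  -- FTC
  have hFTC : ∫ t in (0:ℝ)..y, φ t = f y - f 0 := by
    apply intervalIntegral.integral_eq_sub_of_hasDerivAt
    · intro t ht; exact hderiv t (ht2 t ht)
    · exact hcont.intervalIntegrable
  -- the bound constant
  set C : ℝ := ∑ j ∈ Finset.range n,
      ((2:ℝ)^j)⁻¹ * ((2048/529) * |x - b j| / ((x - b j)^2 + a^2)^2) with hC
  have hCnonneg : 0 ≤ C := by
    apply Finset.sum_nonneg
    intro j hj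
    positivity
  -- pointwise bound on φ
  have hφbound : ∀ t : ℝ, t^2 ≤ y^2 → |φ t| ≤ C * |t| := by
    intro t ht
    have hφt : φ t = -(SFun n b a ((x:ℂ)+t*Complex.I)).im := by
      simp [hφ, Complex.mul_re]
    rw [hφt, abs_neg]
    have him : (SFun n b a ((x:ℂ)+t*Complex.I)).im
        = ∑ j ∈ Finset.range n,
          ((2:ℝ)^j)⁻¹ * (((((x:ℂ)+t*Complex.I - (b j:ℂ))^2 + (a:ℂ)^2)⁻¹).im) := by
      unfold SFun
      rw [Complex.im_sum]
      refine Finset.sum_congr rfl fun j _ => ?_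
      have h2 : ((2:ℂ)^j) = (((2:ℝ)^j : ℝ) : ℂ) := by push_cast; ring
      rw [Complex.mul_im, h2, ← Complex.ofReal_inv, Complex.ofReal_re, Complex.ofReal_im]
      ring
    rw [him]
    refine le_trans (Finset.abs_sum_le_sum_abs _ _) ?_
    rw [hC, Finset.sum_mul]
    apply Finset.sum_le_sum
    intro j hj
    rw [Finset.mem_range] at hj
    set d : ℂ := ((x:ℂ)+t*Complex.I - (b j:ℂ))^2 + (a:ℂ)^2 with hd
    set Rj : ℝ := (x - b j)^2 + a^2 with hRj
    have hRjpos : 0 < Rj := by positivity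
    have h1 := hpt t ht j hj
    have hdrelb : (23/32)*Rj ≤ d.re := by
      have he : d.re = (x - b j)^2 - t^2 + a^2 := hdre t j
      rw [he]; simp only [hRj]; nlinarith
    have hnslb : (529/1024) * Rj^2 ≤ Complex.normSq d := by
      rw [Complex.normSq_apply]
      nlinarith [sq_nonneg d.im, hdrelb, hRjpos]
    have hnspos : 0 < Complex.normSq d := lt_of_lt_of_le (by positivity) hnslb
    have himv : |((d⁻¹).im)| = |d.im| / Complex.normSq d := by
      rw [Complex.inv_im, abs_div, abs_neg, abs_of_pos hnspos]
    have hdimv : |d.im| = 2 * |t| * |x - b j| := by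
      have he : d.im = 2*t*(x - b j) := hdim t j
      rw [he, abs_mul, abs_mul]
      norm_num
    rw [abs_mul, himv, hdimv]
    have h2pos : (0:ℝ) < ((2:ℝ)^j) := by positivity
    rw [abs_of_pos (inv_pos.mpr h2pos)]
    rw [mul_comm (((2:ℝ)^j)⁻¹ * _) |t|]
    rw [← mul_assoc]
    rw [mul_comm |t| (((2:ℝ)^j)⁻¹)]
    rw [mul_assoc, mul_assoc]
    apply mul_le_mul_of_nonneg_left _ (by positivity)
    -- goal: 2|t||s| / normSq d ≤ |t| * ((2048/529)|s|/Rj²)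
    have hstep : 2 * (|t| * |x - b j|) / Complex.normSq d ≤ 2 * (|t| * |x - b j|) / ((529/1024)*Rj^2) := by
      apply div_le_div_of_nonneg_left (by positivity) (by positivity) hnslb
    refine le_trans hstep (le_of_eq ?_)
    have hRne : Rj ≠ 0 := hRjpos.ne'
    field_simp
    ring
  -- integral bound
  set g : ℝ → ℝ := fun t => C * |t| with hg
  have hgInt : IntervalIntegrable g MeasureTheory.volume 0 y :=
    (continuous_const.mul _root_.continuous_abs).intervalIntegrable 0 y
  have hI1 : |∫ t in (0:ℝ)..y, φ t| ≤ |∫ t in (0:ℝ)..y, g t| := by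
    rw [← Real.norm_eq_abs (∫ t in (0:ℝ)..y, φ t)]
    apply intervalIntegral.norm_integral_le_abs_of_norm_le _ hgInt
    apply MeasureTheory.ae_restrict_of_forall_mem measurableSet_uIoc
    intro t ht
    simpa [Real.norm_eq_abs, hg] using hφbound t (ht2' t ht)
  have hI2 : |∫ t in (0:ℝ)..y, g t| = C * y^2 / 2 := by
    rcases le_or_gt 0 y with hy0 | hy0
    · have he1 : ∫ t in (0:ℝ)..y, g t = ∫ t in (0:ℝ)..y, C * t := by
        apply intervalIntegral.integral_congr
        intro t ht
        rw [Set.uIcc_of_le hy0] at ht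
        simp [hg, _root_.abs_of_nonneg ht.1]
      rw [he1, intervalIntegral.integral_const_mul, integral_id]
      rw [_root_.abs_of_nonneg (by nlinarith [hCnonneg, sq_nonneg y])]
      ring
    · have he1 : ∫ t in (0:ℝ)..y, g t = ∫ t in (0:ℝ)..y, C * (-t) := by
        apply intervalIntegral.integral_congr
        intro t ht
        rw [Set.uIcc_of_ge hy0.le] at ht
        simp [hg, _root_.abs_of_nonpos ht.2]
      rw [he1]
      have he2 : ∫ t in (0:ℝ)..y, C * (-t) = C * ((-(y^2) - -(0^2))/2) := by
        rw [intervalIntegral.integral_const_mul]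
        congr 1
        have he3 : (fun t : ℝ => -t) = fun t : ℝ => (-1) * t := by funext t; ring
        rw [he3, intervalIntegral.integral_const_mul, integral_id]
        ring
      rw [he2, abs_mul, _root_.abs_of_nonneg hCnonneg]
      rw [_root_.abs_of_nonpos (by nlinarith [sq_nonneg y])]
      ring
  -- sum bound
  have hCy : C * y^2 / 2 ≤ 512/529 := by
    have hexp : C * y^2 / 2 = ∑ j ∈ Finset.range n,
        ((2:ℝ)^j)⁻¹ * ((1024/529) * (|x - b j| * y^2) / ((x - b j)^2 + a^2)^2) := by
      rw [hC, Finset.sum_mul, Finset.sum_div]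
      refine Finset.sum_congr rfl fun j _ => ?_
      ring
    rw [hexp]
    have hterm : ∀ j ∈ Finset.range n,
        ((2:ℝ)^j)⁻¹ * ((1024/529) * (|x - b j| * y^2) / ((x - b j)^2 + a^2)^2)
          ≤ ((2:ℝ)^j)⁻¹ * (256/529) := by
      intro j hj
      rw [Finset.mem_range] at hj
      apply mul_le_mul_of_nonneg_left _ (by positivity)
      have h2 := (hgeom j hj).2
      have hRpos : (0:ℝ) < ((x - b j)^2 + a^2)^2 := by positivity
      rw [div_le_iff₀ hRpos]
      nlinarith
    refine le_trans (Finset.sum_le_sum hterm) ?_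
    rw [← Finset.sum_mul]
    have hgs : ∑ j ∈ Finset.range n, ((2:ℝ)^j)⁻¹ ≤ 2 := by
      have he : ∀ j : ℕ, ((2:ℝ)^j)⁻¹ = (1/2:ℝ)^j := by
        intro j; rw [one_div, inv_pow]
      simp only [he]
      rw [geom_sum_eq (by norm_num : (1/2:ℝ) ≠ 1)]
      have : (0:ℝ) ≤ (1/2:ℝ)^n := by positivity
      have h1 : ((1/2:ℝ)^n - 1)/((1/2:ℝ) - 1) = 2 - 2*(1/2:ℝ)^n := by ring
      rw [h1]; linarith
    nlinarith
  -- conclusion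
  have hzz : ((x:ℂ) + (y:ℂ)*Complex.I) = z := by
    rw [hx, hyy]; exact Complex.re_add_im z
  have hfy : f y = (hFun n b a z).re := by
    simp only [hf]; rw [hzz]
  have hf0 : f 0 = (hFun n b a ((x:ℂ))).re := by
    rw [hf]
    norm_num
  have hfin : |(hFun n b a z).re - (hFun n b a ((x:ℂ))).re| = |∫ t in (0:ℝ)..y, φ t| := by
    rw [hFTC, hfy, hf0]
  rw [hfin]
  calc |∫ t in (0:ℝ)..y, φ t| ≤ |∫ t in (0:ℝ)..y, g t| := hI1
  _ = C * y^2/2 := hI2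
  _ ≤ 512/529 := hCy

lemma d1_lemma (h : ℂ) :
    ((1/2 : ℂ) * (Complex.exp (-Complex.I * h) - Complex.exp (Complex.I * h)) * Complex.I).re
      = Real.sin h.re * Real.cosh h.im := by
  simp [Complex.mul_re, Complex.mul_im, Complex.sub_re, Complex.sub_im, Complex.exp_re,
    Complex.exp_im, Complex.neg_re, Complex.neg_im, Complex.I_re, Complex.I_im,
    Complex.one_re, Complex.one_im, Real.cosh_eq, Real.exp_neg]
  ring

lemma d2_lemma (h : ℂ) :
    ((Complex.I/2) * (Complex.exp (-Complex.I * h) + Complex.exp (Complex.I * h)) * Complex.I).re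
      = -(Real.cos h.re * Real.cosh h.im) := by
  simp [Complex.mul_re, Complex.mul_im, Complex.add_re, Complex.add_im, Complex.exp_re,
    Complex.exp_im, Complex.neg_re, Complex.neg_im, Complex.I_re, Complex.I_im,
    Complex.one_re, Complex.one_im, Real.cosh_eq, Real.exp_neg]
  ring

lemma hasDerivAt_vec3 {f₁ f₂ f₃ : ℝ → ℝ} {d₁ d₂ d₃ : ℝ} {t : ℝ}
    (h₁ : HasDerivAt f₁ d₁ t) (h₂ : HasDerivAt f₂ d₂ t) (h₃ : HasDerivAt f₃ d₃ t) :
    HasDerivAt (fun s => vec3 (f₁ s) (f₂ s) (f₃ s)) (vec3 d₁ d₂ d₃) t := by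
  have hpi : HasDerivAt (fun s => (![f₁ s, f₂ s, f₃ s] : Fin 3 → ℝ)) ![d₁,d₂,d₃] t := by
    rw [hasDerivAt_pi]
    intro i
    fin_cases i
    · simpa using h₁
    · simpa using h₂
    · simpa using h₃
  have hL := (((PiLp.continuousLinearEquiv 2 ℝ (fun _ : Fin 3 => ℝ)).symm :
      (Fin 3 → ℝ) →L[ℝ] EuclideanSpace ℝ (Fin 3)).hasFDerivAt).comp_hasDerivAt t hpi
  exact hL

lemma inner_vec3 (p q r p' q' r' : ℝ) :
    (inner ℝ (vec3 p q r) (vec3 p' q' r') : ℝ) = p * p' + q * q' + r * r' := by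
  simp [vec3, PiLp.inner_apply, Fin.sum_univ_three, RCLike.inner_apply, mul_comm]

/-- For `(x,y) ∈ Ω_a`, writing `γ_{x,a}(y) = F_a(x,y)`, the `y`-partials
satisfy `⟨γ'_{x,a}(y), γ'_{x,a}(0)⟩ = cosh(v_a(x,y)) cos(u_a(x,y) - u_a(x,0))
> cosh(v_a(x,y))/2 > 0`. Here `F_a` is the Weierstrass immersion encoded via primitives
`G₁, G₂, G₃` on an open set `U ⊇ Ω_a`. -/
theorem stmt11 (n : ℕ) (hn : 1 ≤ n) (b : ℕ → ℝ)
    (hb0 : -(1/2) < b 0) (hbn : b (n - 1) < 1/2)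
    (hbmono : ∀ j, j + 1 < n → b j < b (j + 1))
    (a : ℝ) (ha : a ∈ Set.Ioo (0 : ℝ) (1/2))
    (U : Set ℂ) (hUo : IsOpen U) (hUΩ : OmegaA n b a ⊆ U)
    (G₁ G₂ G₃ : ℂ → ℂ)
    (hG₁ : ∀ z ∈ U, HasDerivAt G₁
      ((1/2) * (Complex.exp (-Complex.I * hFun n b a z)
        - Complex.exp (Complex.I * hFun n b a z))) z)
    (hG₂ : ∀ z ∈ U, HasDerivAt G₂
      ((Complex.I/2) * (Complex.exp (-Complex.I * hFun n b a z)
        + Complex.exp (Complex.I * hFun n b a z))) z)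
    (hG₃ : ∀ z ∈ U, HasDerivAt G₃ 1 z)
    (hG₁0 : G₁ 0 = 0) (hG₂0 : G₂ 0 = 0) (hG₃0 : G₃ 0 = 0)
    (F : ℂ → EuclideanSpace ℝ (Fin 3))
    (hF : ∀ z ∈ U, F z = vec3 (G₁ z).re (G₂ z).re (G₃ z).re)
    : ∀ z ∈ OmegaA n b a, ∃ Dy D0 : EuclideanSpace ℝ (Fin 3),
      HasDerivAt (fun y : ℝ => F ((z.re : ℂ) + (y : ℂ) * Complex.I)) Dy z.im ∧
      HasDerivAt (fun y : ℝ => F ((z.re : ℂ) + (y : ℂ) * Complex.I)) D0 0 ∧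
      ⟪Dy, D0⟫ = Real.cosh ((hFun n b a z).im)
        * Real.cos ((hFun n b a z).re - (hFun n b a ((z.re : ℂ))).re) ∧
      ⟪Dy, D0⟫ > Real.cosh ((hFun n b a z).im) / 2 ∧
      Real.cosh ((hFun n b a z).im) / 2 > 0 := by
  intro z hz
  have hz' := hz
  have hzU : z ∈ U := hUΩ hz
  obtain ⟨ha0, ha2⟩ := ha
  have hx0 : ((z.re:ℝ):ℂ) ∈ OmegaA n b a := by
    rw [OmegaA, Set.mem_iUnion₂] at hz ⊢
    obtain ⟨j₀, hjf, h1, h2, h3⟩ := hz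
    refine ⟨j₀, hjf, ?_, ?_, ?_⟩
    · simpa using h1
    · simpa using h2
    · simp only [Complex.ofReal_re, Complex.ofReal_im, abs_zero]
      positivity
  have hxU : ((z.re:ℝ):ℂ) ∈ U := hUΩ hx0
  set x := z.re with hx
  set y := z.im with hyy
  have key : ∀ t₀ : ℝ, ((x:ℂ) + (t₀:ℂ)*Complex.I) ∈ U →
      HasDerivAt (fun t : ℝ => F ((x:ℂ) + (t:ℂ)*Complex.I))
        (vec3 (Real.sin ((hFun n b a ((x:ℂ)+(t₀:ℂ)*Complex.I)).re)
            * Real.cosh ((hFun n b a ((x:ℂ)+(t₀:ℂ)*Complex.I)).im))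
          (-(Real.cos ((hFun n b a ((x:ℂ)+(t₀:ℂ)*Complex.I)).re)
            * Real.cosh ((hFun n b a ((x:ℂ)+(t₀:ℂ)*Complex.I)).im))) 0) t₀ := by
    intro t₀ hw
    have hin : HasDerivAt (fun w : ℂ => (x:ℂ) + w * Complex.I) Complex.I ((t₀:ℂ)) := by
      simpa using ((hasDerivAt_id ((t₀:ℂ))).mul_const Complex.I).const_add ((x:ℂ))
    set w₀ : ℂ := (x:ℂ) + (t₀:ℂ)*Complex.I with hw₀
    have h1 := ((hG₁ w₀ hw).comp ((t₀:ℂ)) hin).real_of_complex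
    have h2 := ((hG₂ w₀ hw).comp ((t₀:ℂ)) hin).real_of_complex
    have h3 := ((hG₃ w₀ hw).comp ((t₀:ℂ)) hin).real_of_complex
    rw [d1_lemma (hFun n b a w₀)] at h1
    rw [d2_lemma (hFun n b a w₀)] at h2
    have h3' : HasDerivAt (fun s : ℝ => (G₃ ((x:ℂ) + (s:ℂ)*Complex.I)).re) 0 t₀ := by
      simpa using h3
    have hvec := hasDerivAt_vec3 h1 h2 h3'
    refine hvec.congr_of_eventuallyEq ?_
    have hcont : Continuous fun t : ℝ => (x:ℂ) + (t:ℂ)*Complex.I :=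
      continuous_const.add (Complex.continuous_ofReal.mul continuous_const)
    have hev := (hcont.continuousAt (x := t₀)).preimage_mem_nhds (hUo.mem_nhds hw)
    filter_upwards [hev] with t ht
    exact hF _ ht
  have hzz : ((x:ℂ) + (y:ℂ)*Complex.I) = z := by rw [hx, hyy]; exact Complex.re_add_im z
  have h0z : ((x:ℂ) + ((0:ℝ):ℂ)*Complex.I) = (x:ℂ) := by simp
  have hDy := key y (by rw [hzz]; exact hzU)
  have hD0 := key 0 (by rw [h0z]; exact hxU)
  rw [hzz] at hDy
  rw [h0z] at hD0
  have hv0 : (hFun n b a ((x:ℂ))).im = 0 := hFun_ofReal_im n b a x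
  rw [hv0, Real.cosh_zero] at hD0
  refine ⟨_, _, hDy, hD0, ?_, ?_, ?_⟩
  · rw [inner_vec3, Real.cos_sub]
    ring
  · rw [inner_vec3]
    have hest := estimate n b hb0 hbn hbmono ⟨ha0, ha2⟩ hz'
    set u := (hFun n b a z).re
    set v := (hFun n b a z).im
    set u0 := (hFun n b a ((x:ℂ))).re
    have hsq : (u - u0)^2 ≤ (512/529)^2 := by
      nlinarith [abs_nonneg (u - u0), _root_.sq_abs (u - u0)]
    have hcos := Real.one_sub_sq_div_two_le_cos (x := u - u0)
    have hcos2 : Real.cos (u - u0) > 1/2 := by nlinarith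
    have hcoshpos : 0 < Real.cosh v := Real.cosh_pos v
    have heq : Real.sin u * Real.cosh v * (Real.sin u0 * 1)
        + -(Real.cos u * Real.cosh v) * (-(Real.cos u0 * 1)) + 0 * 0
        = Real.cosh v * Real.cos (u - u0) := by
      rw [Real.cos_sub]; ring
    rw [heq]
    nlinarith
  · have hcoshpos : 0 < Real.cosh ((hFun n b a z).im) := Real.cosh_pos _
    linarith
end

section
/- For every a ∈ (0,1/2), every k ∈ {1,…,n}, and every (x,y) ∈ Ω_{a,k}, one has ∂_y v_a(x,y) ≥ (12/25) · Σ_{j=1}^{n} 2^{1−j}/((x−b_j)² + a²) > (3/8) · Σ_{j=1}^{n} 2^{1−j}/((x−b_j)² + a²), where v_a = Im h_a. -/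
open Complex Real Set Finset Filter RealInnerProductSpace

/-- Derivative of the principal branch of the complex arctangent, away from the
branch cuts. -/
lemma arctan_hasDerivAt' {w : ℂ} (h : w.re ≠ 0 ∨ w.re^2 + w.im^2 < 1) :
    HasDerivAt Complex.arctan (1/(1+w^2)) w := by
  have h1 : (1 : ℂ) - w * I ≠ 0 := by
    intro hc
    rw [Complex.ext_iff] at hc
    simp [Complex.sub_re, Complex.sub_im, Complex.mul_re, Complex.mul_im] at hc
    rcases h with h | h
    · exact h hc.2
    · rw [hc.2] at h; nlinarith [hc.1, h]
  have h2 : (1 : ℂ) + w * I ≠ 0 := by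
    intro hc
    rw [Complex.ext_iff] at hc
    simp [Complex.add_re, Complex.add_im, Complex.mul_re, Complex.mul_im] at hc
    rcases h with h | h
    · exact h hc.2
    · rw [hc.2] at h; nlinarith [hc.1, h]
  have hns : Complex.normSq (1 - w * I) > 0 := by
    simpa [Complex.normSq_pos] using h1
  have hgim : ((1 + w * I) / (1 - w * I)).im = 2 * w.re / Complex.normSq (1 - w * I) := by
    rw [Complex.div_im]
    simp [Complex.add_re, Complex.add_im, Complex.sub_re, Complex.sub_im,
      Complex.mul_re, Complex.mul_im]
    ring
  have hgre : ((1 + w * I) / (1 - w * I)).re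
      = (1 - w.re^2 - w.im^2) / Complex.normSq (1 - w * I) := by
    rw [Complex.div_re]
    simp [Complex.add_re, Complex.add_im, Complex.sub_re, Complex.sub_im,
      Complex.mul_re, Complex.mul_im]
    ring
  have hslit : ((1 + w * I) / (1 - w * I)) ∈ Complex.slitPlane := by
    rw [Complex.mem_slitPlane_iff]
    rcases h with h | h
    · right; rw [hgim]; positivity
    · left; rw [hgre]; exact div_pos (by nlinarith) hns
  have hnum : HasDerivAt (fun z : ℂ => 1 + z * I) I w := by
    simpa using ((hasDerivAt_id w).mul_const I).const_add (1 : ℂ)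
  have hden : HasDerivAt (fun z : ℂ => 1 - z * I) (-I) w := by
    simpa using ((hasDerivAt_id w).mul_const I).const_sub (1 : ℂ)
  have hq : HasDerivAt (fun z : ℂ => (1 + z * I) / (1 - z * I))
      ((I * (1 - w * I) - (1 + w * I) * (-I)) / (1 - w * I)^2) w := hnum.div hden h1
  have hlog := (Complex.hasDerivAt_log hslit).comp w hq
  have hw2 : (1 : ℂ) + w^2 = (1 + w*I) * (1 - w*I) := by
    linear_combination (w^2) * Complex.I_sq
  have hw2' : (1 : ℂ) + w^2 ≠ 0 := by rw [hw2]; exact mul_ne_zero h2 h1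
  have hval : -I / 2 * (((1 + w * I) / (1 - w * I))⁻¹ *
      ((I * (1 - w * I) - (1 + w * I) * -I) / (1 - w * I) ^ 2)) = 1/(1+w^2) := by
    rw [hw2, inv_div]
    field_simp
    rw [← neg_div]
    congr 1
    linear_combination (-2) * Complex.I_sq
  have final := hlog.const_mul (-I / 2 : ℂ)
  rw [hval] at final
  exact final

/-- The key polynomial inequality behind the `12/25` bound. -/
lemma key_ineq' (r ε a2 : ℝ) (hε : 0 ≤ ε) (ha2 : 0 ≤ a2) (h1 : a2 ≤ r)
    (h2 : r ≤ 1 + a2) (ha' : a2 ≤ 1/4) (h3 : 16*ε^2 ≤ r^3) (hr : 0 < r) :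
    13*r^2 - 49*r*ε - 12*ε^2 + 48*a2*ε ≥ 0 := by
  set q := Real.sqrt r with hq
  have hq0 : 0 < q := Real.sqrt_pos.mpr hr
  have hqr : q^2 = r := Real.sq_sqrt hr.le
  have hq54 : q^2 ≤ 5/4 := by rw [hqr]; linarith
  have hr3 : r^3 = q^6 := by rw [← hqr]; ring
  have hεq : 4*ε ≤ q^3 := by
    by_contra hcon
    push_neg at hcon
    have h6 : q^6 < 16*ε^2 := by nlinarith [pow_pos hq0 3]
    linarith [hr3 ▸ h3]
  rcases le_or_gt q 1 with hcase | hcase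
  · have h4 : q^3 ≤ q^2 := by nlinarith
    have h5 : 0 ≤ q^2 - 4*ε := by linarith
    nlinarith [mul_nonneg h5 (by nlinarith : (0:ℝ) ≤ 13*q^2 + 3*ε), mul_nonneg ha2 hε]
  · have hra : r - 1 ≤ a2 := by linarith
    have hm : 0 ≤ q^3 - 4*ε := by linarith
    have hq1 : (1:ℝ) ≤ q := hcase.le
    have hqb : q ≤ 5/4 := by nlinarith
    nlinarith [mul_nonneg hm hε, mul_nonneg (mul_nonneg hm hm) hq0.le,
      mul_nonneg (sub_nonneg.2 hq1) (mul_nonneg hm hε),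
      mul_nonneg (sub_nonneg.2 hq1) (pow_nonneg hq0.le 3),
      mul_nonneg (mul_nonneg (sub_nonneg.2 hq1) (pow_nonneg hq0.le 3))
        (by linarith : (0:ℝ) ≤ 48 - 4*q - 3*q^2),
      mul_nonneg (sub_nonneg.2 hε) hm]

lemma eps_lt' (u y a s : ℝ) (ha : 0 < a) (ha12 : a ≤ 1/2)
    (hs1 : a^2 ≤ s) (hs2 : s ≤ u^2 + a^2) (hu : u^2 ≤ 1) (hy : 16*(y^2)^2 ≤ s^3) :
    y^2 < u^2 + a^2 := by
  set r := u^2 + a^2 with hrdef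
  set ε := y^2 with hedef
  have ha2 : (0:ℝ) < a^2 := by positivity
  have hr : 0 < r := by positivity
  have hs0 : 0 ≤ s := le_trans ha2.le hs1
  have hsr : s^3 ≤ r^3 := pow_le_pow_left₀ hs0 hs2 3
  have h3 : 16*ε^2 ≤ r^3 := le_trans hy hsr
  by_contra hc
  push_neg at hc
  have h16 : r*r ≤ ε*ε := mul_le_mul hc hc hr.le (le_trans hr.le hc)
  have hr54 : r ≤ 5/4 := by nlinarith
  nlinarith [mul_pos hr hr, mul_le_mul_of_nonneg_right hr54 (mul_nonneg hr.le hr.le)]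

/-- The per-term real-part estimate. -/
lemma term_bound' (u y a s : ℝ) (ha : 0 < a) (ha12 : a ≤ 1/2)
    (hs1 : a^2 ≤ s) (hs2 : s ≤ u^2 + a^2) (hu : u^2 ≤ 1) (hy : 16*(y^2)^2 ≤ s^3) :
    (12/25) / (u^2 + a^2) ≤ (u^2 - y^2 + a^2) / ((u^2 - y^2 + a^2)^2 + (2*u*y)^2) := by
  set r := u^2 + a^2 with hrdef
  set ε := y^2 with hedef
  have ha2 : (0:ℝ) < a^2 := by positivity
  have hr : 0 < r := by positivity
  have hs0 : 0 ≤ s := le_trans ha2.le hs1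
  have hsr : s^3 ≤ r^3 := pow_le_pow_left₀ hs0 hs2 3
  have h3 : 16*ε^2 ≤ r^3 := le_trans hy hsr
  have key := key_ineq' r ε (a^2) (sq_nonneg y) ha2.le (by nlinarith) (by nlinarith)
    (by nlinarith) h3 hr
  have hεr : ε < r := eps_lt' u y a s ha ha12 hs1 hs2 hu hy
  have hden : 0 < (u^2 - y^2 + a^2)^2 + (2*u*y)^2 := by
    have heq : u^2 - y^2 + a^2 = r - ε := by ring
    rw [heq]
    have h2 : 0 < (r - ε)^2 := pow_pos (by linarith) 2
    nlinarith [sq_nonneg (2*u*y)]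
  rw [div_le_div_iff₀ hr hden]
  nlinarith [key]

lemma im_helper (c : ℝ) (Dz : ℂ) :
    (((c:ℝ):ℂ) * (I * Dz⁻¹)).im = c * (Dz.re / Complex.normSq Dz) := by
  simp [Complex.mul_im, Complex.inv_re, Complex.inv_im, Complex.mul_re]

set_option maxHeartbeats 1000000 in
/-- On `Ω_{a,k}`, the partial derivative `∂_y v_a(x,y)` (where `v_a = Im h_a`)
satisfies `∂_y v_a(x,y) ≥ (12/25) Σ_j 2^{1-j}/((x-b_j)²+a²) > (3/8) Σ_j 2^{1-j}/((x-b_j)²+a²)`. -/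
theorem stmt13 (n : ℕ) (hn : 1 ≤ n) (b : ℕ → ℝ)
    (hb0 : -(1/2) < b 0) (hbn : b (n - 1) < 1/2)
    (hbmono : ∀ j, j + 1 < n → b j < b (j + 1))
    (a : ℝ) (ha : a ∈ Set.Ioo (0 : ℝ) (1/2))
    (k : ℕ) (hk : k < n) (z : ℂ) (hz : z ∈ OmegaJ n b a k) :
    ∃ d : ℝ,
      HasDerivAt (fun y : ℝ => (hFun n b a ((z.re : ℂ) + (y : ℂ) * Complex.I)).im) d z.im ∧
      d ≥ (12/25) * ∑ j ∈ Finset.range n, 1 / (2 : ℝ) ^ j / ((z.re - b j) ^ 2 + a ^ 2) ∧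
      (12/25) * ∑ j ∈ Finset.range n, 1 / (2 : ℝ) ^ j / ((z.re - b j) ^ 2 + a ^ 2)
        > (3/8) * ∑ j ∈ Finset.range n, 1 / (2 : ℝ) ^ j / ((z.re - b j) ^ 2 + a ^ 2) := by
  obtain ⟨ha0, ha12⟩ := ha
  obtain ⟨hxl, hxr, hyb⟩ := hz
  set x := z.re with hxdef
  set y := z.im with hydef
  have ha12' : a ≤ 1/2 := ha12.le
  -- monotonicity of b
  have hble : ∀ i j, i ≤ j → j < n → b i ≤ b j := by
    intro i j hij hjn
    induction j with
    | zero => interval_cases i; exact le_refl _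
    | succ m ih =>
      rcases eq_or_lt_of_le hij with rfl | hlt
      · exact le_refl _
      · exact le_trans (ih (by omega) (by omega)) (hbmono m (by omega)).le
  have hbub : ∀ j, j < n → b j < 1/2 := fun j hj =>
    lt_of_le_of_lt (hble j (n-1) (by omega) (by omega)) hbn
  have hblb : ∀ j, j < n → -(1/2) < b j := fun j hj =>
    lt_of_lt_of_le hb0 (hble 0 j (by omega) hj)
  -- bounds on x
  have hxlb : -(1/2) ≤ x := by
    by_cases hk0 : k = 0
    · rw [leftEnd, if_pos hk0] at hxl; exact hxl
    · rw [leftEnd, if_neg hk0] at hxl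
      have h1 := hblb (k-1) (by omega)
      have h2 := hblb k hk
      linarith
  have hxub : x ≤ 1/2 := by
    by_cases hkn : k = n - 1
    · rw [rightEnd, if_pos hkn] at hxr; exact hxr
    · rw [rightEnd, if_neg hkn] at hxr
      have h1 := hbub k hk
      have h2 := hbub (k+1) (by omega)
      linarith
  -- min property
  have hmin : ∀ j, j < n → (x - b k)^2 ≤ (x - b j)^2 := by
    intro j hj
    rcases lt_trichotomy j k with hlt | rfl | hgt
    · have hk0 : k ≠ 0 := by omega
      rw [leftEnd, if_neg hk0] at hxl
      have h1 : b j ≤ b (k-1) := hble j (k-1) (by omega) (by omega)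
      have h2 : b (k-1) ≤ b k := hble (k-1) k (by omega) hk
      nlinarith
    · exact le_refl _
    · have hkn : k ≠ n - 1 := by omega
      rw [rightEnd, if_neg hkn] at hxr
      have h1 : b (k+1) ≤ b j := hble (k+1) j (by omega) hj
      have h2 : b k ≤ b (k+1) := (hbmono k (by omega)).le
      nlinarith
  -- bound u^2 ≤ 1 for each j
  have husq : ∀ j, j < n → (x - b j)^2 ≤ 1 := by
    intro j hj
    have h1 := hblb j hj
    have h2 := hbub j hj
    nlinarith
  -- s and its properties
  set s := (x - b k)^2 + a^2 with hsdef
  have hs0 : (0:ℝ) < s := by positivity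
  have hsa : a^2 ≤ s := by nlinarith [sq_nonneg (x - b k)]
  have hy16 : 16*(y^2)^2 ≤ s^3 := by
    have hs34 : (s ^ ((3:ℝ)/4))^(4:ℕ) = s^(3:ℕ) := by
      rw [← Real.rpow_natCast (s ^ ((3:ℝ)/4)) 4, ← Real.rpow_mul hs0.le,
        show ((3:ℝ)/4*(4:ℕ)) = ((3:ℕ):ℝ) by norm_num, Real.rpow_natCast]
    have h24 : (2*|y|)^(4:ℕ) ≤ (s ^ ((3:ℝ)/4))^(4:ℕ) :=
      pow_le_pow_left₀ (by positivity) (by linarith) 4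
    calc 16*(y^2)^2 = (2*|y|)^(4:ℕ) := by
          rw [show (2*|y|)^4 = 16*(|y|^2)^2 by ring, _root_.sq_abs]
      _ ≤ (s ^ ((3:ℝ)/4))^(4:ℕ) := h24
      _ = s^3 := hs34
  -- complex setup
  have haC : (a:ℂ) ≠ 0 := by exact_mod_cast ha0.ne'
  have hzb : ∀ j : ℕ, (x:ℂ) + y*I - b j = ((x - b j : ℝ):ℂ) + (y:ℂ)*I := by
    intro j; push_cast; ring
  set D : ℕ → ℂ := fun j => ((x:ℂ) + y*I - (b j : ℂ))^2 + (a:ℂ)^2 with hDdef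
  have hDre : ∀ j : ℕ, (D j).re = (x - b j)^2 - y^2 + a^2 := by
    intro j
    show (((x:ℂ) + y*I - (b j : ℂ))^2 + (a:ℂ)^2).re = _
    rw [hzb j]
    simp [pow_two, Complex.mul_re, Complex.mul_im, Complex.add_re, Complex.add_im]
    try ring
  have hDim : ∀ j : ℕ, (D j).im = 2*(x - b j)*y := by
    intro j
    show (((x:ℂ) + y*I - (b j : ℂ))^2 + (a:ℂ)^2).im = _
    rw [hzb j]
    simp [pow_two, Complex.mul_re, Complex.mul_im, Complex.add_re, Complex.add_im]
    try ring
  have hDnsq : ∀ j : ℕ, Complex.normSq (D j)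
      = ((x - b j)^2 - y^2 + a^2)^2 + (2*(x - b j)*y)^2 := by
    intro j
    rw [Complex.normSq_apply, hDre j, hDim j]
    ring
  have hsler : ∀ j, j < n → s ≤ (x - b j)^2 + a^2 := by
    intro j hj
    have := hmin j hj
    rw [hsdef]; linarith
  have hDrepos : ∀ j, j < n → 0 < (x - b j)^2 - y^2 + a^2 := by
    intro j hj
    have := eps_lt' (x - b j) y a s ha0 ha12' hsa (hsler j hj) (husq j hj) hy16
    linarith
  have hDne : ∀ j, j < n → D j ≠ 0 := by
    intro j hj hcon
    have h0 := congrArg Complex.re hcon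
    rw [hDre j] at h0
    simp at h0
    linarith [hDrepos j hj]
  -- slit-plane style condition for the arctan derivative
  set w : ℕ → ℂ := fun j => ((x:ℂ) + y*I - (b j : ℂ))/(a:ℂ) with hwdef
  have hwre : ∀ j : ℕ, (w j).re = (x - b j)/a := by
    intro j
    show (((x:ℂ) + y*I - (b j : ℂ))/(a:ℂ)).re = _
    rw [hzb j]; simp
  have hwim : ∀ j : ℕ, (w j).im = y/a := by
    intro j
    show (((x:ℂ) + y*I - (b j : ℂ))/(a:ℂ)).im = _
    rw [hzb j]; simp
  have hwcond : ∀ j, j < n → (w j).re ≠ 0 ∨ (w j).re^2 + (w j).im^2 < 1 := by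
    intro j hj
    by_cases hu : x - b j = 0
    · right
      have hsa2 : s ≤ a^2 := by
        have h := hsler j hj
        rw [hu] at h
        simpa using h
      have hy2 : y^2 < a^2 := by
        by_contra hc
        push_neg at hc
        have h1 : 16*(a^2)^2 ≤ 16*(y^2)^2 :=
          by nlinarith [mul_le_mul hc hc (sq_nonneg a) (sq_nonneg y)]
        have h2 : s^3 ≤ (a^2)^3 := pow_le_pow_left₀ (by positivity) hsa2 3
        have ha4 : (0:ℝ) < a^4 := by positivity
        have haq : a^2 ≤ 1/4 := by nlinarith
        nlinarith [hy16, mul_le_mul_of_nonneg_left haq (le_of_lt ha4)]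
      rw [hwre j, hwim j, hu]
      rw [div_pow, div_pow]
      have ha2 : (0:ℝ) < a^2 := by positivity
      rw [← add_div, div_lt_one ha2]
      simpa using hy2
    · left
      rw [hwre j]
      exact div_ne_zero hu ha0.ne'
  -- the derivative
  have hidy : HasDerivAt (fun t:ℝ => (t:ℂ)) 1 y := by simpa using (hasDerivAt_id y).ofReal_comp
  have hGC : HasDerivAt (fun t:ℝ => hFun n b a ((x:ℂ) + t*I))
      (∑ j ∈ Finset.range n, (1/((2:ℂ)^j*(a:ℂ))) * ((I/(a:ℂ)) * (1/(1 + (w j)^2)))) y := by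
    unfold hFun
    apply HasDerivAt.fun_sum
    intro j hj
    have hinner : HasDerivAt (fun t:ℝ => (((x:ℂ)+(t:ℂ)*I) - (b j:ℂ))/(a:ℂ)) (I/(a:ℂ)) y := by
      have h1 := (((hidy.mul_const I).const_add (x:ℂ)).sub_const ((b j:ℂ))).div_const (a:ℂ)
      simpa using h1
    have harc := arctan_hasDerivAt' (hwcond j (Finset.mem_range.mp hj))
    have hcomp := HasDerivAt.scomp y harc hinner
    have hres := hcomp.const_mul (1/((2:ℂ)^j*(a:ℂ)))
    simpa [Function.comp, smul_eq_mul] using hres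
  have hGim := (Complex.imCLM.hasFDerivAt.comp_hasDerivAt y hGC)
  refine ⟨(∑ j ∈ Finset.range n, (1/((2:ℂ)^j*(a:ℂ))) * ((I/(a:ℂ)) * (1/(1 + (w j)^2)))).im,
    ?_, ?_, ?_⟩
  · exact hGim
  · -- lower bound on the derivative
    have hterm : ∀ j ∈ Finset.range n,
        (12/25) * (1/(2:ℝ)^j/((x - b j)^2 + a^2))
          ≤ ((1/((2:ℂ)^j*(a:ℂ))) * ((I/(a:ℂ)) * (1/(1 + (w j)^2)))).im := by
      intro j hj'
      have hj := Finset.mem_range.mp hj'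
      have hDq : 1 + (w j)^2 = D j / (a:ℂ)^2 := by
        show (1:ℂ) + (((x:ℂ) + y*I - (b j : ℂ))/(a:ℂ))^2
            = (((x:ℂ) + y*I - (b j : ℂ))^2 + (a:ℂ)^2)/(a:ℂ)^2
        field_simp
        ring
      have hsimp : (1/((2:ℂ)^j*(a:ℂ))) * ((I/(a:ℂ)) * (1/(1 + (w j)^2)))
          = (((1/(2:ℝ)^j : ℝ)):ℂ) * (I * (D j)⁻¹) := by
        rw [hDq]
        have h2j : ((2:ℂ)^j) ≠ 0 := pow_ne_zero j two_ne_zero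
        field_simp [hDne j hj]
        push_cast; rw [mul_one_div_cancel h2j]
      rw [hsimp, im_helper (1/(2:ℝ)^j) (D j), hDre j, hDnsq j]
      have tb := term_bound' (x - b j) y a s ha0 ha12' hsa (hsler j hj) (husq j hj) hy16
      have h2j : (0:ℝ) ≤ 1/(2:ℝ)^j := by positivity
      have step := mul_le_mul_of_nonneg_left tb h2j
      calc (12/25) * (1/(2:ℝ)^j/((x - b j)^2 + a^2))
          = (1/(2:ℝ)^j) * ((12/25) / ((x - b j)^2 + a^2)) := by ring
        _ ≤ (1/(2:ℝ)^j) * (((x - b j)^2 - y^2 + a^2)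
              / (((x - b j)^2 - y^2 + a^2)^2 + (2*(x - b j)*y)^2)) := step
    rw [ge_iff_le, Finset.mul_sum, Complex.im_sum]
    exact Finset.sum_le_sum hterm
  · have hSpos : 0 < ∑ j ∈ Finset.range n, 1/(2:ℝ)^j/((x - b j)^2 + a^2) :=
      Finset.sum_pos (fun j hj => by positivity) ⟨0, Finset.mem_range.mpr (by omega)⟩
    nlinarith [hSpos]
end

section
/- For every a ∈ (0,1/2), every k ∈ {1,…,n}, and every x in the x-range of Ω_{a,k}, setting y_{x,a,k} = ((x−b_k)² + a²)^{3/4}/2, one has for all y with y_{x,a,k}/2 ≤ |y| ≤ y_{x,a,k}: |v_a(x,y)| > ((x−b_k)² + a²)^{−1/4} / (11 · 2^{n−1}), where v_a = Im h_a. -/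
open Complex Real Set Finset Filter RealInnerProductSpace

noncomputable def fIm (u v : ℝ) : ℝ :=
  (1/4) * Real.log (((1+v)^2+u^2)/((1-v)^2+u^2))

lemma fIm_neg (u v : ℝ) : fIm u (-v) = - fIm u v := by
  unfold fIm
  rw [show ((1+ -v)^2+u^2) = ((1-v)^2+u^2) by ring,
      show ((1- -v)^2+u^2) = ((1+v)^2+u^2) by ring,
      show ((1-v)^2+u^2)/((1+v)^2+u^2) = (((1+v)^2+u^2)/((1-v)^2+u^2))⁻¹ by
        rw [inv_div],
      Real.log_inv]
  ring

lemma fIm_nonneg (u v : ℝ) (hv : 0 ≤ v) : 0 ≤ fIm u v := by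
  unfold fIm
  by_cases hA : (1-v)^2+u^2 = 0
  · rw [hA, div_zero, Real.log_zero]; norm_num
  · have hA' : 0 < (1-v)^2+u^2 := lt_of_le_of_ne (by positivity) (Ne.symm hA)
    have h1 : (1:ℝ) ≤ ((1+v)^2+u^2)/((1-v)^2+u^2) := by
      rw [le_div_iff₀ hA']; nlinarith
    have := Real.log_nonneg h1
    linarith

lemma ofReal_mul_im' (r : ℝ) (z : ℂ) : ((r:ℂ) * z).im = r * z.im := by
  simp [Complex.mul_im]

lemma arctan_im_eq (u v : ℝ) (hA : (1-v)^2+u^2 ≠ 0) (hB : (1+v)^2+u^2 ≠ 0) :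
    (Complex.arctan ((u:ℂ) + (v:ℂ) * Complex.I)).im = fIm u v := by
  have hA' : 0 < (1-v)^2+u^2 := lt_of_le_of_ne (by positivity) (Ne.symm hA)
  have hB' : 0 < (1+v)^2+u^2 := lt_of_le_of_ne (by positivity) (Ne.symm hB)
  have e1 : 1 + ((u:ℂ) + (v:ℂ) * Complex.I) * Complex.I
      = ((1-v : ℝ):ℂ) + ((u:ℝ):ℂ) * Complex.I := by
    push_cast; simp [Complex.ext_iff]; ring
  have e2 : 1 - ((u:ℂ) + (v:ℂ) * Complex.I) * Complex.I
      = ((1+v : ℝ):ℂ) + ((-u:ℝ):ℂ) * Complex.I := by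
    push_cast; simp [Complex.ext_iff]
  have habs : ‖((1 + ((u:ℂ) + (v:ℂ) * Complex.I) * Complex.I)
      / (1 - ((u:ℂ) + (v:ℂ) * Complex.I) * Complex.I))‖
      = Real.sqrt ((1-v)^2+u^2) / Real.sqrt ((1+v)^2+u^2) := by
    rw [norm_div, e1, e2, Complex.norm_add_mul_I, Complex.norm_add_mul_I]
    norm_num
  rw [Complex.arctan]
  rw [show (-Complex.I/2 * Complex.log ((1 + ((u:ℂ) + (v:ℂ) * Complex.I) * Complex.I)
      / (1 - ((u:ℂ) + (v:ℂ) * Complex.I) * Complex.I))).im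
      = -(1/2) * (Complex.log ((1 + ((u:ℂ) + (v:ℂ) * Complex.I) * Complex.I)
      / (1 - ((u:ℂ) + (v:ℂ) * Complex.I) * Complex.I))).re by
    simp [Complex.mul_im]; ring]
  rw [Complex.log_re, habs]
  have hsA : Real.sqrt ((1-v)^2+u^2) ≠ 0 := by positivity
  have hsB : Real.sqrt ((1+v)^2+u^2) ≠ 0 := by positivity
  rw [Real.log_div hsA hsB, Real.log_sqrt hA'.le, Real.log_sqrt hB'.le]
  unfold fIm
  rw [Real.log_div (ne_of_gt hB') (ne_of_gt hA')]
  ring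

lemma core_ineq (a s w : ℝ) (ha0 : 0 < a) (hs0 : 0 < s) (hs17 : s ≤ 17/16)
    (hsa : a ≤ s^2) (hw0 : 0 < w) (hw1 : s^3/4 ≤ w) (hw2 : w ≤ s^3/2) :
    s^4 + 2*a*w + w^2 < 11*w*s := by
  have p1 : 2*a*w ≤ 2*s^2*w := by nlinarith
  have p2 : 2*s^2*w ≤ s^5 := by nlinarith [sq_nonneg s, pow_pos hs0 2]
  have p3 : s^5 ≤ (17/16)*s^4 := by nlinarith [pow_pos hs0 4]
  have p4 : w^2 ≤ s^6/4 := by nlinarith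
  have p5 : s^6 ≤ (17/16)^2*s^4 := by nlinarith [pow_pos hs0 4]
  have p6 : 11*(s^4/4) ≤ 11*w*s := by nlinarith [pow_pos hs0 3]
  have p7 : 0 < s^4 := pow_pos hs0 4
  nlinarith

set_option maxHeartbeats 1600000 in
/-- For `x` in the x-range of `Ω_{a,k}` and `y_{x,a,k}/2 ≤ |y| ≤ y_{x,a,k}`,
where `y_{x,a,k} = ((x-b_k)²+a²)^{3/4}/2`, one has
`|v_a(x,y)| > ((x-b_k)²+a²)^{-1/4}/(11·2^{n-1})`, where `v_a = Im h_a`. -/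
theorem stmt14 (n : ℕ) (hn : 1 ≤ n) (b : ℕ → ℝ)
    (hb0 : -(1/2) < b 0) (hbn : b (n - 1) < 1/2)
    (hbmono : ∀ j, j + 1 < n → b j < b (j + 1))
    (a : ℝ) (ha : a ∈ Set.Ioo (0 : ℝ) (1/2))
    (k : ℕ) (hk : k < n) (x : ℝ) (hx1 : leftEnd b k ≤ x) (hx2 : x ≤ rightEnd n b k)
    (y : ℝ)
    (hy1 : ((x - b k) ^ 2 + a ^ 2) ^ ((3 : ℝ)/4) / 2 / 2 ≤ |y|)
    (hy2 : |y| ≤ ((x - b k) ^ 2 + a ^ 2) ^ ((3 : ℝ)/4) / 2) :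
    |(hFun n b a ((x : ℂ) + (y : ℂ) * Complex.I)).im|
      > ((x - b k) ^ 2 + a ^ 2) ^ (-(1/4) : ℝ) / (11 * 2 ^ (n - 1)) := by
  obtain ⟨ha0, ha2⟩ := ha
  -- monotonicity of b
  have hmono : ∀ j, j < n → ∀ i, i ≤ j → b i ≤ b j := by
    intro j
    induction j with
    | zero => intro _ i hi; rw [Nat.le_zero.mp hi]
    | succ m ih =>
      intro hj i hi
      rcases eq_or_lt_of_le hi with rfl | h
      · exact le_rfl
      · have h1 : b i ≤ b m := ih (by omega) i (by omega)
        have h2 : b m < b (m+1) := hbmono m hj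
        linarith
  -- bounds on x and b k
  have hbk1 : -(1/2) < b k := lt_of_lt_of_le hb0 (hmono k hk 0 (Nat.zero_le k))
  have hbk2 : b k < 1/2 := lt_of_le_of_lt (hmono (n-1) (by omega) k (by omega)) hbn
  have hxlo : -(1/2) ≤ x := by
    refine le_trans ?_ hx1
    unfold leftEnd
    by_cases hk0 : k = 0
    · simp [hk0]
    · simp only [hk0, if_false]
      have : -(1/2) < b (k-1) := lt_of_lt_of_le hb0 (hmono (k-1) (by omega) 0 (Nat.zero_le _))
      linarith
  have hxhi : x ≤ 1/2 := by
    refine le_trans hx2 ?_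
    unfold rightEnd
    by_cases hkn : k = n - 1
    · simp [hkn]
    · simp only [hkn, if_false]
      have h1 : b k < 1/2 := hbk2
      have h2 : b (k+1) < 1/2 := lt_of_le_of_lt (hmono (n-1) (by omega) (k+1) (by omega)) hbn
      linarith
  -- x vs b j for j ≠ k
  have hlt : ∀ j, j < k → b j < x := by
    intro j hj
    have hk0 : k ≠ 0 := by omega
    have h1 : b j ≤ b (k-1) := hmono (k-1) (by omega) j (by omega)
    have h2 : b (k-1) < b k := by
      have := hbmono (k-1) (by omega)
      rwa [show k - 1 + 1 = k by omega] at this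
    have h3 : leftEnd b k = (b (k-1) + b k)/2 := by unfold leftEnd; simp [hk0]
    rw [h3] at hx1
    linarith
  have hgt : ∀ j, k < j → j < n → x < b j := by
    intro j hj hjn
    have hkn : k ≠ n - 1 := by omega
    have h2 : b k < b (k+1) := hbmono k (by omega)
    have h1 : b (k+1) ≤ b j := hmono j hjn (k+1) (by omega)
    have h3 : rightEnd n b k = (b k + b (k+1))/2 := by unfold rightEnd; simp [hkn]
    rw [h3] at hx2
    linarith
  -- setup s = R^(1/4)
  set R := (x - b k)^2 + a^2 with hRdef
  have hR : 0 < R := by rw [hRdef]; positivity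
  clear_value R
  set s := R ^ ((1:ℝ)/4) with hsdef
  have hs0 : 0 < s := Real.rpow_pos_of_pos hR _
  clear_value s
  have hs4 : s ^ 4 = R := by
    rw [hsdef, ← Real.rpow_natCast (R ^ ((1:ℝ)/4)) 4, ← Real.rpow_mul hR.le]
    norm_num
  have h34 : R ^ ((3:ℝ)/4) = s ^ 3 := by
    rw [hsdef, ← Real.rpow_natCast (R ^ ((1:ℝ)/4)) 3, ← Real.rpow_mul hR.le]
    norm_num
  have hinv : R ^ (-(1/4) : ℝ) = s⁻¹ := by
    rw [hsdef, show (-(1/4) : ℝ) = -((1:ℝ)/4) by norm_num, Real.rpow_neg hR.le]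
  have hR54 : R < 5/4 := by
    rw [hRdef]; nlinarith
  have hs17 : s ≤ 17/16 := by
    by_contra h
    push_neg at h
    have h4 : (17/16:ℝ)^4 < s^4 := by
      apply pow_lt_pow_left₀ h (by norm_num) (by norm_num)
    rw [hs4] at h4
    norm_num at h4
    linarith
  have hsa : a ≤ s^2 := by
    by_contra h
    push_neg at h
    have h1 : s^2 * s^2 < a * a := by
      apply mul_lt_mul' h.le h (by positivity) ha0
    nlinarith
  set w := |y| with hwdef
  clear_value w
  have hw0 : 0 < w := lt_of_lt_of_le (by positivity) hy1
  have hw1 : s^3/4 ≤ w := le_trans (le_of_eq (by rw [h34]; ring)) hy1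
  have hw2 : w ≤ s^3/2 := le_trans hy2 (le_of_eq (by rw [h34]))
  -- nondegeneracy
  have hkey : ∀ j, j < n → x ≠ b j ∨ w < a := by
    intro j hjn
    by_cases hxj : x = b j
    · right
      have hjk : j = k := by
        rcases lt_trichotomy j k with h | h | h
        · exact absurd hxj (ne_of_gt (hlt j h))
        · exact h
        · exact absurd hxj (ne_of_lt (hgt j h hjn))
      subst hjk
      have hRa : R = a^2 := by rw [hRdef, ← hxj]; ring
      have h32 : R ^ ((3:ℝ)/4) = a ^ ((3:ℝ)/2) := by
        rw [hRa, ← Real.rpow_natCast a 2, ← Real.rpow_mul ha0.le]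
        norm_num
      have hlt1 : a ^ ((3:ℝ)/2) < a ^ (1:ℝ) :=
        Real.rpow_lt_rpow_of_exponent_gt ha0 (by linarith) (by norm_num)
      rw [Real.rpow_one] at hlt1
      calc w ≤ R ^ ((3:ℝ)/4)/2 := hy2
        _ = a ^ ((3:ℝ)/2)/2 := by rw [h32]
        _ < a := by linarith
    · left; exact hxj
  have hAB : ∀ j, j < n → ∀ t : ℝ, |t| = w → (1 - t/a)^2 + ((x - b j)/a)^2 ≠ 0 := by
    intro j hjn t ht
    rcases hkey j hjn with h | h
    · have h1 : (x - b j)/a ≠ 0 := div_ne_zero (sub_ne_zero.mpr h) (ne_of_gt ha0)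
      positivity
    · have h1 : |t| < a := by rw [ht]; exact h
      rw [abs_lt] at h1
      have h2 : 0 < 1 - t/a := by
        rw [sub_pos, div_lt_one ha0]; exact h1.2
      positivity
  -- the sum identity
  have him : (hFun n b a ((x : ℂ) + (y : ℂ) * Complex.I)).im
      = ∑ j ∈ Finset.range n, (1/(2^j * a)) * fIm ((x - b j)/a) (y/a) := by
    unfold hFun
    rw [Complex.im_sum]
    refine Finset.sum_congr rfl (fun j hj => ?_)
    have hjn := Finset.mem_range.mp hj
    have harg : ((x:ℂ) + (y:ℂ) * Complex.I - (b j : ℂ))/(a:ℂ)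
        = (((x - b j)/a : ℝ) : ℂ) + (((y/a : ℝ)) : ℂ) * Complex.I := by
      have haC : (a:ℂ) ≠ 0 := by exact_mod_cast ne_of_gt ha0
      field_simp
      push_cast
      field_simp
      ring
    have hcoef : (1/((2:ℂ)^j * (a:ℂ))) = ((1/(2^j*a) : ℝ) : ℂ) := by push_cast; ring
    rw [harg, hcoef, ofReal_mul_im']
    congr 1
    apply arctan_im_eq
    · exact hAB j hjn y (by rw [hwdef])
    · have := hAB j hjn (-y) (by rw [hwdef, abs_neg])
      rw [neg_div, sub_neg_eq_add] at this
      exact this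
  -- |im| = S
  have hterm_nonneg : ∀ j ∈ Finset.range n, 0 ≤ (1/(2^j * a)) * fIm ((x - b j)/a) (w/a) :=
    fun j _ => mul_nonneg (by positivity) (fIm_nonneg _ _ (by positivity))
  have hkeyS : |(hFun n b a ((x : ℂ) + (y : ℂ) * Complex.I)).im|
      = ∑ j ∈ Finset.range n, (1/(2^j * a)) * fIm ((x - b j)/a) (w/a) := by
    rcases le_or_gt 0 y with hy | hy
    · have hwy : w = y := hwdef.trans (abs_of_nonneg hy)
      rw [him, hwy]
      exact abs_of_nonneg (Finset.sum_nonneg (fun j _ =>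
        mul_nonneg (by positivity) (fIm_nonneg _ _ (div_nonneg hy ha0.le))))
    · have hwy : w = -y := hwdef.trans (abs_of_neg hy)
      have him2 : (hFun n b a ((x : ℂ) + (y : ℂ) * Complex.I)).im
          = -∑ j ∈ Finset.range n, (1/(2^j * a)) * fIm ((x - b j)/a) (w/a) := by
        rw [him, ← Finset.sum_neg_distrib]
        refine Finset.sum_congr rfl (fun j hj => ?_)
        rw [show y/a = -(w/a) by rw [hwy]; ring, fIm_neg]
        ring
      rw [him2, abs_neg]
      exact abs_of_nonneg (Finset.sum_nonneg hterm_nonneg)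
  have hSlb : (1/(2^k * a)) * fIm ((x - b k)/a) (w/a)
      ≤ ∑ j ∈ Finset.range n, (1/(2^j * a)) * fIm ((x - b j)/a) (w/a) :=
    Finset.single_le_sum hterm_nonneg (Finset.mem_range.mpr hk)
  -- lower bound on fIm at k
  have hAne : (1 - w/a)^2 + ((x - b k)/a)^2 ≠ 0 := hAB k hk w (abs_of_nonneg hw0.le)
  rw [hkeyS, hinv]
  have hD : (x - b k)^2 + (a + w)^2 = s^4 + 2*a*w + w^2 := by
    rw [hs4, hRdef]; ring
  clear him hkeyS hterm_nonneg hAB hkey hgt hlt hmono hbmono hx1 hx2 hy1 hy2 hbn hb0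
  clear hRdef hs4 h34 hinv hsdef hR hR54 hwdef
  set u := (x - b k)/a with hudef
  set A := (1 - w/a)^2 + u^2 with hAdef
  set B := (1 + w/a)^2 + u^2 with hBdef
  clear_value u A B
  have hA' : 0 < A := by
    have h0 : 0 ≤ A := by rw [hAdef]; positivity
    exact lt_of_le_of_ne h0 (Ne.symm hAne)
  have hB' : 0 < B := by
    have h1 : 0 < 1 + w/a := by have := div_pos hw0 ha0; linarith
    rw [hBdef]
    exact add_pos_of_pos_of_nonneg (pow_pos h1 2) (sq_nonneg u)
  have hflb : (w/a)/B ≤ fIm u (w/a) := by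
    have hlog : Real.log (A/B) ≤ A/B - 1 := Real.log_le_sub_one_of_pos (div_pos hA' hB')
    have hneg : Real.log (B/A) = - Real.log (A/B) := by
      rw [← Real.log_inv, inv_div]
    have h1 : 1 - A/B ≤ Real.log (B/A) := by rw [hneg]; linarith
    have h2 : 1 - A/B = 4*((w/a)/B) := by
      rw [hAdef, hBdef]
      field_simp
      ring
    unfold fIm
    rw [show ((1+w/a)^2+u^2) = B from hBdef.symm, show ((1-w/a)^2+u^2) = A from hAdef.symm]
    rw [h2] at h1
    linarith
  -- algebra: a^2 * B = R + stuff
  have haB : a^2 * B = (x - b k)^2 + (a + w)^2 := by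
    rw [hBdef, hudef]; field_simp; ring
  -- core inequality
  have hcore : s^4 + 2*a*w + w^2 < 11*w*s :=
    core_ineq a s w ha0 hs0 hs17 hsa hw0 hw1 hw2
  -- finish
  have hfin : s⁻¹ / (11 * 2^(n-1)) < (1/(2^k * a)) * ((w/a)/B) := by
    have hBpos : (0:ℝ) < B := hB'
    have heq : (1/(2^k * a)) * ((w/a)/B) = w / (2^k * (a^2 * B)) := by
      field_simp
    rw [heq, haB, hD]
    rw [div_lt_div_iff₀ (by positivity) (by positivity)]
    have h2k : (2:ℝ)^k ≤ 2^(n-1) := by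
      apply pow_le_pow_right₀ (by norm_num) (by omega)
    have hDpos : 0 < s^4 + 2*a*w + w^2 := by positivity
    calc s⁻¹ * (2^k * (s^4 + 2*a*w + w^2))
        ≤ s⁻¹ * (2^(n-1) * (s^4 + 2*a*w + w^2)) := by
          apply mul_le_mul_of_nonneg_left (mul_le_mul_of_nonneg_right h2k hDpos.le) (by positivity)
      _ < s⁻¹ * (2^(n-1) * (11*w*s)) := by
          apply mul_lt_mul_of_pos_left (mul_lt_mul_of_pos_left hcore (by positivity)) (by positivity)
      _ = w * (11 * 2^(n-1)) := by
          field_simp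
    
  calc s⁻¹ / (11 * 2^(n-1))
      < (1/(2^k * a)) * ((w/a)/B) := hfin
    _ ≤ (1/(2^k * a)) * fIm u (w/a) := by
        apply mul_le_mul_of_nonneg_left hflb (by positivity)
    _ ≤ ∑ j ∈ Finset.range n, (1/(2^j * a)) * fIm ((x - b j)/a) (w/a) := by
        rw [hudef] at hSlb ⊢; exact hSlb
end

section
/- For every a ∈ (0,1/2), the map F_a : Ω_a → ℝ³ is injective; that is, F_a is an embedding of the domain Ω_a. -/
open Complex Real Set Finset Filter RealInnerProductSpace

lemma myHasDerivAt_arctan {z : ℂ} (h : z.re ≠ 0 ∨ ‖z‖ < 1) :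
    HasDerivAt Complex.arctan (1 / (1 + z ^ 2)) z := by
  have hsq : normSq z = z.re ^ 2 + z.im ^ 2 := by rw [normSq_apply]; ring
  have habs : ‖z‖ < 1 → z.re ^ 2 + z.im ^ 2 < 1 := by
    intro hlt
    have := Complex.sq_norm z
    nlinarith [norm_nonneg z]
  have hw2 : (1 : ℂ) - z * I ≠ 0 := by
    intro h0
    have hre : (1 - z * I).re = 0 := by rw [h0]; simp
    have him : (1 - z * I).im = 0 := by rw [h0]; simp
    simp [Complex.sub_re, Complex.sub_im, Complex.mul_re, Complex.mul_im] at hre him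
    -- hre : 1 + z.im = 0?  check
    rcases h with h | h
    · exact h (by linarith [him])
    · have := habs h; nlinarith [sq_nonneg z.re, sq_nonneg z.im]
  have hw1 : (1 : ℂ) + z * I ≠ 0 := by
    intro h0
    have hre : (1 + z * I).re = 0 := by rw [h0]; simp
    have him : (1 + z * I).im = 0 := by rw [h0]; simp
    simp [Complex.add_re, Complex.add_im, Complex.mul_re, Complex.mul_im] at hre him
    rcases h with h | h
    · exact h (by linarith [him])
    · have := habs h; nlinarith [sq_nonneg z.re, sq_nonneg z.im]
  have hslit : (1 + z * I) / (1 - z * I) ∈ Complex.slitPlane := by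
    rw [Complex.mem_slitPlane_iff]
    rw [Complex.div_re, Complex.div_im]
    have hns : 0 < normSq (1 - z * I) := normSq_pos.mpr hw2
    simp only [Complex.add_re, Complex.add_im, Complex.sub_re, Complex.sub_im, Complex.one_re,
      Complex.one_im, Complex.mul_re, Complex.mul_im, Complex.I_re, Complex.I_im]
    rcases h with h | h
    · right
      intro hc
      rw [div_sub_div_same, div_eq_zero_iff] at hc
      rcases hc with hc | hc
      · apply h; nlinarith
      · exact hns.ne' hc
    · left
      have := habs h
      rw [← add_div]
      apply div_pos ?_ hns
      nlinarith
  have d1 : HasDerivAt (fun z : ℂ => 1 + z * I) I z := by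
    simpa using ((hasDerivAt_id z).mul_const I).const_add 1
  have d2 : HasDerivAt (fun z : ℂ => 1 - z * I) (-I) z := by
    simpa using ((hasDerivAt_id z).mul_const I).const_sub 1
  have dq := d1.div d2 hw2
  have dl := (Complex.hasDerivAt_log hslit).comp z dq
  have final := dl.const_mul (-I/2)
  have harctan : Complex.arctan = fun z : ℂ => -I/2 * Complex.log ((1+z*I)/(1-z*I)) := rfl
  rw [harctan]
  refine HasDerivAt.congr_deriv final (Eq.symm ?_)
  have hz2 : (1:ℂ) + z^2 = (1+z*I)*(1-z*I) := by ring_nf; rw [Complex.I_sq]; ring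
  have h12 : (1:ℂ) + z^2 ≠ 0 := hz2 ▸ mul_ne_zero hw1 hw2
  rw [hz2]
  rw [eq_comm]
  field_simp
  rw [Complex.I_sq]; ring


noncomputable def hDeriv (n : ℕ) (b : ℕ → ℝ) (a : ℝ) (z : ℂ) : ℂ :=
  ∑ j ∈ Finset.range n, 1 / ((2 : ℂ) ^ j * ((z - (b j : ℂ)) ^ 2 + (a : ℂ) ^ 2))

lemma hFun_hasDerivAt (n : ℕ) (b : ℕ → ℝ) {a : ℝ} (ha : 0 < a) {z : ℂ}
    (h : ∀ j, j < n → (z - (b j : ℂ)).re ≠ 0 ∨ ‖z - (b j : ℂ)‖ < a) :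
    HasDerivAt (hFun n b a) (hDeriv n b a z) z := by
  have ha0 : (a : ℂ) ≠ 0 := by exact_mod_cast ha.ne'
  unfold hFun hDeriv
  apply HasDerivAt.fun_sum
  intro j hj
  rw [Finset.mem_range] at hj
  have hcond : ((z - (b j : ℂ)) / (a : ℂ)).re ≠ 0 ∨
      ‖(z - (b j : ℂ)) / (a : ℂ)‖ < 1 := by
    rcases h j hj with h' | h'
    · left
      rw [Complex.div_ofReal_re]
      exact div_ne_zero h' ha.ne'
    · right
      rw [norm_div, Complex.norm_real, Real.norm_eq_abs, abs_of_pos ha, div_lt_one ha]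
      exact h'
  have hg : HasDerivAt (fun z : ℂ => (z - (b j : ℂ)) / (a : ℂ)) (1 / (a : ℂ)) z := by
    simpa using ((hasDerivAt_id z).sub_const ((b j : ℂ))).div_const (a : ℂ)
  have hcomp := ((myHasDerivAt_arctan hcond).comp z hg).const_mul (1 / ((2 : ℂ) ^ j * (a : ℂ)))
  refine HasDerivAt.congr_deriv hcomp (Eq.symm ?_)
  have hne : (z - (b j : ℂ)) ^ 2 + (a : ℂ) ^ 2 ≠ 0 := by
    intro h0
    have hfac : ((z - (b j:ℂ)) - (a:ℂ)*I) * ((z - (b j:ℂ)) + (a:ℂ)*I) = 0 := by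
      rw [← h0]; ring_nf; linear_combination (-(a:ℂ)^2) * Complex.I_sq
    rcases mul_eq_zero.mp hfac with h1 | h1
    · have hz : z - (b j : ℂ) = (a:ℂ)*I := by linear_combination h1
      rcases h j hj with h' | h'
      · exact h' (by rw [hz]; simp)
      · rw [hz] at h'; simp [abs_of_pos ha] at h'
    · have hz : z - (b j : ℂ) = -((a:ℂ)*I) := by linear_combination h1
      rcases h j hj with h' | h'
      · exact h' (by rw [hz]; simp)
      · rw [hz] at h'; simp [abs_of_pos ha] at h'
  have h2j : ((2:ℂ)^j) ≠ 0 := pow_ne_zero _ two_ne_zero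
  have hexp : (1:ℂ) + ((z - (b j:ℂ)) / (a:ℂ))^2 = ((z - (b j:ℂ))^2 + (a:ℂ)^2)/(a:ℂ)^2 := by
    field_simp
    ring
  rw [hexp]
  field_simp


lemma vertC {g : ℂ → ℂ} {d : ℂ} (x t : ℝ) (hg : HasDerivAt g d (↑x + ↑t*I)) :
    HasDerivAt (fun s : ℝ => g (↑x + ↑s*I)) (I*d) t := by
  have h1 : HasDerivAt (fun s : ℝ => (↑x + ↑s*I : ℂ)) I t := by
    simpa using ((Complex.ofRealCLM.hasDerivAt (x := t)).mul_const I).const_add (x : ℂ)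
  have h2 := (hg.hasFDerivAt.restrictScalars ℝ).comp_hasDerivAt t h1
  simp [smul_eq_mul, mul_comm] at h2 ⊢; exact h2

lemma horC {g : ℂ → ℂ} {d : ℂ} (t : ℝ) (hg : HasDerivAt g d (↑t : ℂ)) :
    HasDerivAt (fun s : ℝ => g (↑s)) d t := by
  have h1 : HasDerivAt (fun s : ℝ => (↑s : ℂ)) 1 t := by
    exact (Complex.ofRealCLM.hasDerivAt (x := t))
  have h2 := (hg.hasFDerivAt.restrictScalars ℝ).comp_hasDerivAt t h1
  simp [smul_eq_mul] at h2 ⊢; exact h2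

lemma vertRe {g : ℂ → ℂ} {d : ℂ} (x t : ℝ) (hg : HasDerivAt g d (↑x + ↑t*I)) :
    HasDerivAt (fun s : ℝ => (g (↑x + ↑s*I)).re) ((I*d).re) t := by
  have h2 := (Complex.reCLM.hasFDerivAt).comp_hasDerivAt t (vertC x t hg)
  simp at h2 ⊢; exact h2

lemma const_of_deriv0 {f : ℝ → ℂ} {p q : ℝ} (hpq : p ≤ q)
    (hd : ∀ t ∈ Set.Icc p q, HasDerivAt f 0 t) : f q = f p :=
  constant_of_has_deriv_right_zero
    (fun t ht => (hd t ht).continuousAt.continuousWithinAt)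
    (fun t ht => (hd t (Set.Ico_subset_Icc_self ht)).hasDerivWithinAt)
    q (Set.right_mem_Icc.mpr hpq)

lemma abs_sub_le_of_deriv_bound {f f' : ℝ → ℝ} {Y M : ℝ} (hY : 0 ≤ Y)
    (hd : ∀ t ∈ Set.Icc 0 Y, HasDerivAt f (f' t) t)
    (hb : ∀ t ∈ Set.Icc 0 Y, |f' t| ≤ M * t) :
    |f Y - f 0| ≤ M * Y^2 / 2 := by
  have hB : ∀ s : ℝ, HasDerivAt (fun t => M * t^2 / 2) (M * s) s := by
    intro s
    have := ((hasDerivAt_pow 2 s).const_mul M).div_const 2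
    refine HasDerivAt.congr_deriv this (Eq.symm ?_)
    ring
  have key := image_norm_le_of_norm_deriv_right_le_deriv_boundary
    (f := fun t => f t - f 0) (f' := f') (a := 0) (b := Y)
    (fun t ht => ((hd t ht).continuousAt.continuousWithinAt).sub continuousWithinAt_const)
    (fun t ht => ((hd t (Set.Ico_subset_Icc_self ht)).sub_const (f 0)).hasDerivWithinAt)
    (B := fun t => M * t^2 / 2) (B' := fun t => M * t)
    (by simp) hB
    (fun t ht => by rw [Real.norm_eq_abs]; exact hb t (Set.Ico_subset_Icc_self ht))
  have := key (Set.right_mem_Icc.mpr hY)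
  simpa [Real.norm_eq_abs] using this


lemma im_RQ (R Q : ℝ) : ((R:ℂ) + (Q:ℂ)*I).im = Q := by simp

lemma re_RQ (R Q : ℝ) : ((R:ℂ) + (Q:ℂ)*I).re = R := by simp

lemma term_bound {W : ℂ} (j : ℕ) {L : ℝ} (hL : 0 < L) (hlb : L ≤ Complex.normSq W) :
    |(I * (1 / ((2:ℂ)^j * W))).re| ≤ (1/2:ℝ)^j * (|W.im| / L) := by
  have hWne : W ≠ 0 := by
    intro h0
    rw [h0, map_zero] at hlb
    linarith
  have hq : (1 : ℂ)/((2:ℂ)^j * W) = (((2:ℝ)^j)⁻¹ : ℝ) * W⁻¹ := by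
    rw [one_div, mul_inv]
    push_cast
    ring
  have him : (I * ((1 : ℂ)/((2:ℂ)^j * W))).re = -(((2:ℝ)^j)⁻¹ * (W⁻¹).im) := by
    rw [hq, Complex.mul_re, Complex.I_re, Complex.I_im, Complex.im_ofReal_mul]
    ring
  rw [him, abs_neg, abs_mul, Complex.inv_im]
  have h2j : |((2:ℝ)^j)⁻¹| = (1/2:ℝ)^j := by
    rw [abs_of_pos (by positivity), one_div, inv_pow]
  rw [h2j]
  apply mul_le_mul_of_nonneg_left ?_ (by positivity)
  rw [abs_div, abs_neg, _root_.abs_of_nonneg (Complex.normSq_nonneg W)]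
  exact div_le_div_of_nonneg_left (abs_nonneg _) hL hlb


noncomputable def rFun (b : ℕ → ℝ) (a x : ℝ) (j : ℕ) : ℝ := (x - b j)^2 + a^2

set_option maxHeartbeats 1000000 in
lemma osc (n : ℕ) (b : ℕ → ℝ) {a x : ℝ} (ha : 0 < a) (ha2 : a < 1/2)
    (hbx : ∀ j, j < n → |x - b j| ≤ 1)
    {k : ℕ} (hk : k < n)
    (hcell : ∀ j, j < n → (x - b k)^2 ≤ (x - b j)^2)
    {y : ℝ}
    (hy : y^2 ≤ ((x - b k)^2 + a^2) * Real.sqrt ((x - b k)^2 + a^2) / 4) :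
    |(hFun n b a (↑x + ↑y*I)).re - (hFun n b a (↑x + (0:ℝ)*I)).re| ≤ 50/49 := by
  set r : ℕ → ℝ := rFun b a x with hr
  have hrdef : ∀ j, r j = (x - b j)^2 + a^2 := fun j => rfl
  have hy' : y^2 ≤ r k * Real.sqrt (r k) / 4 := hy
  have hrpos : ∀ j, 0 < r j := fun j => by rw [hrdef]; positivity
  have hrk : ∀ j, j < n → r k ≤ r j := fun j hj => by
    rw [hrdef, hrdef]; have := hcell j hj; linarith
  have hrub : ∀ j, j < n → r j ≤ 5/4 := fun j hj => by
    have h1 := hbx j hj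
    have h2 : (x - b j)^2 ≤ 1 := by
      nlinarith [abs_nonneg (x - b j), _root_.sq_abs (x - b j)]
    rw [hrdef]; nlinarith
  have hsqrt_ub : ∀ j, j < n → Real.sqrt (r j) ≤ 6/5 := fun j hj => by
    rw [show (6/5:ℝ) = Real.sqrt ((6/5)^2) by rw [Real.sqrt_sq]; norm_num]
    exact Real.sqrt_le_sqrt (by nlinarith [hrub j hj])
  have hsqrt_mono : ∀ j, j < n → Real.sqrt (r k) ≤ Real.sqrt (r j) := fun j hj =>
    Real.sqrt_le_sqrt (hrk j hj)
  have hyr : ∀ j, j < n → y^2 ≤ r j * Real.sqrt (r j) / 4 := fun j hj => by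
    refine hy'.trans ?_
    have h1 := hrk j hj
    have h2 := hsqrt_mono j hj
    have h3 := Real.sqrt_nonneg (r k)
    have h4 := (hrpos k).le
    have h5 := mul_le_mul h1 h2 h3 (hrpos j).le
    linarith
  have hy310 : ∀ j, j < n → y^2 ≤ (3/10) * r j := fun j hj => by
    have h1 := hyr j hj
    have h2 := hsqrt_ub j hj
    have h3 := hrpos j
    nlinarith [Real.sqrt_nonneg (r j)]
  have hW : ∀ (t : ℝ) (j : ℕ), (((x:ℂ) + (t:ℂ)*I - ((b j : ℝ):ℂ))^2 + ((a:ℝ):ℂ)^2)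
      = (((x - b j)^2 - t^2 + a^2 : ℝ):ℂ) + ((2*t*(x - b j) : ℝ):ℂ) * I := by
    intro t j
    push_cast
    linear_combination ((t:ℂ)^2) * Complex.I_sq
  have hWlb : ∀ (t : ℝ) (j : ℕ), t^2 ≤ y^2 → j < n →
      (49/100) * (r j)^2 ≤ Complex.normSq (((x:ℂ) + (t:ℂ)*I - ((b j : ℝ):ℂ))^2 + ((a:ℝ):ℂ)^2) := by
    intro t j ht hj
    rw [hW t j, Complex.normSq_add_mul_I]
    have h1 : t^2 ≤ (3/10) * r j := le_trans ht (hy310 j hj)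
    have h2 := hrpos j
    have h3 : ((x - b j)^2 - t^2 + a^2) = r j - t^2 := by rw [hrdef]; ring
    rw [h3]
    nlinarith [sq_nonneg (2*t*(x - b j))]
  have hDer : ∀ t : ℝ, t^2 ≤ y^2 →
      HasDerivAt (fun s : ℝ => (hFun n b a (↑x + ↑s*I)).re)
        ((I * hDeriv n b a (↑x + ↑t*I)).re) t := by
    intro t ht
    apply vertRe
    apply hFun_hasDerivAt n b ha
    intro j hj
    by_cases hxb : x = b j
    · right
      have hz : ((x:ℂ) + (t:ℂ)*I - ((b j:ℝ):ℂ)) = (t:ℂ) * I := by rw [hxb]; ring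
      rw [hz, norm_mul, Complex.norm_real, Complex.norm_I, mul_one, Real.norm_eq_abs]
      have hrj : r j = a^2 := by rw [hrdef, hxb]; ring
      have h1 := hyr j hj
      rw [hrj, Real.sqrt_sq ha.le] at h1
      have ht2 : t^2 < a^2 := by nlinarith
      nlinarith [abs_nonneg t, _root_.sq_abs t]
    · left
      have : ((x:ℂ) + (t:ℂ)*I - ((b j:ℝ):ℂ)).re = x - b j := by simp
      rw [this]
      exact sub_ne_zero_of_ne hxb
  have hDbound : ∀ t : ℝ, t^2 ≤ y^2 →
      |(I * hDeriv n b a (↑x + ↑t*I)).re| ≤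
        (∑ j ∈ range n, (1/2:ℝ)^j * (2 * |x - b j| / ((49/100) * (r j)^2))) * |t| := by
    intro t ht
    have hterm : ∀ j ∈ range n,
        |(I * (1 / ((2:ℂ)^j * (((x:ℂ) + (t:ℂ)*I - ((b j:ℝ):ℂ))^2 + ((a:ℝ):ℂ)^2)))).re|
          ≤ (1/2:ℝ)^j * (2 * |x - b j| / ((49/100) * (r j)^2)) * |t| := by
      intro j hj
      rw [Finset.mem_range] at hj
      have hL : (0:ℝ) < (49/100) * (r j)^2 := by
        have := hrpos j
        positivity
      refine (term_bound j hL (hWlb t j ht hj)).trans ?_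
      have him : (((x:ℂ) + (t:ℂ)*I - ((b j:ℝ):ℂ))^2 + ((a:ℝ):ℂ)^2).im = 2*t*(x - b j) := by
        rw [hW t j, im_RQ]
      rw [him]
      have habs : |2*t*(x - b j)| = 2 * |t| * |x - b j| := by
        rw [abs_mul, abs_mul]
        norm_num
      rw [habs]
      apply le_of_eq
      ring
    unfold hDeriv
    rw [Finset.mul_sum, Complex.re_sum, Finset.sum_mul]
    refine (Finset.abs_sum_le_sum_abs _ _).trans ?_
    exact Finset.sum_le_sum hterm
  have hMy : (∑ j ∈ range n, (1/2:ℝ)^j * (2 * |x - b j| / ((49/100) * (r j)^2))) * y^2 / 2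
      ≤ 50/49 := by
    have hper : ∀ j ∈ range n, (1/2:ℝ)^j * (2 * |x - b j| / ((49/100) * (r j)^2)) * y^2 / 2
        ≤ (25/49) * (1/2:ℝ)^j := by
      intro j hj
      rw [Finset.mem_range] at hj
      have h1 := hyr j hj
      have h2 : |x - b j| ≤ Real.sqrt (r j) := by
        have hle : (x - b j)^2 ≤ r j := by rw [hrdef]; nlinarith
        have hs := Real.sqrt_le_sqrt hle
        rwa [Real.sqrt_sq_eq_abs] at hs
      have h3 := hrpos j
      have h4 := Real.sqrt_nonneg (r j)
      have h5 : Real.sqrt (r j) * Real.sqrt (r j) = r j := Real.mul_self_sqrt h3.le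
      have h6 : (0:ℝ) < (49/100) * (r j)^2 := by positivity
      have h7 : 2 * |x - b j| / ((49/100) * (r j)^2) * y^2 / 2 ≤ 25/49 := by
        rw [div_mul_eq_mul_div, div_div, div_le_iff₀ (by positivity)]
        have hkey : |x - b j| * y^2 ≤ (r j)^2 / 4 := by
          calc |x - b j| * y^2 ≤ Real.sqrt (r j) * (r j * Real.sqrt (r j) / 4) :=
                mul_le_mul h2 h1 (sq_nonneg y) h4
            _ = (r j)^2 / 4 := by
                have he2 : Real.sqrt (r j) * (r j * Real.sqrt (r j) / 4)
                    = (Real.sqrt (r j) * Real.sqrt (r j)) * r j / 4 := by ring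
                rw [he2, h5]; ring
        nlinarith
      calc (1/2:ℝ)^j * (2 * |x - b j| / ((49/100) * (r j)^2)) * y^2 / 2
          = (2 * |x - b j| / ((49/100) * (r j)^2) * y^2 / 2) * (1/2:ℝ)^j := by ring
        _ ≤ (25/49) * (1/2:ℝ)^j := mul_le_mul_of_nonneg_right h7 (by positivity)
    calc (∑ j ∈ range n, (1/2:ℝ)^j * (2 * |x - b j| / ((49/100) * (r j)^2))) * y^2 / 2
        = ∑ j ∈ range n, (1/2:ℝ)^j * (2 * |x - b j| / ((49/100) * (r j)^2)) * y^2 / 2 := by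
          rw [Finset.sum_mul, Finset.sum_div]
      _ ≤ ∑ j ∈ range n, (25/49) * (1/2:ℝ)^j := Finset.sum_le_sum hper
      _ = (25/49) * ∑ j ∈ range n, (1/2:ℝ)^j := by rw [Finset.mul_sum]
      _ ≤ 50/49 := by
          have := sum_geometric_two_le n
          nlinarith
  set M : ℝ := ∑ j ∈ range n, (1/2:ℝ)^j * (2 * |x - b j| / ((49/100) * (r j)^2)) with hM
  rcases le_or_gt 0 y with hy0 | hy0
  · have key := abs_sub_le_of_deriv_bound (f := fun s : ℝ => (hFun n b a (↑x + ↑s*I)).re)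
      (f' := fun t => (I * hDeriv n b a (↑x + ↑t*I)).re) (Y := y) (M := M) hy0
      (fun t htI => hDer t (by rcases htI with ⟨h1, h2⟩; nlinarith))
      (fun t htI => by
        rcases htI with ⟨h1, h2⟩
        have := hDbound t (by nlinarith)
        rwa [_root_.abs_of_nonneg h1] at this)
    refine key.trans ?_
    have : M * y^2/2 = M * y^2 / 2 := by ring
    rw [this]
    exact hMy
  · have key := abs_sub_le_of_deriv_bound (f := fun s : ℝ => (hFun n b a (↑x + ↑(-s)*I)).re)
      (f' := fun t => -((I * hDeriv n b a (↑x + ↑(-t)*I)).re)) (Y := -y) (M := M)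
      (by linarith)
      (fun t htI => by
        rcases htI with ⟨h1, h2⟩
        have hd := hDer (-t) (by nlinarith)
        have hneg : HasDerivAt (fun s : ℝ => -s) (-1 : ℝ) t := (hasDerivAt_id t).neg
        have hcomp := hd.comp t hneg
        have heq : (fun s : ℝ => (hFun n b a (↑x + ↑(-s)*I)).re)
            = (fun s : ℝ => (hFun n b a (↑x + ↑s*I)).re) ∘ (fun s : ℝ => -s) := rfl
        rw [heq]
        refine HasDerivAt.congr_deriv hcomp (Eq.symm ?_)
        ring)
      (fun t htI => by
        rcases htI with ⟨h1, h2⟩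
        have := hDbound (-t) (by nlinarith)
        rw [abs_neg]
        rwa [abs_neg, _root_.abs_of_nonneg h1] at this)
    have h1 : (-y : ℝ) ^ 2 = y ^ 2 := by ring
    simp only [neg_neg, neg_zero, h1] at key
    refine key.trans ?_
    have : M * y^2/2 = M * y^2 / 2 := by ring
    rw [this]
    exact hMy


lemma I_mul_re' (w : ℂ) : (I * w).re = -w.im := by simp [Complex.mul_re]

lemma exp_negI_re (h : ℂ) : (Complex.exp (-I*h)).re = Real.exp h.im * Real.cos h.re := by
  rw [Complex.exp_re]
  have h1 : (-I*h).re = h.im := by simp [Complex.mul_re]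
  have h2 : (-I*h).im = -h.re := by simp [Complex.mul_im]
  rw [h1, h2, Real.cos_neg]

lemma exp_negI_im (h : ℂ) : (Complex.exp (-I*h)).im = -(Real.exp h.im * Real.sin h.re) := by
  rw [Complex.exp_im]
  have h1 : (-I*h).re = h.im := by simp [Complex.mul_re]
  have h2 : (-I*h).im = -h.re := by simp [Complex.mul_im]
  rw [h1, h2, Real.sin_neg]
  ring

lemma exp_I_re (h : ℂ) : (Complex.exp (I*h)).re = Real.exp (-h.im) * Real.cos h.re := by
  rw [Complex.exp_re]
  have h1 : (I*h).re = -h.im := by simp [Complex.mul_re]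
  have h2 : (I*h).im = h.re := by simp [Complex.mul_im]
  rw [h1, h2]

lemma exp_I_im (h : ℂ) : (Complex.exp (I*h)).im = Real.exp (-h.im) * Real.sin h.re := by
  rw [Complex.exp_im]
  have h1 : (I*h).re = -h.im := by simp [Complex.mul_re]
  have h2 : (I*h).im = h.re := by simp [Complex.mul_im]
  rw [h1, h2]

lemma deriv_val_1 (h : ℂ) :
    (I * ((1/2) * (Complex.exp (-I*h) - Complex.exp (I*h)))).re
      = Real.sin h.re * ((Real.exp h.im + Real.exp (-h.im))/2) := by
  rw [I_mul_re']
  have : ((1/2 : ℂ) * (Complex.exp (-I*h) - Complex.exp (I*h))).im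
      = (1/2) * ((Complex.exp (-I*h)).im - (Complex.exp (I*h)).im) := by
    rw [show (1/2 : ℂ) = ((1/2 : ℝ) : ℂ) by norm_num, Complex.im_ofReal_mul, Complex.sub_im]
  rw [this, exp_negI_im, exp_I_im]
  ring

lemma deriv_val_2 (h : ℂ) :
    (I * ((I/2) * (Complex.exp (-I*h) + Complex.exp (I*h)))).re
      = -(Real.cos h.re * ((Real.exp h.im + Real.exp (-h.im))/2)) := by
  have hh : I * ((I/2) * (Complex.exp (-I*h) + Complex.exp (I*h)))
      = ((-(1/2) : ℝ) : ℂ) * (Complex.exp (-I*h) + Complex.exp (I*h)) := by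
    push_cast
    linear_combination ((Complex.exp (-I*h) + Complex.exp (I*h))/2) * Complex.I_sq
  rw [hh, Complex.re_ofReal_mul, Complex.add_re, exp_negI_re, exp_I_re]
  ring

lemma cosh_ge_one (v : ℝ) : 1 ≤ (Real.exp v + Real.exp (-v))/2 := by
  have h1 : Real.exp v * Real.exp (-v) = 1 := by rw [← Real.exp_add]; simp
  nlinarith [sq_nonneg (Real.exp v - 1), Real.exp_pos v, Real.exp_pos (-v)]


set_option maxHeartbeats 1000000 in
/-- For every `a ∈ (0,1/2)`, the Weierstrass immersion
`F_a : Ω_a → ℝ³` (encoded via primitives `G₁, G₂, G₃` on an open set `U ⊇ Ω_a`) is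
injective on `Ω_a`; that is, `F_a` is an embedding of the domain `Ω_a`. -/
theorem stmt17 (n : ℕ) (hn : 1 ≤ n) (b : ℕ → ℝ)
    (hb0 : -(1/2) < b 0) (hbn : b (n - 1) < 1/2)
    (hbmono : ∀ j, j + 1 < n → b j < b (j + 1))
    (a : ℝ) (ha : a ∈ Set.Ioo (0 : ℝ) (1/2))
    (U : Set ℂ) (hUo : IsOpen U) (hUΩ : OmegaA n b a ⊆ U)
    (G₁ G₂ G₃ : ℂ → ℂ)
    (hG₁ : ∀ z ∈ U, HasDerivAt G₁
      ((1/2) * (Complex.exp (-Complex.I * hFun n b a z)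
        - Complex.exp (Complex.I * hFun n b a z))) z)
    (hG₂ : ∀ z ∈ U, HasDerivAt G₂
      ((Complex.I/2) * (Complex.exp (-Complex.I * hFun n b a z)
        + Complex.exp (Complex.I * hFun n b a z))) z)
    (hG₃ : ∀ z ∈ U, HasDerivAt G₃ 1 z)
    (hG₁0 : G₁ 0 = 0) (hG₂0 : G₂ 0 = 0) (hG₃0 : G₃ 0 = 0)
    (F : ℂ → EuclideanSpace ℝ (Fin 3))
    (hF : ∀ z ∈ U, F z = vec3 (G₁ z).re (G₂ z).re (G₃ z).re)
    : Set.InjOn F (OmegaA n b a) := by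

  obtain ⟨ha1, ha2⟩ := ha
  -- monotonicity of b
  have bmono : ∀ i j, i ≤ j → j < n → b i ≤ b j := by
    intro i j hij hjn
    induction j with
    | zero => simp [Nat.le_zero.mp hij]
    | succ m ih =>
      rcases Nat.eq_or_lt_of_le hij with h | h
      · rw [h]
      · have h1 : i ≤ m := Nat.lt_succ_iff.mp h
        have h2 : m < n := Nat.lt_of_succ_lt hjn
        exact (ih h1 h2).trans (hbmono m hjn).le
  have brange : ∀ j, j < n → -(1/2) < b j ∧ b j < 1/2 := by
    intro j hj
    constructor
    · exact hb0.trans_le (bmono 0 j (Nat.zero_le _) hj)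
    · exact lt_of_le_of_lt (bmono j (n-1) (by omega) (by omega)) hbn
  -- endpoints
  have hlb : ∀ j, j < n → -(1/2) ≤ leftEnd b j := by
    intro j hj
    unfold leftEnd
    by_cases h0 : j = 0
    · simp [h0]
    · rw [if_neg h0]
      have h1 := (brange (j-1) (by omega)).1
      have h2 := (brange j hj).1
      linarith
  have hrb : ∀ j, j < n → rightEnd n b j ≤ 1/2 := by
    intro j hj
    unfold rightEnd
    by_cases h0 : j = n - 1
    · simp [h0]
    · rw [if_neg h0]
      have h1 := (brange j hj).2
      have h2 := (brange (j+1) (by omega)).2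
      linarith
  -- membership unfolding
  have hmemA : ∀ z, z ∈ OmegaA n b a → ∃ k, k < n ∧ z ∈ OmegaJ n b a k := by
    intro z hz
    rw [OmegaA] at hz
    simp only [Set.mem_iUnion, Finset.mem_range] at hz
    obtain ⟨k, hk, hzk⟩ := hz
    exact ⟨k, hk, hzk⟩
  have hmemA' : ∀ k, k < n → ∀ z, z ∈ OmegaJ n b a k → z ∈ OmegaA n b a := by
    intro k hk z hz
    rw [OmegaA]
    simp only [Set.mem_iUnion, Finset.mem_range]
    exact ⟨k, hk, hz⟩
  -- cell property
  have hcellP : ∀ k, k < n → ∀ x : ℝ, leftEnd b k ≤ x → x ≤ rightEnd n b k →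
      ∀ j, j < n → (x - b k)^2 ≤ (x - b j)^2 := by
    intro k hk x hxl hxr j hj
    rcases lt_trichotomy j k with h | h | h
    · have hk0 : k ≠ 0 := by omega
      rw [leftEnd, if_neg hk0] at hxl
      have h1 : b j ≤ b (k-1) := bmono j (k-1) (by omega) (by omega)
      have h2 : b j ≤ b k := bmono j k h.le hk
      nlinarith
    · rw [h]
    · have hk1 : k ≠ n - 1 := by omega
      rw [rightEnd, if_neg hk1] at hxr
      have h1 : b (k+1) ≤ b j := bmono (k+1) j (by omega) hj
      have h2 : b k ≤ b j := bmono k j h.le hj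
      nlinarith
  -- |x - b j| ≤ 1 for points in cells
  have hbxP : ∀ k, k < n → ∀ x : ℝ, leftEnd b k ≤ x → x ≤ rightEnd n b k →
      ∀ j, j < n → |x - b j| ≤ 1 := by
    intro k hk x hxl hxr j hj
    have h1 := hlb k hk
    have h2 := hrb k hk
    have h3 := brange j hj
    rw [abs_le]
    constructor <;> linarith
  -- the rpow bound to sqrt form
  have hsq34 : ∀ R : ℝ, 0 < R → (R ^ ((3:ℝ)/4))^2 = R * Real.sqrt R := by
    intro R hR
    rw [← Real.rpow_natCast (R ^ ((3:ℝ)/4)) 2, ← Real.rpow_mul hR.le]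
    norm_num
    rw [show (3:ℝ)/2 = 1 + 1/2 by norm_num, Real.rpow_add hR, Real.rpow_one,
      Real.sqrt_eq_rpow]
  have hsqy : ∀ k, k < n → ∀ x t : ℝ, |t| ≤ ((x - b k)^2 + a^2) ^ ((3:ℝ)/4) / 2 →
      t^2 ≤ ((x - b k)^2 + a^2) * Real.sqrt ((x - b k)^2 + a^2) / 4 := by
    intro k hk x t ht
    have hR : (0:ℝ) < (x - b k)^2 + a^2 := by positivity
    have h1 : t^2 ≤ (((x - b k)^2 + a^2) ^ ((3:ℝ)/4) / 2)^2 := by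
      rw [← _root_.sq_abs t]
      apply pow_le_pow_left₀ (abs_nonneg t) ht
    rw [div_pow, hsq34 _ hR] at h1
    linarith
  -- fiber membership
  have hre : ∀ (x t : ℝ), ((x:ℂ) + (t:ℂ)*I).re = x := fun x t => by simp
  have him : ∀ (x t : ℝ), ((x:ℂ) + (t:ℂ)*I).im = t := fun x t => by simp
  have hfiber : ∀ k, k < n → ∀ x y t : ℝ, (↑x + ↑y*I) ∈ OmegaJ n b a k →
      |t| ≤ |y| → (↑x + ↑t*I) ∈ OmegaJ n b a k := by
    intro k hk x y t hmem htt
    rw [OmegaJ, Set.mem_setOf_eq, hre, him] at hmem ⊢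
    exact ⟨hmem.1, hmem.2.1, htt.trans hmem.2.2⟩
  -- Step A: `G₃ - id` is constant on `Ω`
  have hidvert : ∀ x t : ℝ, HasDerivAt (fun s : ℝ => ((x:ℂ) + (s:ℂ)*I)) I t := by
    intro x t
    simpa using ((Complex.ofRealCLM.hasDerivAt (x := t)).mul_const I).const_add (x:ℂ)
  have hidhor : ∀ t : ℝ, HasDerivAt (fun s : ℝ => ((s:ℝ):ℂ)) 1 t := by
    intro t
    exact Complex.ofRealCLM.hasDerivAt (x := t)
  have vconst : ∀ k, k < n → ∀ z, z ∈ OmegaJ n b a k →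
      G₃ z - z = G₃ (↑z.re) - ↑z.re := by
    intro k hk z hz
    have hz' : ((z.re : ℂ) + (z.im : ℂ)*I) ∈ OmegaJ n b a k := by
      rw [Complex.re_add_im]; exact hz
    have hder : ∀ t : ℝ, |t| ≤ |z.im| →
        HasDerivAt (fun s : ℝ => G₃ ((z.re:ℂ) + (s:ℂ)*I) - ((z.re:ℂ) + (s:ℂ)*I)) 0 t := by
      intro t ht
      have hmem := hfiber k hk z.re z.im t hz' ht
      have hU' : ((z.re:ℂ) + (t:ℂ)*I) ∈ U := hUΩ (hmemA' k hk _ hmem)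
      have h1 := vertC z.re t (hG₃ _ hU')
      have h2 := hidvert z.re t
      have := h1.sub h2; simp at this; exact this
    have h0eq : ((z.re:ℂ) + ((0:ℝ):ℂ)*I) = (z.re:ℂ) := by simp
    rcases le_or_gt 0 z.im with h0 | h0
    · have := const_of_deriv0 (p := 0) (q := z.im) h0 (fun t ht => hder t (by
        rw [_root_.abs_of_nonneg ht.1, _root_.abs_of_nonneg h0]; exact ht.2))
      rw [Complex.re_add_im, h0eq] at this
      exact this
    · have := const_of_deriv0 (p := z.im) (q := 0) h0.le (fun t ht => hder t (by
        rw [abs_of_nonpos ht.2, abs_of_neg h0]; linarith [ht.1]))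
      rw [Complex.re_add_im, h0eq] at this
      exact this.symm
  have hmemReal : ∀ k, k < n → ∀ s : ℝ, leftEnd b k ≤ s → s ≤ rightEnd n b k →
      ((s:ℝ):ℂ) ∈ OmegaJ n b a k := by
    intro k hk s h1 h2
    rw [OmegaJ, Set.mem_setOf_eq]
    simp only [Complex.ofReal_re, Complex.ofReal_im, abs_zero]
    exact ⟨h1, h2, by positivity⟩
  have hconst : ∀ k, k < n → ∀ s1 s2 : ℝ, leftEnd b k ≤ s1 → s1 ≤ s2 →
      s2 ≤ rightEnd n b k → G₃ ↑s2 - ↑s2 = G₃ ↑s1 - ↑s1 := by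
    intro k hk s1 s2 h1 h12 h2
    have := const_of_deriv0 (p := s1) (q := s2)
      (f := fun s : ℝ => G₃ ((s:ℝ):ℂ) - ((s:ℝ):ℂ)) h12 (fun t ht => by
        have htm : ((t:ℝ):ℂ) ∈ U := hUΩ (hmemA' k hk _
          (hmemReal k hk t (h1.trans ht.1) (ht.2.trans h2)))
        have hh := horC t (hG₃ _ htm)
        have := hh.sub (hidhor t); simp at this; exact this)
    exact this
  have lr : ∀ j, j < n → leftEnd b j ≤ rightEnd n b j := by
    intro j hj
    by_cases h0 : j = 0 <;> by_cases h1 : j = n - 1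
    · rw [leftEnd, if_pos h0, rightEnd, if_pos h1]; norm_num
    · rw [leftEnd, if_pos h0, rightEnd, if_neg h1]
      have := (brange j hj).1
      have := (brange (j+1) (by omega)).1
      linarith
    · rw [leftEnd, if_neg h0, rightEnd, if_pos h1]
      have := (brange (j-1) (by omega)).2
      have := (brange j hj).2
      linarith
    · rw [leftEnd, if_neg h0, rightEnd, if_neg h1]
      have := bmono (j-1) (j+1) (by omega) (by omega)
      linarith
  have hrl : ∀ j, j + 1 < n → rightEnd n b j = leftEnd b (j+1) := by
    intro j hj
    rw [rightEnd, if_neg (by omega), leftEnd, if_neg (by omega)]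
    simp
  have chain : ∀ j, j < n →
      G₃ ↑(leftEnd b j) - ↑(leftEnd b j) = G₃ ↑(leftEnd b 0) - ↑(leftEnd b 0) := by
    intro j
    induction j with
    | zero => intro _; rfl
    | succ m ih =>
      intro hj
      have hm : m < n := by omega
      have e1 : G₃ ↑(rightEnd n b m) - ↑(rightEnd n b m)
          = G₃ ↑(leftEnd b m) - ↑(leftEnd b m) :=
        hconst m hm _ _ le_rfl (lr m hm) le_rfl
      rw [← hrl m hj]
      exact e1.trans (ih hm)
  have gconst : ∀ z ∈ OmegaA n b a,
      G₃ z - z = G₃ ↑(leftEnd b 0) - ↑(leftEnd b 0) := by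
    intro z hz
    obtain ⟨k, hk, hzk⟩ := hmemA z hz
    have h1 := vconst k hk z hzk
    have h2 : G₃ ↑z.re - ↑z.re = G₃ ↑(leftEnd b k) - ↑(leftEnd b k) :=
      hconst k hk (leftEnd b k) z.re le_rfl hzk.1 hzk.2.1
    exact h1.trans (h2.trans (chain k hk))
  -- Step B: strict monotonicity along vertical fibers
  have main : ∀ k, k < n → ∀ p q : ℂ, p ∈ OmegaJ n b a k → q ∈ OmegaJ n b a k →
      p.re = q.re → (G₁ p).re = (G₁ q).re → (G₂ p).re = (G₂ q).re → p.im ≤ q.im →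
      p = q := by
    intro k hk p q hp hq hre12 hG1e hG2e him12
    by_cases heqim : p.im = q.im
    · exact Complex.ext hre12 heqim
    have hlt : p.im < q.im := lt_of_le_of_ne him12 heqim
    have hmemt : ∀ t ∈ Set.Icc p.im q.im, ((p.re:ℂ) + (t:ℂ)*I) ∈ OmegaJ n b a k := by
      intro t ht
      have hp' : ((p.re:ℂ) + (p.im:ℂ)*I) ∈ OmegaJ n b a k := by
        rw [Complex.re_add_im]; exact hp
      have hq' : ((p.re:ℂ) + (q.im:ℂ)*I) ∈ OmegaJ n b a k := by
        rw [hre12, Complex.re_add_im]; exact hq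
      rcases le_or_gt 0 t with h | h
      · refine hfiber k hk p.re q.im t hq' ?_
        rw [_root_.abs_of_nonneg h]
        exact ht.2.trans (le_abs_self _)
      · refine hfiber k hk p.re p.im t hp' ?_
        rw [abs_of_neg h]
        have := ht.1
        have := neg_le_abs p.im
        linarith
    have hbound : ∀ t ∈ Set.Icc p.im q.im,
        |(hFun n b a ((p.re:ℂ) + (t:ℂ)*I)).re
          - (hFun n b a ((p.re:ℂ) + ((0:ℝ):ℂ)*I)).re| ≤ 50/49 := by
      intro t ht
      have hmem' := hmemt t ht
      rw [OmegaJ, Set.mem_setOf_eq, hre, him] at hmem'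
      exact osc n b ha1 ha2 (hbxP k hk p.re hp.1 hp.2.1) hk
        (hcellP k hk p.re hp.1 hp.2.1) (hsqy k hk p.re t hmem'.2.2)
    set u₀ : ℝ := (hFun n b a ((p.re:ℂ) + ((0:ℝ):ℂ)*I)).re with hu₀
    have hder : ∀ t ∈ Set.Icc p.im q.im,
        HasDerivAt (fun s : ℝ => Real.sin u₀ * (G₁ ((p.re:ℂ) + (s:ℂ)*I)).re
            - Real.cos u₀ * (G₂ ((p.re:ℂ) + (s:ℂ)*I)).re)
          (Real.sin u₀ * (I * ((1/2) * (Complex.exp (-I * hFun n b a ((p.re:ℂ) + (t:ℂ)*I))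
              - Complex.exp (I * hFun n b a ((p.re:ℂ) + (t:ℂ)*I))))).re
            - Real.cos u₀ * (I * ((I/2) * (Complex.exp (-I * hFun n b a ((p.re:ℂ) + (t:ℂ)*I))
              + Complex.exp (I * hFun n b a ((p.re:ℂ) + (t:ℂ)*I))))).re) t := by
      intro t ht
      have hζU : ((p.re:ℂ) + (t:ℂ)*I) ∈ U := hUΩ (hmemA' k hk _ (hmemt t ht))
      exact ((vertRe p.re t (hG₁ _ hζU)).const_mul _).sub
        ((vertRe p.re t (hG₂ _ hζU)).const_mul _)
    have hpos : ∀ t ∈ Set.Icc p.im q.im,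
        0 < Real.sin u₀ * (I * ((1/2) * (Complex.exp (-I * hFun n b a ((p.re:ℂ) + (t:ℂ)*I))
              - Complex.exp (I * hFun n b a ((p.re:ℂ) + (t:ℂ)*I))))).re
            - Real.cos u₀ * (I * ((I/2) * (Complex.exp (-I * hFun n b a ((p.re:ℂ) + (t:ℂ)*I))
              + Complex.exp (I * hFun n b a ((p.re:ℂ) + (t:ℂ)*I))))).re := by
      intro t ht
      rw [deriv_val_1, deriv_val_2]
      have hcos : 0 < Real.cos ((hFun n b a ((p.re:ℂ) + (t:ℂ)*I)).re - u₀) := by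
        apply Real.cos_pos_of_mem_Ioo
        have hb50 := hbound t ht
        have hpi := Real.pi_gt_three
        rw [abs_le] at hb50
        rw [Set.mem_Ioo]
        constructor
        · linarith [hb50.1]
        · linarith [hb50.2]
      rw [Real.cos_sub] at hcos
      have hE := cosh_ge_one ((hFun n b a ((p.re:ℂ) + (t:ℂ)*I)).im)
      set u : ℝ := (hFun n b a ((p.re:ℂ) + (t:ℂ)*I)).re
      set E : ℝ := (Real.exp ((hFun n b a ((p.re:ℂ) + (t:ℂ)*I)).im)
        + Real.exp (-(hFun n b a ((p.re:ℂ) + (t:ℂ)*I)).im))/2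
      have : Real.sin u₀ * (Real.sin u * E) - Real.cos u₀ * (-(Real.cos u * E))
          = (Real.cos u * Real.cos u₀ + Real.sin u * Real.sin u₀) * E := by ring
      rw [this]
      exact mul_pos hcos (by linarith)
    have hmono : StrictMonoOn (fun s : ℝ => Real.sin u₀ * (G₁ ((p.re:ℂ) + (s:ℂ)*I)).re
        - Real.cos u₀ * (G₂ ((p.re:ℂ) + (s:ℂ)*I)).re) (Set.Icc p.im q.im) := by
      apply strictMonoOn_of_deriv_pos (convex_Icc _ _)
      · exact fun t ht => ((hder t ht).continuousAt).continuousWithinAt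
      · intro t ht
        rw [interior_Icc] at ht
        have ht' : t ∈ Set.Icc p.im q.im := Set.mem_Icc_of_Ioo ht
        rw [(hder t ht').deriv]
        exact hpos t ht'
    have hval : (fun s : ℝ => Real.sin u₀ * (G₁ ((p.re:ℂ) + (s:ℂ)*I)).re
        - Real.cos u₀ * (G₂ ((p.re:ℂ) + (s:ℂ)*I)).re) p.im
        = (fun s : ℝ => Real.sin u₀ * (G₁ ((p.re:ℂ) + (s:ℂ)*I)).re
        - Real.cos u₀ * (G₂ ((p.re:ℂ) + (s:ℂ)*I)).re) q.im := by
      simp only []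
      rw [Complex.re_add_im]
      rw [show ((p.re:ℂ) + (q.im:ℂ)*I) = q by rw [hre12, Complex.re_add_im]]
      rw [hG1e, hG2e]
    have := hmono (Set.left_mem_Icc.mpr him12) (Set.right_mem_Icc.mpr him12) hlt
    rw [hval] at this
    exact absurd this (lt_irrefl _)
  -- assemble
  intro z hz w hw hFeq
  have hUz := hUΩ hz
  have hUw := hUΩ hw
  have hvec : vec3 (G₁ z).re (G₂ z).re (G₃ z).re
      = vec3 (G₁ w).re (G₂ w).re (G₃ w).re := by
    rw [← hF z hUz, ← hF w hUw]; exact hFeq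
  have hfun3 : (![(G₁ z).re, (G₂ z).re, (G₃ z).re] : Fin 3 → ℝ)
      = ![(G₁ w).re, (G₂ w).re, (G₃ w).re] := congrArg WithLp.ofLp hvec
  have hc1 : (G₁ z).re = (G₁ w).re := by
    have := congrFun hfun3 0
    simpa using this
  have hc2 : (G₂ z).re = (G₂ w).re := by
    have := congrFun hfun3 1
    simpa using this
  have hc3 : (G₃ z).re = (G₃ w).re := by
    have := congrFun hfun3 2
    simpa using this
  have hxw : z.re = w.re := by
    have h4 := (gconst z hz).trans (gconst w hw).symm
    have h5 := congrArg Complex.re h4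
    simp only [Complex.sub_re] at h5
    linarith
  obtain ⟨k, hk, hzk⟩ := hmemA z hz
  obtain ⟨k', hk', hwk'⟩ := hmemA w hw
  have hsq_eq : (z.re - b k)^2 = (z.re - b k')^2 := by
    apply le_antisymm
    · exact hcellP k hk z.re hzk.1 hzk.2.1 k' hk'
    · have := hcellP k' hk' w.re hwk'.1 hwk'.2.1 k hk
      rwa [← hxw] at this
  have hwk : w ∈ OmegaJ n b a k := by
    refine ⟨?_, ?_, ?_⟩
    · rw [← hxw]; exact hzk.1
    · rw [← hxw]; exact hzk.2.1
    · have h6 := hwk'.2.2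
      have h7 : (w.re - b k')^2 = (w.re - b k)^2 := by
        rw [← hxw]; exact hsq_eq.symm
      rwa [h7] at h6
  rcases le_total z.im w.im with h | h
  · exact main k hk z w hzk hwk hxw hc1 hc2 h
  · exact (main k hk w z hwk hzk hxw.symm hc1.symm hc2.symm h).symm
end
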